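/- arXiv:2512.20598 — 8 statements merged into one kernel-verified Lean document; each statement's English description precedes it below -/
import Mathlib

section
/- Let Σ = {s_0 < s_1 < ... < s_{σ-1}} be an ordered alphabet of size σ ≥ 1 and let K = s_{σ-1}^{k_{σ-1}} s_{σ-2}^{k_{σ-2}} ... s_1^{k_1} s_0^{k_0} be a clustered string, where every exponent satisfies k_i ≥ 2. Then the Burrows–Wheeler transform of the terminated string K$ has exactly σ + 1 runs. -/
/-- The Burrows–Wheeler transform of `w`: last characters of all cyclic
rotations of `w`, listed in lexicographic order of the rotations. -/
def bwtL {α : Type*} [LinearOrder α] (w : List α) : List α :=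
  (List.insertionSort (· ≤ ·)
    ((List.range w.length).map (fun i => w.rotate i))).filterMap List.getLast?

/-- Number of runs (maximal equal-letter substrings) of a string. -/
def runsCount {α : Type*} [DecidableEq α] (l : List α) : ℕ :=
  (l.destutter (· ≠ ·)).length

/-- Terminate a string with the sentinel `⊥ = $`, smaller than every symbol. -/
def term {α : Type*} (w : List α) : List (WithBot α) :=
  w.map (fun a => (a : WithBot α)) ++ [⊥]

/-- `y` is a right-extension of `v`: `y = x ++ [a]` occurs in `v` where `x`
is right-maximal (some `x ++ [b]` with `b ≠ a` also occurs in `v`). -/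
def RightExt {α : Type*} (v y : List α) : Prop :=
  ∃ x a b, y = x ++ [a] ∧ a ≠ b ∧ (x ++ [a]) <:+: v ∧ (x ++ [b]) <:+: v

/-- `y` is a super-maximal extension of `v`: a right-extension that is not a
proper suffix of any other right-extension. -/
def SuperMax {α : Type*} (v y : List α) : Prop :=
  RightExt v y ∧ ∀ z, RightExt v z → y <:+ z → z = y

/-- Number of super-maximal extensions of `v`. -/
noncomputable def sre {α : Type*} (v : List α) : ℕ :=
  Set.ncard {y | SuperMax v y}

/-- χ(w): the size of a smallest suffixient set of `w$`, which equals the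
number of super-maximal extensions of `w$`. -/
noncomputable def chi {α : Type*} (w : List α) : ℕ :=
  sre (term w)

/-- The clustered string `s_{σ-1}^{k_{σ-1}} ⋯ s_1^{k_1} s_0^{k_0}`. -/
def clustered {α : Type*} {σ : ℕ} (s : Fin σ → α) (k : Fin σ → ℕ) : List α :=
  (List.finRange σ).reverse.flatMap (fun j => List.replicate (k j) (s j))

/-- Auxiliary: pointwise `≤` before index `m` and strict `<` at index `m`
gives lexicographic `<`. -/
lemma lex_helper {β : Type*} [LinearOrder β] :
    ∀ (m : ℕ) (la lb : List β),
      (∀ i, i < m → ∀ x y, la[i]? = some x → lb[i]? = some y → x ≤ y) →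
      (∀ x y, la[m]? = some x → lb[m]? = some y → x < y) →
      m < la.length → m < lb.length → List.Lex (· < ·) la lb := by
  intro m
  induction m with
  | zero =>
    rintro (_ | ⟨x, la⟩) (_ | ⟨y, lb⟩) h1 h2 ha hb
    · simp at ha
    · simp at ha
    · simp at hb
    · exact List.Lex.rel (h2 x y (by simp) (by simp))
  | succ m ih =>
    rintro (_ | ⟨x, la⟩) (_ | ⟨y, lb⟩) h1 h2 ha hb
    · simp at ha
    · simp at ha
    · simp at hb
    · have hxy : x ≤ y := h1 0 (Nat.succ_pos m) x y (by simp) (by simp)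
      rcases lt_or_eq_of_le hxy with h | h
      · exact List.Lex.rel h
      · subst h
        refine List.Lex.cons (ih la lb ?_ ?_ ?_ ?_)
        · intro i hi u v hu hv
          exact h1 (i+1) (by omega) u v (by simpa using hu) (by simpa using hv)
        · intro u v hu hv
          exact h2 u v (by simpa using hu) (by simpa using hv)
        · simpa using Nat.lt_of_succ_lt_succ (by simpa using ha)
        · simpa using Nat.lt_of_succ_lt_succ (by simpa using hb)

lemma filterMap_eq_map_of {ι β : Type*} (g : ι → Option β) (h : ι → β) :
    ∀ (l : List ι), (∀ x ∈ l, g x = some (h x)) → l.filterMap g = l.map h := by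
  intro l
  induction l with
  | nil => simp
  | cons x t ih =>
    intro H
    rw [List.filterMap_cons, H x (by simp), List.map_cons,
      ih (fun y hy => H y (by simp [hy]))]

lemma map_getD_range {β : Type*} (b : β) :
    ∀ (u : List β), (List.range u.length).map (fun q => u.getD q b) = u := by
  intro u
  induction u with
  | nil => simp
  | cons x t ih =>
    rw [List.length_cons, List.range_succ_eq_map, List.map_cons, List.map_map]
    simp only [Function.comp_def, List.getD_cons_zero, Nat.succ_eq_add_one,
      List.getD_cons_succ]
    rw [ih]

/-- Main BWT computation: for a nonincreasing string `u` followed by a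
strictly smaller sentinel `b`, the BWT is `u.reverse ++ [b]`. -/
lemma bwt_nonincreasing {β : Type*} [LinearOrder β] (u : List β) (b : β)
    (hb : ∀ a ∈ u, b < a) (hch : List.Chain' (· ≥ ·) u) :
    bwtL (u ++ [b]) = u.reverse ++ [b] := by
  set v : List β := u ++ [b] with hv
  set n : ℕ := u.length with hn
  have hvlen : v.length = n + 1 := by simp [hv, hn]
  have hpw : ∀ i j : ℕ, i ≤ j → j < n → ∀ x y,
      u[i]? = some x → u[j]? = some y → y ≤ x := by
    intro i j hij hj x y hx hy
    have hP : List.Pairwise (· ≥ ·) u := List.isChain_iff_pairwise.mp hch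
    rcases eq_or_lt_of_le hij with h | h
    · subst h
      have := hx.symm.trans hy
      obtain rfl := Option.some_injective _ this
      exact le_rfl
    · have hR := List.pairwise_iff_get.mp hP ⟨i, by omega⟩ ⟨j, hj⟩ h
      have hx' : u[i]? = some (u.get ⟨i, by omega⟩) := by
        simp [List.getElem?_eq_getElem]
      have hy' : u[j]? = some (u.get ⟨j, hj⟩) := by
        simp [List.getElem?_eq_getElem]
      rw [hx] at hx'; rw [hy] at hy'
      obtain rfl := Option.some_injective _ hx'
      obtain rfl := Option.some_injective _ hy'
      exact hR
  -- key strict inequality between adjacent rotations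
  have key : ∀ p, p < n → v.rotate (p+1) < v.rotate p := by
    intro p hp
    obtain ⟨m, hm⟩ : ∃ m, p + 1 + m = n := ⟨n - p - 1, by omega⟩
    have hrot1 : v.rotate (p+1) = v.drop (p+1) ++ v.take (p+1) :=
      List.rotate_eq_drop_append_take (by omega)
    have hrot0 : v.rotate p = v.drop p ++ v.take p :=
      List.rotate_eq_drop_append_take (by omega)
    have hga : ∀ i, i ≤ m → (v.rotate (p+1))[i]? = v[p+1+i]? := by
      intro i hi
      rw [hrot1, List.getElem?_append_left (by rw [List.length_drop]; omega),
        List.getElem?_drop]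
    have hgc : ∀ i, i ≤ m → (v.rotate p)[i]? = v[p+i]? := by
      intro i hi
      rw [hrot0, List.getElem?_append_left (by rw [List.length_drop]; omega),
        List.getElem?_drop]
    have hvu : ∀ j, j < n → v[j]? = u[j]? := by
      intro j hj
      rw [hv]
      exact List.getElem?_append_left (by omega)
    refine lex_helper m _ _ ?_ ?_ ?_ ?_
    · intro i hi x y hx hy
      rw [hga i (by omega), hvu _ (by omega)] at hx
      rw [hgc i (by omega), hvu _ (by omega)] at hy
      exact hpw (p+i) (p+1+i) (by omega) (by omega) y x hy hx
    · intro x y hx hy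
      rw [hga m le_rfl] at hx
      rw [hgc m le_rfl] at hy
      have hxb : v[p+1+m]? = some b := by
        rw [hv, List.getElem?_append_right (by omega)]
        have h0 : p + 1 + m - u.length = 0 := by omega
        rw [h0]; rfl
      rw [hxb] at hx
      obtain rfl := Option.some_injective _ hx
      have hyu : v[p+m]? = u[p+m]? := hvu _ (by omega)
      rw [hyu] at hy
      have hylt : p + m < u.length := by omega
      rw [List.getElem?_eq_getElem hylt] at hy
      obtain rfl := Option.some_injective _ hy
      exact hb _ (List.getElem_mem hylt)
    · rw [List.length_rotate, hvlen]; omega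
    · rw [List.length_rotate, hvlen]; omega
  -- the sorted list of rotations
  set S := (((List.range (n+1)).reverse).map (fun i => v.rotate i) : List (List β))
    with hS
  have hSperm : List.Perm S ((List.range v.length).map (fun i => v.rotate i)) := by
    rw [hvlen]; exact (List.reverse_perm _).map _
  have hSsorted : List.Pairwise (· ≤ ·) S := by
    have hchain : List.Chain' (· ≤ ·) S := by
      rw [hS, List.Chain', List.isChain_map, List.isChain_reverse]
      have hfl : (flip fun a b => v.rotate a ≤ v.rotate b) =
          fun a b => v.rotate b ≤ v.rotate a := rfl
      rw [List.isChain_range_succ]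
      intro m hm
      exact le_of_lt (key m hm)
    exact List.isChain_iff_pairwise.mp hchain
  have hsort_eq : List.insertionSort (· ≤ ·)
      ((List.range v.length).map (fun i => v.rotate i)) = S := by
    refine List.Perm.eq_of_pairwise' (List.pairwise_insertionSort _ _) hSsorted ?_
    exact (List.perm_insertionSort _ _).trans hSperm.symm
  -- compute the last characters
  have hlast : ∀ p, p ≤ n → (v.rotate p).getLast? =
      some (if p = 0 then b else u.getD (p-1) b) := by
    intro p hp
    cases p with
    | zero => simp [hv]
    | succ q =>
      have hq : q < n := by omega
      have hrot : v.rotate (q+1) = v.drop (q+1) ++ v.take (q+1) :=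
        List.rotate_eq_drop_append_take (by omega)
      rw [hrot, List.getLast?_append]
      have htake : v.take (q+1) = u.take (q+1) := by
        rw [hv, List.take_append_of_le_length (by omega)]
      have hlen : (v.take (q+1)).length = q + 1 := by
        rw [List.length_take]; omega
      have hlst : (v.take (q+1)).getLast? = some (u.getD q b) := by
        rw [List.getLast?_eq_getElem?, hlen]
        simp only [Nat.add_sub_cancel]
        rw [htake, List.getElem?_take, if_pos (Nat.lt_succ_self q),
          List.getElem?_eq_getElem hq, List.getD_eq_getElem u b hq]
      rw [hlst]
      simp
  have hfinal : S.filterMap List.getLast? = u.reverse ++ [b] := by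
    rw [hS, List.filterMap_map]
    rw [List.filterMap_reverse]
    have hfm : (List.range (n+1)).filterMap
        (List.getLast? ∘ fun i => v.rotate i) = b :: u := by
      rw [filterMap_eq_map_of _ (fun p => if p = 0 then b else u.getD (p-1) b)]
      · rw [List.range_succ_eq_map, List.map_cons, List.map_map]
        simp only [if_pos rfl]
        congr 1
        have hcomp : ((fun p => if p = 0 then b else u.getD (p-1) b) ∘ Nat.succ) =
            fun q => u.getD q b := by
          funext q; simp
        rw [hcomp]
        have := map_getD_range b u
        rw [← hn] at this
        exact this
      · intro p hp
        exact hlast p (Nat.lt_succ_iff.mp (List.mem_range.mp hp))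
    rw [hfm]
    simp
  rw [bwtL, hsort_eq, hfinal]

/-- destutter with `≠` kills repeated letters at the front. -/
lemma destutter_ne_replicate {β : Type*} [DecidableEq β] (a : β) :
    ∀ (m : ℕ) (l : List β),
      (List.replicate (m+1) a ++ l).destutter (· ≠ ·) =
        (a :: l).destutter (· ≠ ·) := by
  intro m
  induction m with
  | zero => intro l; simp [List.replicate]
  | succ m ih =>
    intro l
    have h1 : List.replicate (m+1+1) a ++ l = a :: (List.replicate (m+1) a ++ l) := by
      rw [List.replicate_succ]; simp
    have h2 : List.replicate (m+1) a ++ l = a :: (List.replicate m a ++ l) := by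
      rw [List.replicate_succ]; simp
    rw [h1, h2, List.destutter_cons_cons, if_neg (by simp), ← List.destutter_cons',
      ← h2, ih]

lemma runsCount_cons_of_ne {β : Type*} [DecidableEq β] (a x : β) (t : List β)
    (h : a ≠ x) : runsCount (a :: x :: t) = runsCount (x :: t) + 1 := by
  rw [runsCount, List.destutter_cons_cons, if_pos h, ← List.destutter_cons']
  rw [List.length_cons, runsCount]

/-- Runs of a concatenation of nonempty constant blocks with pairwise
distinct adjacent symbols, followed by a sentinel. -/
lemma runs_blocks {ι β : Type*} [DecidableEq β] (bchar : β) (g : ι → β)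
    (cnt : ι → ℕ) :
    ∀ (js : List ι), (∀ j ∈ js, 1 ≤ cnt j) →
      List.Chain' (fun i j => g i ≠ g j) js →
      (∀ j ∈ js, g j ≠ bchar) →
      runsCount (js.flatMap (fun j => List.replicate (cnt j) (g j)) ++ [bchar]) =
        js.length + 1 := by
  intro js
  induction js with
  | nil => intro _ _ _; simp [runsCount]
  | cons j rest ih =>
    intro h1 h2 h3
    obtain ⟨m, hm⟩ : ∃ m, cnt j = m + 1 := by
      have := h1 j (by simp); exact ⟨cnt j - 1, by omega⟩
    rw [List.flatMap_cons, List.append_assoc, hm]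
    set L' : List β := rest.flatMap (fun j => List.replicate (cnt j) (g j)) ++ [bchar]
      with hL'
    rw [runsCount, destutter_ne_replicate]
    obtain ⟨x, t, hxt, hne⟩ : ∃ x t, L' = x :: t ∧ g j ≠ x := by
      cases rest with
      | nil =>
        exact ⟨bchar, [], by simp [hL'], h3 j (by simp)⟩
      | cons r rest2 =>
        obtain ⟨m', hm'⟩ : ∃ m', cnt r = m' + 1 := by
          have := h1 r (by simp); exact ⟨cnt r - 1, by omega⟩
        refine ⟨g r, List.replicate m' (g r) ++
          (rest2.flatMap (fun j => List.replicate (cnt j) (g j)) ++ [bchar]), ?_, ?_⟩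
        · rw [hL', List.flatMap_cons, hm', List.replicate_succ]; simp
        · exact (List.isChain_cons_cons.mp h2).1
    have hrest : runsCount L' = rest.length + 1 :=
      ih (fun y hy => h1 y (by simp [hy]))
        (List.IsChain.tail h2) (fun y hy => h3 y (by simp [hy]))
    have hstep : runsCount (g j :: L') = runsCount L' + 1 := by
      rw [hxt]
      exact runsCount_cons_of_ne _ _ _ hne
    rw [← runsCount, hstep, hrest, List.length_cons]

/-- Chain of nonincreasing blocks gives a nonincreasing flatMap. -/
lemma chain'_flatMap_replicate {ι β : Type*} [Preorder β] (g : ι → β)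
    (cnt : ι → ℕ) :
    ∀ (js : List ι), List.Pairwise (fun i j => g j ≤ g i) js →
      List.Chain' (· ≥ ·) (js.flatMap (fun j => List.replicate (cnt j) (g j))) := by
  intro js
  induction js with
  | nil => simp [List.Chain']
  | cons j rest ih =>
    intro h
    rw [List.flatMap_cons, List.Chain', List.isChain_append]
    obtain ⟨hhead, htail⟩ := List.pairwise_cons.mp h
    refine ⟨?_, ih htail, ?_⟩
    · exact List.Pairwise.isChain (R := (· ≥ ·)) (List.pairwise_replicate.mpr (Or.inr (le_refl (g j))))
    · intro x hx y hy
      have hx' : x = g j := by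
        rw [List.getLast?_replicate] at hx
        by_cases h0 : cnt j = 0
        · simp [h0] at hx
        · simp [h0] at hx
          exact hx.symm
      have hy' : ∃ r ∈ rest, y = g r := by
        have hmem : y ∈ rest.flatMap (fun j => List.replicate (cnt j) (g j)) :=
          List.mem_of_mem_head? hy
        obtain ⟨r, hr, hyr⟩ := List.mem_flatMap.mp hmem
        exact ⟨r, hr, List.eq_of_mem_replicate hyr⟩
      obtain ⟨r, hr, rfl⟩ := hy'
      rw [hx']
      exact hhead r hr

/-- the BWT of the terminated clustered string has exactly
σ + 1 runs. -/
theorem clustered_bwt_runs {α : Type*} [LinearOrder α] (σ : ℕ) (hσ : 1 ≤ σ)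
    (s : Fin σ → α) (hs : StrictMono s)
    (k : Fin σ → ℕ) (hk : ∀ j, 2 ≤ k j) :
    runsCount (bwtL (term (clustered s k))) = σ + 1 := by
  set w : List α := clustered s k with hw
  set u : List (WithBot α) := w.map (fun a : α => (a : WithBot α)) with hu
  have hterm : term w = u ++ [(⊥ : WithBot α)] := by rw [hu, term]; congr 1; simp [bind_pure_comp]; induction w with | nil => rfl | cons a t ih => simp [ih]
  set g : Fin σ → WithBot α := fun j => (s j : WithBot α) with hg
  have huflat : u = ((List.finRange σ).reverse).flatMap
      (fun j => List.replicate (k j) (g j)) := by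
    rw [hu, hw, clustered, List.map_flatMap]
    simp [List.map_replicate, hg]
  have hb : ∀ a ∈ u, (⊥ : WithBot α) < a := by
    intro a ha
    rw [hu] at ha
    obtain ⟨x, _, rfl⟩ := List.mem_map.mp ha
    exact WithBot.bot_lt_coe x
  have hchain : List.Chain' (· ≥ ·) u := by
    rw [huflat]
    apply chain'_flatMap_replicate
    rw [List.pairwise_reverse]
    refine List.pairwise_iff_get.mpr ?_
    rintro ⟨i, hi⟩ ⟨j, hj⟩ hij
    have hle : s ((List.finRange σ).get ⟨i, hi⟩) ≤ s ((List.finRange σ).get ⟨j, hj⟩) := by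
      rw [List.get_finRange, List.get_finRange]
      apply hs.monotone
      exact le_of_lt (by simpa [Fin.mk_lt_mk] using hij)
    simpa [hg, WithBot.coe_le_coe] using hle
  rw [hterm, bwt_nonincreasing u ⊥ hb hchain]
  have hrev : u.reverse = (List.finRange σ).flatMap
      (fun j => List.replicate (k j) (g j)) := by
    rw [huflat, List.reverse_flatMap, List.reverse_reverse]
    congr 1
    funext j
    simp [Function.comp_def, List.reverse_replicate]
  rw [hrev]
  have := runs_blocks (⊥ : WithBot α) g k (List.finRange σ)
    (fun j _ => by have := hk j; omega)
    ?_ ?_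
  · rw [this, List.length_finRange]
  · refine ((List.nodup_finRange σ).imp ?_).isChain
    intro i j hij
    intro hgij
    exact hij (hs.injective (by simpa [hg, WithBot.coe_inj] using hgij))
  · intro j _
    exact WithBot.coe_ne_bot
end

section
/- Let Σ = {s_0 < s_1 < ... < s_{σ-1}} be an ordered alphabet of size σ ≥ 1 and let K = s_{σ-1}^{k_{σ-1}} ... s_1^{k_1} s_0^{k_0} be a clustered string with all exponents k_i ≥ 2. Then BWT(K$) equals the explicit string s_0^{k_0} s_1^{k_1} ... s_{σ-1}^{k_{σ-1}} $ (the equal-letter blocks of K in increasing symbol order followed by the sentinel). -/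
open List

namespace ClusteredBWT

variable {β : Type*} [LinearOrder β]

lemma lex_append_cons_lt (A : List β) {a b : β} (u w : List β) (h : a < b) :
    A ++ a :: u < A ++ b :: w := by
  induction A with
  | nil => exact List.Lex.rel h
  | cons x A ih => exact List.Lex.cons ih

def flatB (B : List (β × ℕ)) : List β := B.flatMap fun p => List.replicate p.2 p.1

def sumSnd (B : List (β × ℕ)) : ℕ := (B.map Prod.snd).sum

@[simp] lemma flatB_nil : flatB ([] : List (β × ℕ)) = [] := rfl

@[simp] lemma flatB_cons (p : β × ℕ) (B : List (β × ℕ)) :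
    flatB (p :: B) = List.replicate p.2 p.1 ++ flatB B := rfl

lemma flatB_append (B C : List (β × ℕ)) : flatB (B ++ C) = flatB B ++ flatB C :=
  List.flatMap_append

lemma flatB_reverse_cons (p : β × ℕ) (B : List (β × ℕ)) :
    flatB ((p :: B).reverse) = flatB B.reverse ++ List.replicate p.2 p.1 := by
  rw [List.reverse_cons, flatB_append]; simp

lemma length_flatB (B : List (β × ℕ)) : (flatB B).length = sumSnd B := by
  induction B with
  | nil => simp [sumSnd]
  | cons p B ih => simp [flatB_cons, sumSnd, List.map_cons, List.sum_cons] at *; omega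

lemma sumSnd_reverse (B : List (β × ℕ)) : sumSnd B.reverse = sumSnd B := by
  simp [sumSnd, List.sum_reverse]

def rotsG (z : β) : List β → List (β × ℕ) → List (List β)
  | _, [] => []
  | low, (a, m) :: up =>
      ((List.range m).map fun t =>
        List.replicate (t+1) a ++ low ++ z :: (flatB up.reverse ++ List.replicate (m-1-t) a))
      ++ rotsG z (List.replicate m a ++ low) up

def idxG : List (β × ℕ) → List ℕ
  | [] => []
  | (_, m) :: up => ((List.range m).map fun t => sumSnd up + (m-1-t)) ++ idxG up

lemma rotsG_eq (z : β) : ∀ (B : List (β × ℕ)) (low v : List β),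
    v = flatB B.reverse ++ (low ++ [z]) →
    rotsG z low B = (idxG B).map (fun i => v.rotate i) := by
  intro B
  induction B with
  | nil => intro low v hv; simp [rotsG, idxG]
  | cons p up ih =>
    obtain ⟨a, m⟩ := p
    intro low v hv
    rw [flatB_reverse_cons] at hv
    have hv' : v = flatB up.reverse ++ (List.replicate m a ++ (low ++ [z])) := by
      rw [hv]; simp [List.append_assoc]
    rw [rotsG, idxG, List.map_append,
      ← ih (List.replicate m a ++ low) v (by rw [hv']; simp [List.append_assoc])]
    congr 1
    rw [List.map_map]
    apply List.map_congr_left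
    intro t ht
    rw [List.mem_range] at ht
    have hU : (flatB up.reverse).length = sumSnd up := by rw [length_flatB, sumSnd_reverse]
    have hsplit : List.replicate m a
        = List.replicate (m-1-t) a ++ List.replicate (t+1) a := by
      rw [← List.replicate_add]; congr 1; omega
    have hlen : sumSnd up + (m-1-t) ≤ v.length := by
      rw [hv']; simp [hU]; omega
    simp only [Function.comp]
    rw [List.rotate_eq_drop_append_take hlen, hv', hsplit, ← hU]
    rw [show flatB up.reverse ++ (List.replicate (m-1-t) a ++ List.replicate (t+1) a ++ (low ++ [z]))
        = flatB up.reverse ++ (List.replicate (m-1-t) a ++ (List.replicate (t+1) a ++ (low ++ [z])))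
      from by rw [List.append_assoc]]
    rw [List.drop_length_add_append, List.take_length_add_append]
    rw [List.drop_left' List.length_replicate, List.take_left' List.length_replicate]
    simp [List.append_assoc]

lemma idxG_perm : ∀ (B : List (β × ℕ)), (idxG B).Perm (List.range (sumSnd B)) := by
  intro B
  induction B with
  | nil => simp [idxG, sumSnd]
  | cons p up ih =>
    obtain ⟨a, m⟩ := p
    rw [idxG]
    have h1 : (List.range m).map (fun t => sumSnd up + (m-1-t))
        = (List.range' (sumSnd up) m).reverse := by
      rw [List.reverse_range']
      apply List.map_congr_left
      intro t ht; rw [List.mem_range] at ht; omega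
    have h2 : sumSnd ((a,m) :: up) = sumSnd up + m := by simp [sumSnd]; omega
    rw [h1, h2]
    have h3 : List.range (sumSnd up + m)
        = List.range (sumSnd up) ++ List.range' (sumSnd up) m := by
      rw [List.range_eq_range', List.range_eq_range']
      rw [show sumSnd up + m = m + sumSnd up from by omega]
      rw [Nat.add_comm m, ← List.range'_append (s := 0) (m := sumSnd up) (n := m) (step := 1)]
      simp
    rw [h3]
    calc ((List.range' (sumSnd up) m).reverse ++ idxG up)
        ~ List.range' (sumSnd up) m ++ List.range (sumSnd up) :=
          ((List.reverse_perm _).append ih)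
      _ ~ List.range (sumSnd up) ++ List.range' (sumSnd up) m := List.perm_append_comm


lemma rotsG_chain (z : β) : ∀ (B : List (β × ℕ)) (low : List β) (c : β) (r : List β),
    (∀ p ∈ B, 1 ≤ p.2) →
    List.Pairwise (· < ·) (B.map Prod.fst) →
    (∀ p ∈ B, z < p.1) →
    (∀ x ∈ low, ∀ p ∈ B, x < p.1) →
    (∀ p ∈ B.head?, c < p.1) →
    List.IsChain (· ≤ ·) ((c :: r) :: rotsG z low B) := by
  intro B
  induction B with
  | nil => intro low c r _ _ _ _ _; simp [rotsG]
  | cons p up ih =>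
    obtain ⟨a, m⟩ := p
    intro low c r h1 h2 hz hlow hc
    obtain ⟨m', rfl⟩ : ∃ m', m = m' + 1 := by
      have := h1 (a, m) (List.mem_cons_self); exact ⟨m - 1, by omega⟩
    have hca : c < a := hc (a, m'+1) rfl
    have ha_up : ∀ p ∈ up, a < p.1 := by
      rw [List.map_cons, List.pairwise_cons] at h2
      intro p hp
      exact h2.1 p.1 (List.mem_map_of_mem hp)
    have hza : z < a := hz (a, m'+1) (List.mem_cons_self)
    have hlowa : ∀ x ∈ low, x < a := fun x hx => hlow x hx (a, m'+1) (List.mem_cons_self)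
    set W := flatB up.reverse with hW
    set f : ℕ → List β := fun t =>
      List.replicate (t+1) a ++ low ++ z :: (W ++ List.replicate (m'+1-1-t) a) with hf
    have hrots : rotsG z low ((a, m'+1) :: up)
        = (List.range (m'+1)).map f ++ rotsG z (List.replicate (m'+1) a ++ low) up := rfl
    -- step inequality within the block
    have hstep : ∀ t, t < m' → f t ≤ f (t+1) := by
      intro t ht
      have h2a : f (t+1) = List.replicate (t+1) a
          ++ (a :: (low ++ z :: (W ++ List.replicate (m'+1-1-(t+1)) a))) := by
        rw [hf]
        simp only []
        rw [show t+1+1 = (t+1)+1 from rfl, List.replicate_succ' (n := t+1) (a := a)]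
        simp [List.append_assoc]
      apply le_of_lt
      rw [h2a]
      cases low with
      | nil =>
        rw [hf]
        simp only [List.append_nil, List.nil_append]
        exact lex_append_cons_lt _ _ _ hza
      | cons x low₂ =>
        have hxa : x < a := hlowa x (List.mem_cons_self)
        rw [hf]
        simp only []
        rw [show List.replicate (t+1) a ++ (x :: low₂) ++ z :: (W ++ List.replicate (m'+1-1-t) a)
            = List.replicate (t+1) a ++ x :: (low₂ ++ z :: (W ++ List.replicate (m'+1-1-t) a))
          from by simp [List.append_assoc]]
        exact lex_append_cons_lt _ _ _ hxa
    -- chain within block (with predecessor c :: r)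
    have hblock : List.IsChain (· ≤ ·) ((c :: r) :: (List.range (m'+1)).map f) := by
      rw [List.isChain_cons]
      constructor
      · intro y hy
        rw [List.range_succ_eq_map, List.map_cons, List.head?_cons] at hy
        obtain rfl : f 0 = y := by injection hy
        apply le_of_lt
        rw [hf]
        simp only []
        rw [show (0:ℕ)+1 = 1 from rfl, List.replicate_one]
        rw [show ([a] ++ low ++ z :: (W ++ List.replicate (m'+1-1-0) a))
            = a :: (low ++ z :: (W ++ List.replicate (m'+1-1-0) a)) from by simp]
        exact List.Lex.rel hca
      · rw [List.isChain_map, List.isChain_range_succ]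
        intro t ht
        exact hstep t ht
    -- apply IH with predecessor f m'
    have hfm : f m' = a :: (List.replicate m' a ++ low ++ z :: (W ++ List.replicate (m'+1-1-m') a)) := by
      rw [hf]
      simp only []
      rw [List.replicate_succ]
      simp [List.append_assoc]
    have ihh := ih (List.replicate (m'+1) a ++ low) a
        (List.replicate m' a ++ low ++ z :: (W ++ List.replicate (m'+1-1-m') a))
        (fun p hp => h1 p (List.mem_cons_of_mem _ hp))
        (by rw [List.map_cons, List.pairwise_cons] at h2; exact h2.2)
        (fun p hp => hz p (List.mem_cons_of_mem _ hp))
        (by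
          intro x hx p hp
          rcases List.mem_append.mp hx with hx | hx
          · rw [List.eq_of_mem_replicate hx]; exact ha_up p hp
          · exact hlow x hx p (List.mem_cons_of_mem _ hp))
        (fun p hp => ha_up p (List.mem_of_mem_head? hp))
    rw [← hfm] at ihh
    rw [List.isChain_cons] at ihh
    obtain ⟨hlink, hrest⟩ := ihh
    -- assemble
    rw [hrots, ← List.cons_append, List.isChain_append]
    refine ⟨hblock, hrest, ?_⟩
    intro x hx y hy
    have hlast : ((c :: r) :: (List.range (m'+1)).map f).getLast? = some (f m') := by
      have heq : (c :: r) :: (List.range (m'+1)).map f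
          = ((c :: r) :: (List.range m').map f) ++ [f m'] := by
        rw [List.range_succ]; simp
      rw [heq, List.getLast?_concat]
    rw [hlast] at hx
    obtain rfl : f m' = x := by injection hx
    exact hlink y hy


lemma filterMap_getLast?_map (l : List ℕ) (f : ℕ → List β) (g : ℕ → β)
    (h : ∀ x ∈ l, (f x).getLast? = some (g x)) :
    (l.map f).filterMap List.getLast? = l.map g := by
  induction l with
  | nil => simp
  | cons x l ih =>
    rw [List.map_cons, List.map_cons, List.filterMap_cons, h x (List.mem_cons_self),
      ih (fun y hy => h y (List.mem_cons_of_mem _ hy))]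

lemma getLast?_append_replicate_succ (X : List β) (r : ℕ) (a : β) :
    (X ++ List.replicate (r+1) a).getLast? = some a := by
  rw [List.replicate_succ', ← List.append_assoc, List.getLast?_concat]

lemma getLast?_mid_replicate (X Y : List β) (zz : β) (r : ℕ) (a : β) :
    (X ++ zz :: (Y ++ List.replicate (r+1) a)).getLast? = some a := by
  have : X ++ zz :: (Y ++ List.replicate (r+1) a)
      = (X ++ zz :: Y) ++ List.replicate (r+1) a := by simp [List.append_assoc]
  rw [this, getLast?_append_replicate_succ]

lemma getLast?_cons_replicate (X : List β) (zz : β) (r : ℕ) (a : β) :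
    (X ++ zz :: List.replicate (r+1) a).getLast? = some a := by
  have : X ++ zz :: List.replicate (r+1) a = (X ++ [zz]) ++ List.replicate (r+1) a := by
    simp [List.append_assoc]
  rw [this, getLast?_append_replicate_succ]

lemma rotsG_lasts (z : β) : ∀ (up : List (β × ℕ)) (low : List β) (a : β) (m : ℕ),
    1 ≤ m → (∀ p ∈ up, 1 ≤ p.2) →
    (rotsG z low ((a, m) :: up)).filterMap List.getLast? =
      List.replicate (m-1) a ++ (flatB up ++ [z]) := by
  intro up
  induction up with
  | nil =>
    intro low a m hm _
    obtain ⟨m', rfl⟩ : ∃ m', m = m' + 1 := ⟨m - 1, by omega⟩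
    rw [rotsG, rotsG, List.append_nil, flatB_nil, List.nil_append]
    rw [filterMap_getLast?_map (g := fun t => if t = m' then z else a)]
    · rw [List.range_succ, List.map_append]
      rw [List.map_congr_left (f := fun t => if t = m' then z else a) (g := fun _ => a)
        (by intro t ht; rw [List.mem_range] at ht; simp [Nat.ne_of_lt ht])]
      simp
    · intro t ht
      rw [List.mem_range] at ht
      simp only [flatB_nil, List.reverse_nil, List.nil_append]
      by_cases h : t = m'
      · rw [if_pos h, h, show m'+1-1-m' = 0 from by omega, List.replicate_zero]
        rw [show List.replicate (m'+1) a ++ low ++ z :: [] = (List.replicate (m'+1) a ++ low) ++ [z]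
          from by simp, List.getLast?_concat]
      · rw [if_neg h, show m'+1-1-t = (m'-t-1)+1 from by omega]
        exact getLast?_cons_replicate _ _ _ _
  | cons q up' ih =>
    obtain ⟨b, mb⟩ := q
    intro low a m hm hup
    have hmb : 1 ≤ mb := hup (b, mb) (List.mem_cons_self)
    obtain ⟨m', rfl⟩ : ∃ m', m = m' + 1 := ⟨m - 1, by omega⟩
    obtain ⟨mb', rfl⟩ : ∃ n, mb = n + 1 := ⟨mb - 1, by omega⟩
    rw [rotsG, List.filterMap_append]
    rw [ih (List.replicate (m'+1) a ++ low) b (mb'+1) (by omega)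
      (fun p hp => hup p (List.mem_cons_of_mem _ hp))]
    rw [filterMap_getLast?_map (g := fun t => if t = m' then b else a)]
    · rw [List.range_succ, List.map_append]
      rw [List.map_congr_left (f := fun t => if t = m' then b else a) (g := fun _ => a)
        (by intro t ht; rw [List.mem_range] at ht; simp [Nat.ne_of_lt ht])]
      simp [List.replicate_succ, List.append_assoc]
    · intro t ht
      rw [List.mem_range] at ht
      by_cases h : t = m'
      · rw [if_pos h, h, show m'+1-1-m' = 0 from by omega, List.replicate_zero, List.append_nil]
        rw [flatB_reverse_cons]
        have : List.replicate (m'+1) a ++ low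
            ++ z :: (flatB up'.reverse ++ List.replicate ((b, mb'+1).2) ((b, mb'+1).1))
            = List.replicate (m'+1) a ++ low
              ++ z :: (flatB up'.reverse ++ List.replicate (mb'+1) b) := rfl
        rw [this]
        exact getLast?_mid_replicate _ _ _ _ _
      · rw [if_neg h, show m'+1-1-t = (m'-t-1)+1 from by omega]
        exact getLast?_mid_replicate _ _ _ _ _

end ClusteredBWT

lemma term_eq' {α : Type*} (w : List α) : term w = w.map (fun a => WithBot.some a) ++ [⊥] := by
  simp [term]
  induction w with
  | nil => simp
  | cons a w ih => simp [ih]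

open ClusteredBWT List

/-- the BWT of the terminated clustered string is the string
`s_0^{k_0} s_1^{k_1} ⋯ s_{σ-1}^{k_{σ-1}} $` (the blocks in increasing
symbol order, followed by the sentinel). -/
theorem clustered_bwt_eq {α : Type*} [LinearOrder α] (σ : ℕ) (hσ : 1 ≤ σ)
    (s : Fin σ → α) (hs : StrictMono s)
    (k : Fin σ → ℕ) (hk : ∀ j, 2 ≤ k j) :
    bwtL (term (clustered s k)) =
      (List.finRange σ).flatMap
        (fun j => List.replicate (k j) ((s j : WithBot α))) ++ [⊥] := by
  classical
  set B : List (WithBot α × ℕ) :=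
    (List.finRange σ).map (fun j => ((s j : WithBot α), k j)) with hB
  set v : List (WithBot α) := flatB B.reverse ++ [(⊥ : WithBot α)] with hv
  -- basic facts about B
  have h1 : ∀ p ∈ B, 1 ≤ p.2 := by
    intro p hp
    rw [hB] at hp
    obtain ⟨j, _, rfl⟩ := List.mem_map.mp hp
    have := hk j; simpa using by omega
  have h2 : List.Pairwise (· < ·) (B.map Prod.fst) := by
    rw [hB, List.map_map, List.pairwise_map]
    exact (List.pairwise_lt_finRange σ).imp
      (fun h => by simpa using WithBot.coe_lt_coe.mpr (hs h))
  have hz : ∀ p ∈ B, (⊥ : WithBot α) < p.1 := by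
    intro p hp
    rw [hB] at hp
    obtain ⟨j, _, rfl⟩ := List.mem_map.mp hp
    exact WithBot.bot_lt_coe _
  have hflatBB : flatB B =
      (List.finRange σ).flatMap (fun j => List.replicate (k j) ((s j : WithBot α))) := by
    rw [hB, flatB, List.flatMap_map]
  -- term equals v
  have hterm : term (clustered s k) = v := by
    rw [term_eq', clustered, hv]
    congr 1
    rw [List.map_flatMap, hB, ← List.map_reverse, flatB, List.flatMap_map]
    simp
  -- lengths
  have hN : (flatB B.reverse).length = sumSnd B := by rw [length_flatB, sumSnd_reverse]
  have hvlen : v.length = sumSnd B + 1 := by rw [hv, List.length_append, hN]; rfl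
  -- the sorted rotation list
  set L : List (List (WithBot α)) :=
    ((⊥ : WithBot α) :: flatB B.reverse) :: rotsG ⊥ [] B with hL
  have hrotN : v.rotate (sumSnd B) = (⊥ : WithBot α) :: flatB B.reverse := by
    rw [List.rotate_eq_drop_append_take (by omega), hv,
      List.drop_left' hN, List.take_left' hN]
    rfl
  have hmapeq : ((sumSnd B) :: idxG B).map (fun i => v.rotate i) = L := by
    rw [List.map_cons, hrotN, hL,
      ← rotsG_eq (⊥ : WithBot α) B [] v (by rw [hv]; simp)]
  have hperm : ((List.range v.length).map (fun i => v.rotate i)).Perm L := by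
    rw [hvlen, ← hmapeq]
    apply List.Perm.map
    calc List.range (sumSnd B + 1)
        = List.range (sumSnd B) ++ [sumSnd B] := List.range_succ
      _ ~ sumSnd B :: List.range (sumSnd B) := List.perm_append_singleton _ _
      _ ~ sumSnd B :: idxG B := (idxG_perm B).symm.cons _
  have hsorted : List.Pairwise (· ≤ ·) L := by
    rw [← List.isChain_iff_pairwise]
    exact rotsG_chain (⊥ : WithBot α) B [] ⊥ (flatB B.reverse) h1 h2 hz
      (by simp) (fun p hp => hz p (List.mem_of_mem_head? hp))
  have hsortEq : List.insertionSort (· ≤ ·)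
      ((List.range v.length).map (fun i => v.rotate i)) = L :=
    List.Perm.eq_of_pairwise' (List.pairwise_insertionSort _ _) hsorted
      ((List.perm_insertionSort _ _).trans hperm)
  -- destructure B
  have hBlen : B.length = σ := by rw [hB]; simp
  obtain ⟨p0, up0, hB0⟩ : ∃ p up, B = p :: up := by
    cases hBc : B with
    | nil => rw [hBc] at hBlen; simp at hBlen; omega
    | cons p up => exact ⟨p, up, rfl⟩
  obtain ⟨a0, m0⟩ := p0
  have hm0 : 1 ≤ m0 := h1 (a0, m0) (by rw [hB0]; exact List.mem_cons_self)
  obtain ⟨n0, rfl⟩ : ∃ n, m0 = n + 1 := ⟨m0 - 1, by omega⟩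
  have hup0 : ∀ p ∈ up0, 1 ≤ p.2 :=
    fun p hp => h1 p (by rw [hB0]; exact List.mem_cons_of_mem _ hp)
  -- compute the final answer
  rw [bwtL, hterm, hsortEq, hL]
  rw [show (((⊥ : WithBot α) :: flatB B.reverse) :: rotsG ⊥ [] B)
      = [(⊥ : WithBot α) :: flatB B.reverse] ++ rotsG ⊥ [] B from rfl,
    List.filterMap_append]
  have hlast0 : ((⊥ : WithBot α) :: flatB B.reverse).getLast? = some a0 := by
    rw [hB0, flatB_reverse_cons]
    rw [show ((⊥ : WithBot α) :: (flatB up0.reverse ++ List.replicate ((a0, n0+1).2) ((a0, n0+1).1)))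
        = ((⊥ : WithBot α) :: flatB up0.reverse) ++ List.replicate (n0+1) a0 from by simp]
    exact getLast?_append_replicate_succ _ _ _
  rw [show List.filterMap List.getLast? [(⊥ : WithBot α) :: flatB B.reverse] = [a0] from by
    rw [List.filterMap_cons, hlast0]; rfl]
  rw [hB0, rotsG_lasts (⊥ : WithBot α) up0 [] a0 (n0+1) (by omega) hup0]
  rw [← hflatBB, hB0, flatB_cons]
  simp [List.replicate_succ, List.append_assoc]
end

section
/- Let Σ = {s_0 < s_1 < ... < s_{σ-1}} be an ordered alphabet of size σ ≥ 1 and let K = s_{σ-1}^{k_{σ-1}} ... s_1^{k_1} s_0^{k_0} be a clustered string with all exponents k_i ≥ 2. Then the set of super-maximal extensions of K$ is exactly { s_j^{k_j} : 0 ≤ j ≤ σ-1 } ∪ { s_j^{k_j - 1} s_{j-1} : 1 ≤ j ≤ σ-1 } ∪ { s_0^{k_0 - 1} $ }, containing exactly two elements per symbol s_j. -/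
set_option linter.unusedSectionVars false
set_option maxHeartbeats 1000000

namespace CSM
variable {β : Type*} [LinearOrder β] [Inhabited β]


def blocks (L : List (β × ℕ)) : List β := L.flatMap fun p => List.replicate p.2 p.1

def multOf : List (β × ℕ) → β → ℕ
  | [], _ => 0
  | (f, n) :: L, e => if e = f then n else multOf L e

def nextOf : List (β × ℕ) → β → β
  | [], _ => default
  | (f, _) :: L, e => if e = f then (blocks L).headI else nextOf L e

lemma blocks_cons (p : β × ℕ) (L : List (β × ℕ)) :
    blocks (p :: L) = List.replicate p.2 p.1 ++ blocks L := rfl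

lemma mem_blocks {a : β} {L : List (β × ℕ)} (h : a ∈ blocks L) :
    ∃ p ∈ L, p.1 = a := by
  simp only [blocks, List.mem_flatMap, List.mem_replicate] at h
  obtain ⟨p, hp, _, rfl⟩ := h
  exact ⟨p, hp, rfl⟩

lemma headI_eq_getElem (l : List β) (h : l ≠ []) :
    l.headI = l[0]'(List.length_pos_iff.mpr h) := by
  cases l with
  | nil => simp at h
  | cons a l => simp

lemma infix_append_cases {x u w : List β} (h : x <:+: u ++ w) :
    x <:+: u ∨ x <:+: w ∨
      ∃ x₁ x₂, x = x₁ ++ x₂ ∧ x₁ ≠ [] ∧ x₂ ≠ [] ∧ x₁ <:+ u ∧ x₂ <+: w := by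
  obtain ⟨st, tt, hst⟩ := h
  rw [List.append_assoc, List.append_eq_append_iff] at hst
  rcases hst with ⟨a', ha1, ha2⟩ | ⟨c', hc1, hc2⟩
  · rw [List.append_eq_append_iff] at ha2
    rcases ha2 with ⟨b', hb1, hb2⟩ | ⟨d', hd1, hd2⟩
    · left
      exact ⟨st, b', by rw [ha1, hb1, List.append_assoc]⟩
    · rcases eq_or_ne a' [] with rfl | hane
      · right; left
        simp only [List.nil_append] at hd1
        exact ⟨[], tt, by rw [hd2, ← hd1]; simp⟩
      · rcases eq_or_ne d' [] with rfl | hdne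
        · left
          simp only [List.append_nil] at hd1
          exact ⟨st, [], by rw [ha1, ← hd1]; simp⟩
        · right; right
          exact ⟨a', d', hd1, hane, hdne, ⟨st, ha1.symm⟩, ⟨tt, hd2.symm⟩⟩
  · right; left
    exact ⟨c', tt, by rw [hc2, List.append_assoc]⟩

/-- Any occurrence of `e^m a` (`m ≥ 1`) in a strictly-decreasing block string:
`m` fits in `e`'s block, and `a` is `e` (staying inside the block) or the next letter. -/
lemma run_ext {L : List (β × ℕ)} (hdec : L.Pairwise fun p q => q.1 < p.1)
    (hpos : ∀ p ∈ L, 1 ≤ p.2) {e a : β} {m : ℕ} (hm : 1 ≤ m)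
    (h : List.replicate m e ++ [a] <:+: blocks L) :
    m ≤ multOf L e ∧ ((a = e ∧ m < multOf L e) ∨ a = nextOf L e) := by
  induction L with
  | nil =>
    rw [show blocks ([] : List (β × ℕ)) = [] from rfl, List.infix_nil] at h
    simp at h
  | cons p L ih =>
    obtain ⟨f, n⟩ := p
    rw [blocks_cons] at h
    rw [List.pairwise_cons] at hdec
    have hn1 : 1 ≤ n := hpos (f, n) (List.mem_cons_self)
    have hme : e ∈ List.replicate m e ++ [a] :=
      List.mem_append_left _ (List.mem_replicate.mpr ⟨by omega, rfl⟩)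
    rcases infix_append_cases h with h1 | h2 | ⟨x₁, x₂, hx, hne1, hne2, hs1, hp2⟩
    · have hef : e = f := (List.mem_replicate.mp (h1.subset hme)).2
      have haf : a = f := (List.mem_replicate.mp (h1.subset
        (List.mem_append_right _ (List.mem_singleton.mpr rfl)))).2
      have hlen := h1.length_le
      simp only [List.length_append, List.length_replicate, List.length_singleton] at hlen
      refine ⟨?_, Or.inl ⟨haf.trans hef.symm, ?_⟩⟩ <;>
        simp only [multOf, if_pos hef] <;> omega
    · obtain ⟨q, hq, hqe⟩ := mem_blocks (h2.subset hme)
      have hlt : e < f := hqe ▸ hdec.1 q hq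
      have hef : ¬ (e = f) := ne_of_lt hlt
      simpa only [multOf, nextOf, if_neg hef] using
        ih hdec.2 (fun p hp => hpos p (List.mem_cons_of_mem _ hp)) h2
    · have hpre : x₁ <+: List.replicate m e ++ [a] := ⟨x₂, hx.symm⟩
      have hl1 : 1 ≤ x₁.length := List.length_pos_iff.mpr hne1
      have hallf : ∀ b ∈ x₁, b = f := fun b hb => (List.mem_replicate.mp (hs1.subset hb)).2
      have hx10 : x₁[0]'(by omega) = e := by
        have := hpre.getElem (i := 0) (by omega)
        rwa [List.getElem_append_left (by simpa using Nat.lt_of_succ_le hm), List.getElem_replicate] at this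
      have hef : e = f := hx10 ▸ hallf _ (List.getElem_mem _)
      have hln : x₁.length ≤ n := le_trans hs1.length_le (by simp)
      have hx1 : x₁ = List.replicate x₁.length e :=
        List.eq_replicate_iff.mpr ⟨rfl, fun b hb => (hallf b hb).trans hef.symm⟩
      have hlm : x₁.length ≤ m := by
        have hlen := congrArg List.length hx
        simp only [List.length_append, List.length_replicate, List.length_singleton] at hlen
        have := List.length_pos_iff.mpr hne2
        omega
      have hx2 : x₂ = List.replicate (m - x₁.length) e ++ [a] := by
        apply List.append_cancel_left (as := x₁)
        rw [← hx]
        have hsplit : List.replicate m e ++ [a]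
            = List.replicate x₁.length e ++ (List.replicate (m - x₁.length) e ++ [a]) := by
          rw [← List.append_assoc, ← List.replicate_add]
          congr 2
          omega
        rw [hsplit, ← hx1]
      subst hx2
      rcases Nat.lt_or_ge x₁.length m with hlt | hge
      · -- impossible: next block starts with a letter < f = e
        exfalso
        obtain ⟨mm, hmm2⟩ : ∃ mm, m - x₁.length = mm + 1 := ⟨m - x₁.length - 1, by omega⟩
        rw [hmm2, List.replicate_succ, List.cons_append] at hp2
        cases L with
        | nil =>
          rw [show blocks ([] : List (β × ℕ)) = [] from rfl, List.prefix_nil] at hp2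
          simp at hp2
        | cons q L' =>
          have hq1 : 1 ≤ q.2 := hpos q (List.mem_cons_of_mem _ (List.mem_cons_self))
          obtain ⟨qq, hqq⟩ : ∃ qq, q.2 = qq + 1 := ⟨q.2 - 1, by omega⟩
          obtain ⟨t, ht⟩ := hp2
          rw [blocks_cons, hqq, List.replicate_succ, List.cons_append, List.cons_append] at ht
          have heq : e = q.1 := ((List.cons.injEq _ _ _ _).mp ht).1
          have hqf : q.1 < f := hdec.1 q (List.mem_cons_self)
          rw [← heq, ← hef] at hqf
          exact lt_irrefl e hqf
      · have hm_eq : x₁.length = m := le_antisymm hlm hge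
        have hx2' : List.replicate (m - x₁.length) e ++ [a] = [a] := by
          rw [hm_eq]; simp
        rw [hx2'] at hp2
        obtain ⟨tl, htl⟩ := hp2
        have hhead : (blocks L).headI = a := by rw [← htl]; rfl
        exact ⟨by simp only [multOf, if_pos hef]; omega,
          Or.inr (by simp only [nextOf, if_pos hef]; exact hhead.symm)⟩

/-- Determinism: an occurrence of `d e^m a` with `d ≠ e` pins down `a`. -/
lemma det_ext {L : List (β × ℕ)} (hdec : L.Pairwise fun p q => q.1 < p.1)
    (hpos : ∀ p ∈ L, 1 ≤ p.2) {d e a : β} {m : ℕ} (hde : d ≠ e) (hm : 1 ≤ m)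
    (h : d :: (List.replicate m e ++ [a]) <:+: blocks L) :
    a = (if m < multOf L e then e else nextOf L e) := by
  induction L with
  | nil =>
    rw [show blocks ([] : List (β × ℕ)) = [] from rfl, List.infix_nil] at h
    simp at h
  | cons p L ih =>
    obtain ⟨f, n⟩ := p
    rw [blocks_cons] at h
    rw [List.pairwise_cons] at hdec
    have hn1 : 1 ≤ n := hpos (f, n) (List.mem_cons_self)
    have hme : e ∈ d :: (List.replicate m e ++ [a]) :=
      List.mem_cons_of_mem _ (List.mem_append_left _ (List.mem_replicate.mpr ⟨by omega, rfl⟩))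
    rcases infix_append_cases h with h1 | h2 | ⟨x₁, x₂, hx, hne1, hne2, hs1, hp2⟩
    · exfalso
      have hef : e = f := (List.mem_replicate.mp (h1.subset hme)).2
      have hdf : d = f := (List.mem_replicate.mp (h1.subset (List.mem_cons_self))).2
      exact hde (hdf.trans hef.symm)
    · obtain ⟨q, hq, hqe⟩ := mem_blocks (h2.subset hme)
      have hef : ¬ (e = f) := ne_of_lt (hqe ▸ hdec.1 q hq)
      simpa only [multOf, nextOf, if_neg hef] using
        ih hdec.2 (fun p hp => hpos p (List.mem_cons_of_mem _ hp)) h2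
    · have hpre : x₁ <+: d :: (List.replicate m e ++ [a]) := ⟨x₂, hx.symm⟩
      have hl1 : 1 ≤ x₁.length := List.length_pos_iff.mpr hne1
      have hallf : ∀ b ∈ x₁, b = f := fun b hb => (List.mem_replicate.mp (hs1.subset hb)).2
      have hdf : d = f := by
        have h00 := hpre.getElem (i := 0) (by omega)
        rw [List.getElem_cons_zero] at h00
        exact h00 ▸ hallf _ (List.getElem_mem _)
      have hx1len : x₁.length = 1 := by
        by_contra hcon
        have h2le : 2 ≤ x₁.length := by omega
        have h11 := hpre.getElem (i := 1) (by omega)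
        rw [List.getElem_cons_succ, List.getElem_append_left (by simpa using Nat.lt_of_succ_le hm),
          List.getElem_replicate] at h11
        exact hde (hdf.trans ((h11 ▸ hallf _ (List.getElem_mem _)) : e = f).symm)
      have hx1 : x₁ = [d] := by
        cases x₁ with
        | nil => simp at hne1
        | cons c l =>
          simp only [List.length_cons, Nat.add_eq_right, List.length_eq_zero_iff] at hx1len
          subst hx1len
          have h00 := hpre.getElem (i := 0) (by simp)
          simpa using congrArg (fun z => [z]) h00
      subst hx1
      have hx2 : x₂ = List.replicate m e ++ [a] := by simpa using hx.symm
      subst hx2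
      cases L with
      | nil =>
        rw [show blocks ([] : List (β × ℕ)) = [] from rfl, List.prefix_nil] at hp2
        exact absurd hp2 hne2
      | cons q L' =>
        obtain ⟨f', n'⟩ := q
        have hn'1 : 1 ≤ n' := hpos (f', n') (List.mem_cons_of_mem _ (List.mem_cons_self))
        rw [blocks_cons] at hp2
        have hef' : e = f' := by
          have h00 := hp2.getElem (i := 0) (by simp)
          rwa [List.getElem_append_left (by simpa using Nat.lt_of_succ_le hm), List.getElem_replicate,
            List.getElem_append_left (by simpa using Nat.lt_of_succ_le hn'1), List.getElem_replicate] at h00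
        have hef : ¬ (e = f) := fun hh => hde (hdf.trans hh.symm)
        have hmult : multOf ((f, n) :: (f', n') :: L') e = n' := by
          simp only [multOf, if_neg hef, if_pos hef']
        have hnext : nextOf ((f, n) :: (f', n') :: L') e = (blocks L').headI := by
          simp only [nextOf, if_neg hef, if_pos hef']
        rw [hmult, hnext]
        obtain ⟨t, ht⟩ := hp2
        rw [← hef', List.append_assoc] at ht
        -- ht : rep m e ++ ([a] ++ t) = rep n' e ++ blocks L'
        rcases Nat.lt_or_ge m n' with hlt | hge
        · rw [if_pos hlt]
          have hsp : List.replicate n' e = List.replicate m e ++ List.replicate (n' - m) e := by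
            rw [← List.replicate_add]; congr 1; omega
          rw [hsp, List.append_assoc] at ht
          have hc := List.append_cancel_left ht
          obtain ⟨w, hw⟩ : ∃ w, n' - m = w + 1 := ⟨n' - m - 1, by omega⟩
          rw [hw] at hc
          simp only [List.replicate_succ, List.cons_append, List.singleton_append] at hc
          exact ((List.cons.injEq _ _ _ _).mp hc).1
        · have hsp : List.replicate m e = List.replicate n' e ++ List.replicate (m - n') e := by
            rw [← List.replicate_add]; congr 1; omega
          rw [hsp, List.append_assoc] at ht
          have hc := List.append_cancel_left ht
          -- hc : rep (m - n') e ++ ([a] ++ t) = blocks L'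
          have hmn' : m = n' := by
            by_contra hcon
            obtain ⟨w, hw⟩ : ∃ w, m - n' = w + 1 := ⟨m - n' - 1, by omega⟩
            rw [hw] at hc
            simp only [List.replicate_succ, List.cons_append, List.singleton_append] at hc
            cases L' with
            | nil =>
              rw [show blocks ([] : List (β × ℕ)) = [] from rfl] at hc
              simp at hc
            | cons q' L'' =>
              have hq'1 : 1 ≤ q'.2 := hpos q' (List.mem_cons_of_mem _
                (List.mem_cons_of_mem _ (List.mem_cons_self)))
              obtain ⟨qq, hqq⟩ : ∃ qq, q'.2 = qq + 1 := ⟨q'.2 - 1, by omega⟩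
              rw [blocks_cons, hqq] at hc
              simp only [List.replicate_succ, List.cons_append, List.singleton_append] at hc
              have heq : e = q'.1 := ((List.cons.injEq _ _ _ _).mp hc).1
              have hlt2 : q'.1 < f' := (List.pairwise_cons.mp hdec.2).1 q' (List.mem_cons_self)
              rw [← heq, ← hef'] at hlt2
              exact lt_irrefl e hlt2
          rw [if_neg (by omega)]
          rw [hmn', Nat.sub_self] at hc
          simp only [List.replicate_zero, List.nil_append, List.singleton_append] at hc
          rw [← hc]
          rfl


/-- Every nonempty list ends with a maximal run: `x = e^m` or `x = u ++ d :: e^m` with `d ≠ e`. -/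
lemma exists_run_decomp (x : List β) (hx : x ≠ []) :
    ∃ e m, 1 ≤ m ∧ (x = List.replicate m e ∨
      ∃ u d, d ≠ e ∧ x = u ++ d :: List.replicate m e) := by
  obtain ⟨e, r', hr⟩ : ∃ e r', x.reverse = e :: r' := by
    cases hrev : x.reverse with
    | nil => exact absurd (by simpa using congrArg List.reverse hrev) hx
    | cons a l => exact ⟨a, l, rfl⟩
  have hx' : x = (e :: r').reverse := by rw [← hr, List.reverse_reverse]
  set p : β → Bool := fun b => b = e with hp
  have htw : List.takeWhile p (e :: r') = e :: List.takeWhile p r' := by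
    rw [List.takeWhile_cons, if_pos (by simp [hp])]
  have key : ∃ (mt : ℕ) (D : List β), e :: r' = List.replicate mt e ++ D ∧ 1 ≤ mt ∧
      (D = [] ∨ ∃ d w, D = d :: w ∧ d ≠ e) := by
    have htdr := List.takeWhile_append_dropWhile (p := p) (l := e :: r')
    have hrep : List.takeWhile p (e :: r')
        = List.replicate (List.takeWhile p (e :: r')).length e :=
      List.eq_replicate_iff.mpr
        ⟨rfl, fun b hb => by simpa [hp] using List.mem_takeWhile_imp hb⟩
    refine ⟨(List.takeWhile p (e :: r')).length, List.dropWhile p (e :: r'), ?_, ?_, ?_⟩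
    · rw [← hrep, htdr]
    · rw [htw]; simp
    · cases hdw : List.dropWhile p (e :: r') with
      | nil => exact Or.inl rfl
      | cons d w =>
        refine Or.inr ⟨d, w, rfl, ?_⟩
        have hh := List.head_dropWhile_not p (l := e :: r') (by rw [hdw]; simp)
        simp only [hdw, List.head_cons] at hh
        simpa [hp] using hh
  obtain ⟨mt, D, hTD, hmt, hDc⟩ := key
  refine ⟨e, mt, hmt, ?_⟩
  rcases hDc with rfl | ⟨d, w, rfl, hdne⟩
  · left
    rw [List.append_nil] at hTD
    rw [hx', hTD, List.reverse_replicate]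
  · right
    refine ⟨w.reverse, d, hdne, ?_⟩
    rw [hx', hTD]
    simp [List.reverse_append, List.reverse_replicate]

lemma multOf_cons (q : β × ℕ) (L : List (β × ℕ)) (e : β) :
    multOf (q :: L) e = if e = q.1 then q.2 else multOf L e := by
  obtain ⟨f, n⟩ := q; rfl

lemma nextOf_cons (q : β × ℕ) (L : List (β × ℕ)) (e : β) :
    nextOf (q :: L) e = if e = q.1 then (blocks L).headI else nextOf L e := by
  obtain ⟨f, n⟩ := q; rfl

lemma multOf_append_of_not_mem {L₁ L₂ : List (β × ℕ)} {e : β} {n : ℕ}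
    (h : ∀ p ∈ L₁, p.1 ≠ e) : multOf (L₁ ++ (e, n) :: L₂) e = n := by
  induction L₁ with
  | nil => simp [multOf]
  | cons q L₁ ih =>
    rw [List.cons_append, multOf_cons,
      if_neg (fun hh => h q (List.mem_cons_self) hh.symm)]
    exact ih fun p hp => h p (List.mem_cons_of_mem _ hp)

lemma nextOf_append_of_not_mem {L₁ L₂ : List (β × ℕ)} {e : β} {n : ℕ}
    (h : ∀ p ∈ L₁, p.1 ≠ e) : nextOf (L₁ ++ (e, n) :: L₂) e = (blocks L₂).headI := by
  induction L₁ with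
  | nil => simp [nextOf]
  | cons q L₁ ih =>
    rw [List.cons_append, nextOf_cons,
      if_neg (fun hh => h q (List.mem_cons_self) hh.symm)]
    exact ih fun p hp => h p (List.mem_cons_of_mem _ hp)

section Clustered
variable {α : Type*} [LinearOrder α] {σ : ℕ}

/-- The block list of the terminated clustered string. -/
def BB (s : Fin σ → α) (k : Fin σ → ℕ) : List (WithBot α × ℕ) :=
  ((List.finRange σ).reverse.map fun j => ((s j : WithBot α), k j)) ++ [(⊥, 1)]

/-- The symbol following block `j` : `s (j-1)`, or `⊥` for `j = 0`. -/
def cc (s : Fin σ → α) (j : Fin σ) : WithBot α :=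
  if h : 1 ≤ (j : ℕ) then
    (s ⟨(j : ℕ) - 1, lt_of_le_of_lt (Nat.sub_le _ _) j.isLt⟩ : WithBot α) else ⊥

lemma cc_lt (s : Fin σ → α) (hs : StrictMono s) (j : Fin σ) :
    cc s j < (s j : WithBot α) := by
  unfold cc
  split
  · exact WithBot.coe_lt_coe.mpr (hs (by simpa [Fin.lt_def] using by omega))
  · exact WithBot.bot_lt_coe _

lemma flatMap_coe_replicate {α : Type*} (n : ℕ) (x : α) :
    (List.replicate n x).flatMap (fun (a : α) => [((a : WithBot α))])
      = List.replicate n (x : WithBot α) := by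
  induction n with
  | zero => simp
  | succ n ih => simp [List.replicate_succ, ih]

lemma blocks_BB (s : Fin σ → α) (k : Fin σ → ℕ) :
    blocks (BB s k) = term (clustered s k) := by
  unfold term clustered BB blocks
  rw [List.flatMap_append, List.flatMap_map]
  congr 1
  induction ((List.finRange σ).reverse) with
  | nil => simp
  | cons a l ih => simp_all [List.map_replicate, flatMap_coe_replicate]

lemma pairwise_BB (s : Fin σ → α) (hs : StrictMono s) (k : Fin σ → ℕ) :
    (BB s k).Pairwise (fun p q => q.1 < p.1) := by
  rw [BB, List.pairwise_append]
  refine ⟨?_, by simp, ?_⟩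
  · rw [List.pairwise_map, List.pairwise_reverse]
    exact (List.pairwise_lt_finRange σ).imp fun h => WithBot.coe_lt_coe.mpr (hs h)
  · intro a ha b hb
    simp only [List.mem_singleton] at hb
    subst hb
    simp only [List.mem_map] at ha
    obtain ⟨i, _, rfl⟩ := ha
    exact WithBot.bot_lt_coe _

lemma pos_BB (s : Fin σ → α) (k : Fin σ → ℕ) (hk : ∀ j, 2 ≤ k j) :
    ∀ p ∈ BB s k, 1 ≤ p.2 := by
  intro p hp
  rw [BB, List.mem_append] at hp
  rcases hp with hp | hp
  · simp only [List.mem_map] at hp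
    obtain ⟨i, _, rfl⟩ := hp
    have := hk i; omega
  · simp only [List.mem_singleton] at hp
    subst hp; exact le_refl 1

lemma finRange_getElem (i : ℕ) (h : i < (List.finRange σ).length) :
    (List.finRange σ)[i] = ⟨i, by simpa using h⟩ := by
  simp [List.getElem_finRange, Fin.cast]

lemma BB_decomp (s : Fin σ → α) (hs : StrictMono s) (k : Fin σ → ℕ) (hk : ∀ j, 2 ≤ k j)
    (j : Fin σ) :
    ∃ L₁ L₂, BB s k = L₁ ++ ((s j : WithBot α), k j) :: L₂ ∧
      (∀ p ∈ L₁, p.1 ≠ (s j : WithBot α)) ∧ ∃ T, blocks L₂ = cc s j :: T := by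
  classical
  set g : Fin σ → WithBot α × ℕ := fun i => ((s i : WithBot α), k i) with hg
  have hjlen : (j : ℕ) < (List.finRange σ).length := by simpa using j.isLt
  have hsplit : List.finRange σ
      = (List.finRange σ).take j ++ j :: (List.finRange σ).drop ((j : ℕ) + 1) := by
    conv_lhs => rw [← List.take_append_drop (j : ℕ) (List.finRange σ)]
    rw [List.drop_eq_getElem_cons hjlen, finRange_getElem]
  have hBB : BB s k = ((List.finRange σ).drop ((j : ℕ) + 1)).reverse.map g ++
      g j :: (((List.finRange σ).take j).reverse.map g ++ [(⊥, 1)]) := by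
    rw [BB, ← hg]
    conv_lhs => rw [hsplit]
    rw [List.reverse_append, List.reverse_cons, List.map_append, List.map_append,
      List.map_singleton]
    simp
  refine ⟨((List.finRange σ).drop ((j : ℕ) + 1)).reverse.map g,
    ((List.finRange σ).take j).reverse.map g ++ [(⊥, 1)], hBB, ?_, ?_⟩
  · intro p hp
    simp only [List.mem_map, List.mem_reverse] at hp
    obtain ⟨i, hi, rfl⟩ := hp
    obtain ⟨l, hl, hil⟩ := List.mem_iff_getElem.mp hi
    rw [List.getElem_drop, finRange_getElem] at hil
    have hij : (j : ℕ) < (i : ℕ) := by rw [← hil]; simp; omega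
    have hine : i ≠ j := fun hh => by omega
    simpa [hg] using fun hh => hine (hs.injective (WithBot.coe_inj.mp hh))
  · rcases Nat.eq_zero_or_pos (j : ℕ) with h0 | h1
    · refine ⟨[], ?_⟩
      rw [h0]
      simp only [List.take_zero, List.reverse_nil, List.map_nil, List.nil_append]
      have hc : cc s j = ⊥ := by unfold cc; rw [dif_neg (by omega)]
      rw [hc]
      rfl
    · have hj1 : (j : ℕ) = ((j : ℕ) - 1) + 1 := by omega
      have htake : (List.finRange σ).take j
          = (List.finRange σ).take ((j : ℕ) - 1) ++
            [⟨(j : ℕ) - 1, lt_of_le_of_lt (Nat.sub_le _ _) j.isLt⟩] := by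
        conv_lhs => rw [hj1]
        rw [List.take_succ, List.getElem?_eq_getElem (by simpa using by omega),
          finRange_getElem]
        rfl
      rw [htake]
      set j' : Fin σ := ⟨(j : ℕ) - 1, lt_of_le_of_lt (Nat.sub_le _ _) j.isLt⟩ with hj'
      rw [List.reverse_append, List.reverse_singleton, List.singleton_append,
        List.map_cons, List.cons_append, blocks_cons]
      have hcc : cc s j = (s j' : WithBot α) := by unfold cc; rw [dif_pos (show 1 ≤ (j:ℕ) by omega)]
      have hk2 : k j' = (k j' - 1) + 1 := by have := hk j'; omega
      refine ⟨List.replicate (k j' - 1) (s j' : WithBot α) ++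
        blocks ((((List.finRange σ).take ((j : ℕ) - 1)).reverse.map g) ++ [(⊥, 1)]), ?_⟩
      rw [hcc]
      show List.replicate (k j') (s j' : WithBot α) ++ _ = _
      conv_lhs => rw [hk2, List.replicate_succ]
      rw [List.cons_append]


variable (s : Fin σ → α) (hs : StrictMono s) (k : Fin σ → ℕ) (hk : ∀ j, 2 ≤ k j)

lemma blocks_append' (L₁ L₂ : List (WithBot α × ℕ)) :
    blocks (L₁ ++ L₂) = blocks L₁ ++ blocks L₂ := by
  simp [blocks]


lemma mem_v {a : WithBot α} (h : a ∈ blocks (BB s k)) :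
    (∃ j, a = (s j : WithBot α)) ∨ a = ⊥ := by
  obtain ⟨p, hp, rfl⟩ := mem_blocks h
  rw [BB, List.mem_append] at hp
  rcases hp with hp | hp
  · simp only [List.mem_map] at hp
    obtain ⟨i, _, rfl⟩ := hp
    exact Or.inl ⟨i, rfl⟩
  · simp only [List.mem_singleton] at hp
    subst hp
    exact Or.inr rfl


include hs hk

lemma multOf_BB (j : Fin σ) : multOf (BB s k) (s j : WithBot α) = k j := by
  obtain ⟨L₁, L₂, hB, hL₁, T, hT⟩ := BB_decomp s hs k hk j
  rw [hB]
  exact multOf_append_of_not_mem hL₁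

lemma nextOf_BB (j : Fin σ) : nextOf (BB s k) (s j : WithBot α) = cc s j := by
  obtain ⟨L₁, L₂, hB, hL₁, T, hT⟩ := BB_decomp s hs k hk j
  rw [hB, nextOf_append_of_not_mem hL₁, hT]
  rfl

lemma multOf_BB_bot : multOf (BB s k) ⊥ = (1 : ℕ) := by
  rw [BB]
  exact multOf_append_of_not_mem (fun p hp => by
    simp only [List.mem_map] at hp
    obtain ⟨i, _, rfl⟩ := hp
    exact WithBot.coe_ne_bot)

lemma block_cc_infix (j : Fin σ) :
    (List.replicate (k j) (s j : WithBot α) ++ [cc s j]) <:+: blocks (BB s k) := by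
  obtain ⟨L₁, L₂, hB, hL₁, T, hT⟩ := BB_decomp s hs k hk j
  rw [hB, blocks_append', blocks_cons, hT]
  refine ⟨blocks L₁, T, ?_⟩
  simp

lemma rep_cc_infix (j : Fin σ) {m : ℕ} (hm : m ≤ k j) :
    (List.replicate m (s j : WithBot α) ++ [cc s j]) <:+: blocks (BB s k) := by
  refine List.IsInfix.trans (l₂ := List.replicate (k j) (s j : WithBot α) ++ [cc s j])
    ?_ (block_cc_infix s hs k hk j)
  refine (List.IsSuffix.isInfix ⟨List.replicate (k j - m) (s j : WithBot α), ?_⟩)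
  rw [← List.append_assoc, ← List.replicate_add]
  congr 2
  omega

lemma rep_infix (j : Fin σ) {m : ℕ} (hm : m ≤ k j) :
    List.replicate m (s j : WithBot α) <:+: blocks (BB s k) :=
  ((List.prefix_append _ _).isInfix).trans (rep_cc_infix s hs k hk j hm)

lemma rightExt_iff (hσ : 1 ≤ σ) (y : List (WithBot α)) :
    RightExt (term (clustered s k)) y ↔
      ∃ j, (∃ m, 1 ≤ m ∧ m ≤ k j ∧ y = List.replicate m (s j : WithBot α)) ∨
        (∃ m, m ≤ k j - 1 ∧ y = List.replicate m (s j : WithBot α) ++ [cc s j]) := by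
  have hdec := pairwise_BB s hs k
  have hpos := pos_BB s k hk
  constructor
  · rintro ⟨x, a, b, rfl, hab, ha, hb⟩
    rw [← blocks_BB s k] at ha hb
    rcases eq_or_ne x [] with rfl | hx
    · simp only [List.nil_append] at ha hb ⊢
      have hmem : a ∈ blocks (BB s k) := ha.subset (List.mem_singleton_self a)
      rcases mem_v s k hmem with ⟨j, rfl⟩ | rfl
      · exact ⟨j, Or.inl ⟨1, le_refl 1, by have := hk j; omega, by simp⟩⟩
      · refine ⟨⟨0, hσ⟩, Or.inr ⟨0, by omega, ?_⟩⟩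
        have hc : cc s ⟨0, hσ⟩ = ⊥ := by unfold cc; rw [dif_neg (by simp)]
        rw [hc]
        simp
    · obtain ⟨e, m, hm, hde⟩ := exists_run_decomp x hx
      rcases hde with rfl | ⟨u, d, hdne, rfl⟩
      · have hem : e ∈ blocks (BB s k) := ha.subset
          (List.mem_append_left _ (List.mem_replicate.mpr ⟨by omega, rfl⟩))
        rcases mem_v s k hem with ⟨j, rfl⟩ | rfl
        · have Ha := run_ext hdec hpos hm ha
          have Hb := run_ext hdec hpos hm hb
          rw [multOf_BB s hs k hk, nextOf_BB s hs k hk] at Ha Hb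
          rcases Ha.2 with ⟨rfl, hlt⟩ | rfl
          · exact ⟨j, Or.inl ⟨m + 1, by omega, by omega, by rw [List.replicate_succ']⟩⟩
          · rcases Hb.2 with ⟨rfl, hlt⟩ | rfl
            · exact ⟨j, Or.inr ⟨m, by omega, rfl⟩⟩
            · exact absurd rfl hab
        · have Ha := run_ext hdec hpos hm ha
          have Hb := run_ext hdec hpos hm hb
          rw [multOf_BB_bot s hs k hk] at Ha Hb
          rcases Ha.2 with ⟨rfl, hlt⟩ | rfl
          · omega
          · rcases Hb.2 with ⟨rfl, hlt⟩ | heq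
            · omega
            · exact absurd heq.symm hab
      · have ha' : d :: (List.replicate m e ++ [a]) <:+: blocks (BB s k) :=
          (List.IsSuffix.isInfix ⟨u, by simp⟩).trans ha
        have hb' : d :: (List.replicate m e ++ [b]) <:+: blocks (BB s k) :=
          (List.IsSuffix.isInfix ⟨u, by simp⟩).trans hb
        have h1 := det_ext hdec hpos hdne hm ha'
        have h2 := det_ext hdec hpos hdne hm hb'
        exact absurd (h1.trans h2.symm) hab
  · rintro ⟨j, ⟨m, hm1, hmk, rfl⟩ | ⟨m, hmk, rfl⟩⟩
    · have hrepm : List.replicate (m - 1) (s j : WithBot α) ++ [(s j : WithBot α)]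
          = List.replicate m (s j : WithBot α) := by
        rw [← List.replicate_succ']
        congr 1
        omega
      refine ⟨List.replicate (m - 1) (s j : WithBot α), (s j : WithBot α), cc s j,
        hrepm.symm, (cc_lt s hs j).ne', ?_, ?_⟩
      · rw [hrepm, ← blocks_BB s k]
        exact rep_infix s hs k hk j hmk
      · rw [← blocks_BB s k]
        exact rep_cc_infix s hs k hk j (by omega)
    · refine ⟨List.replicate m (s j : WithBot α), cc s j, (s j : WithBot α),
        rfl, (cc_lt s hs j).ne, ?_, ?_⟩
      · rw [← blocks_BB s k]
        exact rep_cc_infix s hs k hk j (by omega)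
      · rw [← blocks_BB s k, ← List.replicate_succ']
        exact rep_infix s hs k hk j (by have := hk j; omega)

lemma superMax_iff (hσ : 1 ≤ σ) (y : List (WithBot α)) :
    SuperMax (term (clustered s k)) y ↔
      ∃ j, y = List.replicate (k j) (s j : WithBot α) ∨
        y = List.replicate (k j - 1) (s j : WithBot α) ++ [cc s j] := by
  constructor
  · rintro ⟨hre, hmax⟩
    obtain ⟨j, hc⟩ := (rightExt_iff s hs k hk hσ _).mp hre
    rcases hc with ⟨m, hm1, hmk, rfl⟩ | ⟨m, hmk, rfl⟩
    · have hz : RightExt (term (clustered s k)) (List.replicate (k j) (s j : WithBot α)) :=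
        (rightExt_iff s hs k hk hσ _).mpr ⟨j, Or.inl ⟨k j, by have := hk j; omega, le_refl _, rfl⟩⟩
      have hsuf : List.replicate m (s j : WithBot α) <:+ List.replicate (k j) (s j : WithBot α) :=
        ⟨List.replicate (k j - m) (s j : WithBot α), by rw [← List.replicate_add]; congr 1; omega⟩
      exact ⟨j, Or.inl (hmax _ hz hsuf).symm⟩
    · have hz : RightExt (term (clustered s k))
          (List.replicate (k j - 1) (s j : WithBot α) ++ [cc s j]) :=
        (rightExt_iff s hs k hk hσ _).mpr ⟨j, Or.inr ⟨k j - 1, le_refl _, rfl⟩⟩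
      have hsuf : List.replicate m (s j : WithBot α) ++ [cc s j]
          <:+ List.replicate (k j - 1) (s j : WithBot α) ++ [cc s j] := by
        refine ⟨List.replicate (k j - 1 - m) (s j : WithBot α), ?_⟩
        rw [← List.append_assoc, ← List.replicate_add]
        congr 2
        omega
      exact ⟨j, Or.inr (hmax _ hz hsuf).symm⟩
  · rintro ⟨j, hy | hy⟩ <;> subst hy
    · refine ⟨(rightExt_iff s hs k hk hσ _).mpr
        ⟨j, Or.inl ⟨k j, by have := hk j; omega, le_refl _, rfl⟩⟩, ?_⟩
      intro z hz hsuf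
      obtain ⟨i, hci⟩ := (rightExt_iff s hs k hk hσ _).mp hz
      rcases hci with ⟨m', h1, h2, rfl⟩ | ⟨m', h2, rfl⟩
      · have hpre := List.reverse_prefix.mpr hsuf
        rw [List.reverse_replicate, List.reverse_replicate] at hpre
        have h0 := hpre.getElem (i := 0) (by have := hk j; simp only [List.length_cons, List.length_replicate]; omega)
        rw [List.getElem_replicate, List.getElem_replicate] at h0
        obtain rfl : j = i := hs.injective (WithBot.coe_inj.mp h0)
        have hlen := hsuf.length_le
        simp only [List.length_replicate] at hlen
        congr 1
        omega
      · exfalso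
        have hpre := List.reverse_prefix.mpr hsuf
        rw [List.reverse_append, List.reverse_replicate, List.reverse_singleton,
          List.reverse_replicate, List.singleton_append] at hpre
        have hlen := hpre.length_le
        simp only [List.length_replicate, List.length_cons] at hlen
        have h1' := hpre.getElem (i := 1) (by have := hk j; simp only [List.length_cons, List.length_replicate]; omega)
        rw [List.getElem_replicate, List.getElem_cons_succ, List.getElem_replicate] at h1'
        obtain rfl : j = i := hs.injective (WithBot.coe_inj.mp h1')
        have h0 := hpre.getElem (i := 0) (by have := hk j; simp only [List.length_cons, List.length_replicate]; omega)
        rw [List.getElem_replicate, List.getElem_cons_zero] at h0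
        exact (cc_lt s hs j).ne' h0
    · refine ⟨(rightExt_iff s hs k hk hσ _).mpr
        ⟨j, Or.inr ⟨k j - 1, le_refl _, rfl⟩⟩, ?_⟩
      intro z hz hsuf
      obtain ⟨i, hci⟩ := (rightExt_iff s hs k hk hσ _).mp hz
      rcases hci with ⟨m', h1, h2, rfl⟩ | ⟨m', h2, rfl⟩
      · exfalso
        have hpre := List.reverse_prefix.mpr hsuf
        rw [List.reverse_append, List.reverse_replicate, List.reverse_singleton,
          List.reverse_replicate, List.singleton_append] at hpre
        have hlen := hpre.length_le
        simp only [List.length_replicate, List.length_cons] at hlen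
        have h0 := hpre.getElem (i := 0) (by have := hk j; simp only [List.length_cons, List.length_replicate]; omega)
        rw [List.getElem_cons_zero, List.getElem_replicate] at h0
        have h1' := hpre.getElem (i := 1) (by have := hk j; simp only [List.length_cons, List.length_replicate]; omega)
        rw [List.getElem_cons_succ, List.getElem_replicate, List.getElem_replicate] at h1'
        obtain rfl : j = i := hs.injective (WithBot.coe_inj.mp h1')
        exact (cc_lt s hs j).ne h0
      · have hpre := List.reverse_prefix.mpr hsuf
        rw [List.reverse_append, List.reverse_replicate, List.reverse_singleton,
          List.singleton_append, List.reverse_append, List.reverse_replicate,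
          List.reverse_singleton, List.singleton_append] at hpre
        have hlen := hpre.length_le
        simp only [List.length_replicate, List.length_cons] at hlen
        have hm'1 : 1 ≤ m' := by have := hk j; omega
        have h1' := hpre.getElem (i := 1) (by have := hk j; simp only [List.length_cons, List.length_replicate]; omega)
        rw [List.getElem_cons_succ, List.getElem_cons_succ, List.getElem_replicate,
          List.getElem_replicate] at h1'
        obtain rfl : j = i := hs.injective (WithBot.coe_inj.mp h1')
        have : m' = k j - 1 := by omega
        rw [this]

end Clustered

end CSM

/-- the set of super-maximal extensions of the terminated
clustered string is exactly
`{ s_j^{k_j} } ∪ { s_j^{k_j-1} s_{j-1} : j ≥ 1 } ∪ { s_0^{k_0-1} $ }`,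
containing exactly two elements per symbol `s_j` (so 2σ in total). -/
theorem clustered_supermax_set {α : Type*} [LinearOrder α] (σ : ℕ) (hσ : 1 ≤ σ)
    (s : Fin σ → α) (hs : StrictMono s)
    (k : Fin σ → ℕ) (hk : ∀ j, 2 ≤ k j) :
    {y | SuperMax (term (clustered s k)) y} =
      {y | ∃ j : Fin σ,
        y = (List.replicate (k j) (s j)).map (fun a => (a : WithBot α))} ∪
      {y | ∃ j : Fin σ, 1 ≤ (j : ℕ) ∧
        y = (List.replicate (k j - 1) (s j) ++
              [s ⟨(j : ℕ) - 1, lt_of_le_of_lt (Nat.sub_le _ _) j.isLt⟩]).map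
            (fun a => (a : WithBot α))} ∪
      {(List.replicate (k ⟨0, hσ⟩ - 1) (s ⟨0, hσ⟩)).map
          (fun a => (a : WithBot α)) ++ [⊥]} ∧
    Set.ncard {y | SuperMax (term (clustered s k)) y} = 2 * σ := by
  classical
  have hset : {y | SuperMax (term (clustered s k)) y}
      = Set.range (fun p : Fin σ × Bool =>
          if p.2 then List.replicate (k p.1 - 1) (s p.1 : WithBot α) ++ [CSM.cc s p.1]
          else List.replicate (k p.1) (s p.1 : WithBot α)) := by
    ext y
    simp only [Set.mem_setOf_eq, Set.mem_range]
    rw [CSM.superMax_iff s hs k hk hσ]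
    constructor
    · rintro ⟨j, hy | hy⟩
      · exact ⟨(j, false), by simp [hy]⟩
      · exact ⟨(j, true), by simp [hy]⟩
    · rintro ⟨⟨j, b⟩, hy⟩
      cases b
      · exact ⟨j, Or.inl (by simpa using hy.symm)⟩
      · exact ⟨j, Or.inr (by simpa using hy.symm)⟩
  have hrep_head : ∀ (i j : Fin σ) (a b : ℕ), 1 ≤ a → 1 ≤ b →
      List.replicate a (s i : WithBot α) = List.replicate b (s j : WithBot α) → i = j := by
    intro i j a b ha hb heq
    obtain ⟨a', rfl⟩ : ∃ a', a = a' + 1 := ⟨a - 1, by omega⟩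
    obtain ⟨b', rfl⟩ : ∃ b', b = b' + 1 := ⟨b - 1, by omega⟩
    rw [List.replicate_succ, List.replicate_succ] at heq
    exact hs.injective (WithBot.coe_inj.mp ((List.cons.injEq _ _ _ _).mp heq).1)
  have tne : ∀ (i j : Fin σ), List.replicate (k i) (s i : WithBot α)
      ≠ List.replicate (k j - 1) (s j : WithBot α) ++ [CSM.cc s j] := by
    intro i j heq
    have hrev := congrArg List.reverse heq
    simp only [List.reverse_replicate, List.reverse_append, List.reverse_singleton,
      List.singleton_append] at hrev
    obtain ⟨w, hw⟩ : ∃ w, k i = w + 2 := ⟨k i - 2, by have := hk i; omega⟩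
    rw [hw] at hrev
    simp only [List.replicate_succ] at hrev
    have h0 := ((List.cons.injEq _ _ _ _).mp hrev).1
    have hrest := ((List.cons.injEq _ _ _ _).mp hrev).2
    obtain ⟨u, hu⟩ : ∃ u, k j - 1 = u + 1 := ⟨k j - 2, by have := hk j; omega⟩
    rw [hu, List.replicate_succ] at hrest
    have h1 := ((List.cons.injEq _ _ _ _).mp hrest).1
    obtain rfl : i = j := hs.injective (WithBot.coe_inj.mp h1)
    exact (CSM.cc_lt s hs i).ne' h0
  have hinj : Function.Injective (fun p : Fin σ × Bool =>
      if p.2 then List.replicate (k p.1 - 1) (s p.1 : WithBot α) ++ [CSM.cc s p.1]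
      else List.replicate (k p.1) (s p.1 : WithBot α)) := by
    rintro ⟨i, bi⟩ ⟨j, bj⟩ h
    cases bi <;> cases bj <;> simp only [if_true, if_false, Bool.false_eq_true] at h ⊢
    · obtain rfl : i = j := hrep_head i j _ _ (by have := hk i; omega) (by have := hk j; omega) h
      rfl
    · exact absurd h (tne i j)
    · exact absurd h.symm (tne j i)
    · have hrev := congrArg List.reverse h
      simp only [List.reverse_append, List.reverse_replicate, List.reverse_singleton,
        List.singleton_append] at hrev
      have hrest := ((List.cons.injEq _ _ _ _).mp hrev).2
      obtain rfl : i = j := hrep_head i j _ _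
        (by have := hk i; omega) (by have := hk j; omega) hrest
      rfl
  constructor
  · ext y
    simp only [Set.mem_setOf_eq, Set.mem_union, Set.mem_singleton_iff]
    rw [CSM.superMax_iff s hs k hk hσ]
    constructor
    · rintro ⟨j, hy | hy⟩
      · exact Or.inl (Or.inl ⟨j, by rw [hy]; simp [CSM.flatMap_coe_replicate]⟩)
      · rcases Nat.eq_zero_or_pos (j : ℕ) with h0 | h1
        · right
          have hj : j = ⟨0, hσ⟩ := Fin.ext h0
          subst hj
          have hc : CSM.cc s (⟨0, hσ⟩ : Fin σ) = ⊥ := by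
            unfold CSM.cc; rw [dif_neg (by simp)]
          rw [hy, hc]
          simp [CSM.flatMap_coe_replicate]
        · left; right
          refine ⟨j, h1, ?_⟩
          have hc : CSM.cc s j
              = (s ⟨(j : ℕ) - 1, lt_of_le_of_lt (Nat.sub_le _ _) j.isLt⟩ : WithBot α) := by
            unfold CSM.cc; rw [dif_pos (show 1 ≤ (j:ℕ) by omega)]
          rw [hy, hc]
          simp [CSM.flatMap_coe_replicate, List.flatMap_append]
    · rintro ((⟨j, hy⟩ | ⟨j, h1, hy⟩) | hy)
      · exact ⟨j, Or.inl (by rw [hy]; simp [CSM.flatMap_coe_replicate])⟩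
      · refine ⟨j, Or.inr ?_⟩
        have hc : CSM.cc s j
            = (s ⟨(j : ℕ) - 1, lt_of_le_of_lt (Nat.sub_le _ _) j.isLt⟩ : WithBot α) := by
          unfold CSM.cc; rw [dif_pos (show 1 ≤ (j:ℕ) by omega)]
        rw [hy, hc]
        simp [CSM.flatMap_coe_replicate, List.flatMap_append]
      · refine ⟨⟨0, hσ⟩, Or.inr ?_⟩
        have hc : CSM.cc s (⟨0, hσ⟩ : Fin σ) = ⊥ := by
          unfold CSM.cc; rw [dif_neg (by simp)]
        rw [hy, hc]
        simp [CSM.flatMap_coe_replicate]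
  · rw [hset, ← Set.image_univ, Set.ncard_image_of_injective _ hinj, Set.ncard_univ,
      Nat.card_eq_fintype_card]
    simp [mul_comm]
end

section
/- Let w_lin be the linearization of (a rotation of) any binary de Bruijn sequence of order k ≥ 2. Then the size χ of a smallest suffixient set for the terminated string w_lin $ is 2^k + 1. -/
/-- A de Bruijn sequence of order `k` over a finite alphabet `α`: a cyclic
word of length `(card α)^k` in which every word of length `k` occurs exactly
once as a cyclic length-`k` window. -/
def IsDeBruijn {α : Type*} [Fintype α] (k : ℕ) (C : List α) : Prop :=
  C.length = Fintype.card α ^ k ∧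
  ∀ x : List α, x.length = k → ∃! i, i < C.length ∧ x = (C.rotate i).take k

/-- The linearization of a rotation `U` of a de Bruijn cycle of order `k`:
append the first `k − 1` characters of `U` at the end. -/
def linz {α : Type*} (k : ℕ) (U : List α) : List α :=
  U ++ U.take (k - 1)

namespace DBH

variable {γ : Type*} {δ : Type*}

lemma infix_iff_exists (x w : List γ) :
    x <:+: w ↔ ∃ i, i + x.length ≤ w.length ∧ x = (w.drop i).take x.length := by
  constructor
  · rintro ⟨s, t, rfl⟩
    refine ⟨s.length, by simp only [List.length_append]; omega, ?_⟩
    rw [List.append_assoc, List.drop_left, List.take_left]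
  · rintro ⟨i, h1, h2⟩
    have hx : x <+: w.drop i := by rw [h2]; exact List.take_prefix _ _
    exact hx.isInfix.trans (w.drop_suffix i).isInfix

lemma infix_concat_iff (y m : List γ) (b : γ) :
    y <:+: m ++ [b] ↔ y <:+: m ∨ ∃ s, s <:+ m ∧ y = s ++ [b] := by
  constructor
  · intro h
    rcases (infix_iff_exists y (m ++ [b])).mp h with ⟨i, h1, h2⟩
    simp only [List.length_append, List.length_singleton] at h1
    by_cases hy : y = []
    · left; simp [hy]
    have hylen : 1 ≤ y.length := List.length_pos_iff.mpr hy
    have hi : i ≤ m.length := by omega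
    have hdrop : (m ++ [b]).drop i = m.drop i ++ [b] := by
      rw [List.drop_append]
      congr 1
      have : i - m.length = 0 := by omega
      simp [this]
    by_cases hle : i + y.length ≤ m.length
    · left
      rw [infix_iff_exists]
      refine ⟨i, hle, ?_⟩
      rw [hdrop, List.take_append_of_le_length
        (by simp only [List.length_drop]; omega)] at h2
      exact h2
    · right
      refine ⟨m.drop i, m.drop_suffix i, ?_⟩
      have hlen2 : (m.drop i ++ [b]).length = y.length := by
        simp [List.length_drop]; omega
      rw [hdrop, ← hlen2, List.take_length] at h2
      exact h2
  · rintro (h | ⟨s, hs, rfl⟩)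
    · exact h.trans (List.prefix_append m [b]).isInfix
    · rcases hs with ⟨t, rfl⟩
      have hsb : s ++ [b] <:+ (t ++ s) ++ [b] := ⟨t, by simp⟩
      exact hsb.isInfix

lemma exists_of_infix_map {f : γ → δ} {y : List δ} {l : List γ} (h : y <:+: l.map f) :
    ∃ x, x <:+: l ∧ y = x.map f := by
  rcases (infix_iff_exists y (l.map f)).mp h with ⟨i, h1, h2⟩
  refine ⟨(l.drop i).take y.length, ?_, ?_⟩
  · exact (List.take_prefix _ _).isInfix.trans (l.drop_suffix i).isInfix
  · rw [List.map_take, List.map_drop]; exact h2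

lemma exists_of_suffix_map {f : γ → δ} {y : List δ} {l : List γ} (h : y <:+ l.map f) :
    ∃ x, x <:+ l ∧ y = x.map f := by
  rcases h with ⟨t, ht⟩
  refine ⟨l.drop t.length, l.drop_suffix _, ?_⟩
  have h2 : (l.map f).drop t.length = y := by rw [← ht, List.drop_left]
  rw [← h2, List.map_drop]

lemma suffix_eq_drop {s l : List γ} (h : s <:+ l) : s = l.drop (l.length - s.length) := by
  rcases h with ⟨t, rfl⟩
  simp [List.length_append]

lemma suffix_of_suffix_le {s t l : List γ} (hs : s <:+ l) (ht : t <:+ l)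
    (hle : s.length ≤ t.length) : s <:+ t := by
  have h := List.prefix_of_prefix_length_le (List.reverse_prefix.mpr hs)
    (List.reverse_prefix.mpr ht) (by simpa using hle)
  exact List.reverse_prefix.mp h

lemma setLen_eq (k : ℕ) :
    {x : List (Fin 2) | x.length = k} =
      ↑((Finset.univ : Finset (Fin k → Fin 2)).image List.ofFn) := by
  ext x
  simp only [Set.mem_setOf_eq, Finset.coe_image, Set.mem_image, Finset.mem_coe,
    Finset.mem_univ, true_and, Finset.coe_univ, Set.image_univ, Set.mem_range]
  constructor
  · intro h; subst h; exact ⟨x.get, List.ofFn_get x⟩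
  · rintro ⟨f, rfl⟩; simp

lemma setLen_finite (k : ℕ) : {x : List (Fin 2) | x.length = k}.Finite := by
  rw [setLen_eq]; exact Finset.finite_toSet _

lemma setLen_ncard (k : ℕ) : {x : List (Fin 2) | x.length = k}.ncard = 2 ^ k := by
  rw [setLen_eq, Set.ncard_coe_finset,
    Finset.card_image_of_injective _ List.ofFn_injective]
  simp

variable {k : ℕ} {U : List (Fin 2)}

lemma wlen (hk : 2 ≤ k) (hU1 : U.length = 2^k) : (linz k U).length = 2^k + (k-1) := by
  have hkL : k ≤ 2^k := (Nat.lt_two_pow_self (n := k)).le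
  simp only [linz, List.length_append, List.length_take, hU1]
  omega

lemma window (hk : 2 ≤ k) (hU1 : U.length = 2^k) {i : ℕ} (hi : i < 2^k) :
    ((linz k U).drop i).take k = (U.rotate i).take k := by
  have hkL : k ≤ 2^k := (Nat.lt_two_pow_self (n := k)).le
  have hiU : i ≤ U.length := by omega
  rw [List.rotate_eq_drop_append_take hiU]
  show ((U ++ U.take (k-1)).drop i).take k = (U.drop i ++ U.take i).take k
  rw [List.drop_append]
  have h0 : i - U.length = 0 := by omega
  rw [h0, List.drop_zero]
  rw [List.take_append, List.take_append]
  congr 1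
  rw [List.take_take, List.take_take]
  congr 1
  simp only [List.length_drop, hU1]
  omega

lemma occ_unique (hk : 2 ≤ k) (hU1 : U.length = 2^k)
    (hU2 : ∀ x : List (Fin 2), x.length = k → ∃! i, i < 2^k ∧ x = (U.rotate i).take k)
    (x : List (Fin 2)) (hx : x.length = k) :
    ∃! i, i + k ≤ (linz k U).length ∧ x = ((linz k U).drop i).take k := by
  have hw := wlen hk hU1
  have hkL : k ≤ 2^k := (Nat.lt_two_pow_self (n := k)).le
  obtain ⟨j, ⟨hj, hxj⟩, hju⟩ := hU2 x hx
  refine ⟨j, ⟨by omega, by rw [window hk hU1 hj]; exact hxj⟩, ?_⟩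
  rintro i ⟨hile, hxi⟩
  have hi : i < 2^k := by omega
  exact hju i ⟨hi, by rw [← window hk hU1 hi]; exact hxi⟩

lemma occ_all (hk : 2 ≤ k) (hU1 : U.length = 2^k)
    (hU2 : ∀ x : List (Fin 2), x.length = k → ∃! i, i < 2^k ∧ x = (U.rotate i).take k)
    (x : List (Fin 2)) (hx : x.length ≤ k) : x <:+: linz k U := by
  set z := x ++ List.replicate (k - x.length) 0 with hz
  have hzlen : z.length = k := by simp [hz]; omega
  obtain ⟨i, ⟨hi, hxi⟩, _⟩ := occ_unique hk hU1 hU2 z hzlen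
  have hzin : z <:+: linz k U := by
    rw [infix_iff_exists]
    exact ⟨i, by omega, by rw [hzlen]; exact hxi⟩
  exact (List.prefix_append x _).isInfix.trans hzin

lemma eq_of_infix_take_eq (hk : 2 ≤ k) (hU1 : U.length = 2^k)
    (hU2 : ∀ x : List (Fin 2), x.length = k → ∃! i, i < 2^k ∧ x = (U.rotate i).take k)
    {z₁ z₂ : List (Fin 2)} (h₁ : z₁ <:+: linz k U) (h₂ : z₂ <:+: linz k U)
    (hlen : z₁.length = z₂.length) (hkle : k ≤ z₁.length)
    (htake : z₁.take k = z₂.take k) : z₁ = z₂ := by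
  rcases (infix_iff_exists _ _).mp h₁ with ⟨i₁, hi₁, he₁⟩
  rcases (infix_iff_exists _ _).mp h₂ with ⟨i₂, hi₂, he₂⟩
  have t₁ : z₁.take k = (((linz k U).drop i₁)).take k := by
    have h := congrArg (List.take k) he₁
    rwa [List.take_take, min_eq_left hkle] at h
  have t₂ : z₂.take k = (((linz k U).drop i₂)).take k := by
    have h := congrArg (List.take k) he₂
    rwa [List.take_take, min_eq_left (hlen ▸ hkle)] at h
  have hlenk : (z₁.take k).length = k := by
    rw [List.length_take]; omega
  obtain ⟨j, _, hju⟩ := occ_unique hk hU1 hU2 (z₁.take k) hlenk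
  have e₁ : i₁ = j := hju i₁ ⟨by omega, t₁⟩
  have e₂ : i₂ = j := hju i₂ ⟨by omega, by rw [htake]; exact t₂⟩
  rw [he₁, he₂, hlen, e₁, e₂]

lemma suffix_not_extendable (hk : 2 ≤ k) (hU1 : U.length = 2^k)
    (hU2 : ∀ x : List (Fin 2), x.length = k → ∃! i, i < 2^k ∧ x = (U.rotate i).take k)
    {x : List (Fin 2)} (hxs : x <:+ linz k U) (hkle : k ≤ x.length)
    {b : Fin 2} (hocc : x ++ [b] <:+: linz k U) : False := by
  set w := linz k U with hw
  set i₀ := w.length - x.length with hi₀def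
  have hxlen := hxs.length_le
  have hxdrop : x = w.drop i₀ := suffix_eq_drop hxs
  have hx0 : x.take k = (w.drop i₀).take k := by rw [← hxdrop]
  have hi₀ : i₀ + k ≤ w.length := by omega
  rcases (infix_iff_exists _ _).mp hocc with ⟨i₁, hi₁, he₁⟩
  simp only [List.length_append, List.length_singleton] at hi₁
  have t₁ : (x ++ [b]).take k = x.take k := List.take_append_of_le_length hkle
  have t₂ : x.take k = (w.drop i₁).take k := by
    have h := congrArg (List.take k) he₁
    rw [List.take_take] at h
    rw [min_eq_left (by simp only [List.length_append, List.length_singleton]; omega)] at h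
    rwa [t₁] at h
  have hlenk : (x.take k).length = k := by rw [List.length_take]; omega
  obtain ⟨j, _, hju⟩ := occ_unique hk hU1 hU2 (x.take k) hlenk
  have e₀ : i₀ = j := hju i₀ ⟨hi₀, hx0⟩
  have e₁ : i₁ = j := hju i₁ ⟨by omega, t₂⟩
  omega

/-! v-level lemmas -/

def emb {α : Type*} : α → WithBot α := fun a => (a : WithBot α)

lemma term_def {α : Type*} (w : List α) : term w = w.map emb ++ [⊥] := by
  induction w with
  | nil => rfl
  | cons a t ih =>
    show emb a :: term t = emb a :: (t.map emb ++ [⊥])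
    rw [ih]

lemma emb_inj {α : Type*} : Function.Injective (emb : α → WithBot α) := by
  intro a b h
  exact WithBot.coe_inj.mp h

lemma bot_not_mem_map {α : Type*} (x : List α) : (⊥ : WithBot α) ∉ x.map emb := by
  simp only [List.mem_map, not_exists, not_and]
  intro a _
  exact fun h => (WithBot.coe_ne_bot h).elim

lemma exists_map_of_not_bot_mem {α : Type*} (y : List (WithBot α)) (h : ⊥ ∉ y) :
    ∃ x : List α, y = x.map emb := by
  induction y with
  | nil => exact ⟨[], rfl⟩
  | cons a t ih =>
    simp only [List.mem_cons, not_or] at h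
    rcases ih h.2 with ⟨x, rfl⟩
    rcases WithBot.ne_bot_iff_exists.mp (Ne.symm h.1) with ⟨b, rfl⟩
    exact ⟨b :: x, rfl⟩

lemma map_infix_v {x : List (Fin 2)} (h : x <:+: linz k U) :
    x.map emb <:+: term (linz k U) := by
  rw [term_def]
  rcases h with ⟨s, t, he⟩
  have heq : (linz k U).map emb = s.map emb ++ x.map emb ++ t.map emb := by
    rw [← List.map_append, ← List.map_append, he]
  have h2 : x.map emb <:+: (linz k U).map emb := ⟨s.map emb, t.map emb, heq.symm⟩
  exact h2.trans (List.prefix_append _ [⊥]).isInfix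

lemma map_suffix_v {s : List (Fin 2)} (h : s <:+ linz k U) :
    s.map emb ++ [⊥] <:+ term (linz k U) := by
  rw [term_def]
  rcases h with ⟨t, ht⟩
  refine ⟨t.map emb, ?_⟩
  rw [← List.append_assoc, ← List.map_append, ht]

lemma infix_v_decomp {y : List (WithBot (Fin 2))} (h : y <:+: term (linz k U)) :
    y <:+: (linz k U).map emb ∨ ∃ s, s <:+ linz k U ∧ y = s.map emb ++ [⊥] := by
  rw [term_def] at h
  rcases (infix_concat_iff y _ ⊥).mp h with h1 | ⟨s', hs', he⟩
  · exact Or.inl h1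
  · rcases exists_of_suffix_map hs' with ⟨s, hs, rfl⟩
    exact Or.inr ⟨s, hs, he⟩

lemma bot_infix_suffix {y : List (WithBot (Fin 2))} (h : y <:+: term (linz k U))
    (hb : ⊥ ∈ y) : ∃ s, s <:+ linz k U ∧ y = s.map emb ++ [⊥] := by
  rcases infix_v_decomp h with h1 | h2
  · exact absurd (h1.subset hb) (bot_not_mem_map _)
  · exact h2

lemma binary_infix_of {z : List (Fin 2)} (h : z.map emb <:+: term (linz k U)) :
    z <:+: linz k U := by
  rcases infix_v_decomp h with h1 | ⟨s, hs, he⟩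
  · rcases exists_of_infix_map h1 with ⟨x, hx, he⟩
    rwa [List.map_injective_iff.mpr emb_inj he]
  · exfalso
    exact bot_not_mem_map z (he ▸ (List.mem_append_right _ (List.mem_singleton_self _)))

lemma p_suffix : U.take (k-1) <:+ linz k U := List.suffix_append U _

lemma p_len (hk : 2 ≤ k) (hU1 : U.length = 2^k) : (U.take (k-1)).length = k - 1 := by
  have hkL : k ≤ 2^k := (Nat.lt_two_pow_self (n := k)).le
  rw [List.length_take]; omega

lemma no_long_sentinel (hk : 2 ≤ k) (hU1 : U.length = 2^k)
    (hU2 : ∀ x : List (Fin 2), x.length = k → ∃! i, i < 2^k ∧ x = (U.rotate i).take k)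
    {x : List (Fin 2)} (hkx : k ≤ x.length) {b : Fin 2}
    (h1 : x.map emb ++ [⊥] <:+: term (linz k U))
    (h2 : x.map emb ++ [emb b] <:+: term (linz k U)) : False := by
  obtain ⟨s, hs, he⟩ := bot_infix_suffix h1 (List.mem_append_right _ (List.mem_singleton_self _))
  have hxs : x = s := by
    have h3 := List.append_inj_left' he (by rfl)
    exact List.map_injective_iff.mpr emb_inj h3
  subst hxs
  have h2' : (x ++ [b]).map emb <:+: term (linz k U) := by
    rw [List.map_append]; exact h2
  exact suffix_not_extendable hk hU1 hU2 hs hkx (binary_infix_of h2')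

lemma RE_char (hk : 2 ≤ k) (hU1 : U.length = 2^k)
    (hU2 : ∀ x : List (Fin 2), x.length = k → ∃! i, i < 2^k ∧ x = (U.rotate i).take k)
    (y : List (WithBot (Fin 2))) :
    RightExt (term (linz k U)) y ↔
      (∃ x : List (Fin 2), 1 ≤ x.length ∧ x.length ≤ k ∧ y = x.map emb) ∨
      (∃ s, s <:+ U.take (k-1) ∧ y = s.map emb ++ [⊥]) := by
  constructor
  · rintro ⟨x, a, b, rfl, hab, h1, h2⟩
    by_cases hbx : (⊥ : WithBot (Fin 2)) ∈ x
    · exfalso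
      obtain ⟨s₁, _, e₁⟩ := bot_infix_suffix h1 (List.mem_append_left _ hbx)
      obtain ⟨s₂, _, e₂⟩ := bot_infix_suffix h2 (List.mem_append_left _ hbx)
      have ea : a = ⊥ := by
        have h3 := List.append_inj_right' e₁ (by rfl)
        simpa using h3
      have eb : b = ⊥ := by
        have h3 := List.append_inj_right' e₂ (by rfl)
        simpa using h3
      exact hab (ea.trans eb.symm)
    · obtain ⟨x', rfl⟩ := exists_map_of_not_bot_mem x hbx
      have hxle : x'.length ≤ k - 1 := by
        by_contra hgt
        push_neg at hgt
        have hkx : k ≤ x'.length := by omega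
        rcases eq_or_ne a ⊥ with ha | ha
        · subst ha
          have hb : b ≠ ⊥ := Ne.symm hab
          rcases WithBot.ne_bot_iff_exists.mp hb with ⟨b', rfl⟩
          exact no_long_sentinel hk hU1 hU2 hkx h1 h2
        · rcases WithBot.ne_bot_iff_exists.mp ha with ⟨a', rfl⟩
          rcases eq_or_ne b ⊥ with hb | hb
          · subst hb
            exact no_long_sentinel hk hU1 hU2 hkx h2 h1
          · rcases WithBot.ne_bot_iff_exists.mp hb with ⟨b', rfl⟩
            have g1 : x' ++ [a'] <:+: linz k U := binary_infix_of
              (by rw [List.map_append]; exact h1)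
            have g2 : x' ++ [b'] <:+: linz k U := binary_infix_of
              (by rw [List.map_append]; exact h2)
            have heq : x' ++ [a'] = x' ++ [b'] := by
              apply eq_of_infix_take_eq hk hU1 hU2 g1 g2 (by simp)
              · simp only [List.length_append, List.length_singleton]; omega
              · rw [List.take_append_of_le_length hkx, List.take_append_of_le_length hkx]
            have hab' : a' = b' := by simpa using heq
            exact hab (by rw [hab'])
      rcases eq_or_ne a ⊥ with ha | ha
      · subst ha
        obtain ⟨s, hs, he⟩ := bot_infix_suffix h1
          (List.mem_append_right _ (List.mem_singleton_self _))
        have hxs : x' = s := by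
          have h3 := List.append_inj_left' he (by rfl)
          exact List.map_injective_iff.mpr emb_inj h3
        subst hxs
        right
        refine ⟨x', ?_, rfl⟩
        exact suffix_of_suffix_le hs p_suffix (by rw [p_len hk hU1]; omega)
      · rcases WithBot.ne_bot_iff_exists.mp ha with ⟨a', rfl⟩
        left
        refine ⟨x' ++ [a'], by simp, ?_, by rw [List.map_append, List.map_singleton]; rfl⟩
        simp only [List.length_append, List.length_singleton]
        omega
  · rintro (⟨x, hx1, hxk, rfl⟩ | ⟨s, hs, rfl⟩)
    · have hne : x ≠ [] := by
        intro h; rw [h] at hx1; simp at hx1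
      have hkey : x.dropLast.map emb ++ [emb (x.getLast hne)] = x.map emb := by
        conv_rhs => rw [← List.dropLast_append_getLast hne]
        rw [List.map_append]
        rfl
      refine ⟨x.dropLast.map emb, emb (x.getLast hne), emb (x.getLast hne + 1),
        hkey.symm, ?_, ?_, ?_⟩
      · intro h
        have h2 := emb_inj h
        have h3 : ∀ t : Fin 2, t ≠ t + 1 := by decide
        exact h3 _ h2
      · rw [hkey]
        exact map_infix_v (occ_all hk hU1 hU2 x hxk)
      · have he : x.dropLast.map emb ++ [emb (x.getLast hne + 1)]
            = (x.dropLast ++ [x.getLast hne + 1]).map emb := by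
          rw [List.map_append, List.map_singleton]
        rw [he]
        apply map_infix_v
        apply occ_all hk hU1 hU2
        simp only [List.length_append, List.length_singleton, List.length_dropLast]
        omega
    · refine ⟨s.map emb, ⊥, emb 0, rfl, ?_, ?_, ?_⟩
      · intro h
        exact WithBot.coe_ne_bot h.symm
      · exact (map_suffix_v (hs.trans p_suffix)).isInfix
      · have he : s.map emb ++ [emb 0] = (s ++ [0]).map emb := by
          rw [List.map_append, List.map_singleton]
        rw [he]
        apply map_infix_v
        apply occ_all hk hU1 hU2
        have hsl := hs.length_le
        rw [p_len hk hU1] at hsl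
        simp only [List.length_append, List.length_singleton]
        omega

lemma SM_char (hk : 2 ≤ k) (hU1 : U.length = 2^k)
    (hU2 : ∀ x : List (Fin 2), x.length = k → ∃! i, i < 2^k ∧ x = (U.rotate i).take k)
    (y : List (WithBot (Fin 2))) :
    SuperMax (term (linz k U)) y ↔
      (∃ x : List (Fin 2), x.length = k ∧ y = x.map emb) ∨
      y = (U.take (k-1)).map emb ++ [⊥] := by
  constructor
  · rintro ⟨hre, hmax⟩
    rcases (RE_char hk hU1 hU2 y).mp hre with ⟨x, hx1, hxk, rfl⟩ | ⟨s, hs, rfl⟩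
    · rcases eq_or_lt_of_le hxk with heq | hlt
      · exact Or.inl ⟨x, heq, rfl⟩
      · exfalso
        have hz : RightExt (term (linz k U)) ((0 :: x).map emb) := by
          rw [RE_char hk hU1 hU2]
          exact Or.inl ⟨0 :: x, by simp, by simp; omega, rfl⟩
        have hsuf : x.map emb <:+ (0 :: x).map emb := ⟨[emb 0], rfl⟩
        have heq2 := hmax _ hz hsuf
        have hl := congrArg List.length heq2
        simp at hl
    · have hsp : s = U.take (k-1) := by
        by_contra hne
        have hz : RightExt (term (linz k U)) ((U.take (k-1)).map emb ++ [⊥]) := by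
          rw [RE_char hk hU1 hU2]
          exact Or.inr ⟨U.take (k-1), List.suffix_refl _, rfl⟩
        rcases hs with ⟨t, ht⟩
        have hsuf : s.map emb ++ [⊥] <:+ (U.take (k-1)).map emb ++ [⊥] := by
          refine ⟨t.map emb, ?_⟩
          rw [← List.append_assoc, ← List.map_append, ht]
        have heq := hmax _ hz hsuf
        have heq2 : (U.take (k-1)).map emb = s.map emb :=
          List.append_inj_left' heq (by rfl)
        exact hne (List.map_injective_iff.mpr emb_inj heq2).symm
      exact Or.inr (by rw [hsp])
  · rintro (⟨x, hxk, rfl⟩ | rfl)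
    · constructor
      · rw [RE_char hk hU1 hU2]
        exact Or.inl ⟨x, by omega, hxk.le, rfl⟩
      · intro z hz hsuf
        have hylen : (x.map emb).length = k := by simp [hxk]
        have hzlen : z.length ≤ k := by
          rcases (RE_char hk hU1 hU2 z).mp hz with ⟨x₂, _, hxk₂, rfl⟩ | ⟨s, hs, rfl⟩
          · simpa using hxk₂
          · have hsl := hs.length_le
            rw [p_len hk hU1] at hsl
            simp only [List.length_append, List.length_singleton, List.length_map]
            omega
        have hle := hsuf.length_le
        exact (hsuf.eq_of_length (by omega)).symm
    · constructor
      · rw [RE_char hk hU1 hU2]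
        exact Or.inr ⟨U.take (k-1), List.suffix_refl _, rfl⟩
      · intro z hz hsuf
        have hylen : ((U.take (k-1)).map emb ++ [⊥]).length = k := by
          simp only [List.length_append, List.length_singleton, List.length_map,
            p_len hk hU1]
          omega
        have hzlen : z.length ≤ k := by
          rcases (RE_char hk hU1 hU2 z).mp hz with ⟨x₂, _, hxk₂, rfl⟩ | ⟨s, hs, rfl⟩
          · simpa using hxk₂
          · have hsl := hs.length_le
            rw [p_len hk hU1] at hsl
            simp only [List.length_append, List.length_singleton, List.length_map]
            omega
        have hle := hsuf.length_le
        exact (hsuf.eq_of_length (by omega)).symm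

lemma sre_val (hk : 2 ≤ k) (hU1 : U.length = 2^k)
    (hU2 : ∀ x : List (Fin 2), x.length = k → ∃! i, i < 2^k ∧ x = (U.rotate i).take k) :
    sre (term (linz k U)) = 2^k + 1 := by
  have hinj : Function.Injective (List.map (emb : Fin 2 → WithBot (Fin 2))) :=
    List.map_injective_iff.mpr emb_inj
  have hset : {y | SuperMax (term (linz k U)) y} =
      (List.map (emb : Fin 2 → WithBot (Fin 2))) '' {x : List (Fin 2) | x.length = k} ∪
      {(U.take (k-1)).map emb ++ [⊥]} := by
    ext y
    rw [Set.mem_setOf_eq, SM_char hk hU1 hU2]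
    simp only [Set.mem_union, Set.mem_image, Set.mem_setOf_eq, Set.mem_singleton_iff]
    constructor
    · rintro (⟨x, hxk, rfl⟩ | rfl)
      · exact Or.inl ⟨x, hxk, rfl⟩
      · exact Or.inr rfl
    · rintro (⟨x, hxk, rfl⟩ | rfl)
      · exact Or.inl ⟨x, hxk, rfl⟩
      · exact Or.inr rfl
  have hnotmem : (U.take (k-1)).map emb ++ [⊥] ∉
      (List.map (emb : Fin 2 → WithBot (Fin 2))) '' {x : List (Fin 2) | x.length = k} := by
    rintro ⟨x, _, he⟩
    have hmem : (⊥ : WithBot (Fin 2)) ∈ x.map emb := by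
      rw [he]; exact List.mem_append_right _ (List.mem_singleton_self _)
    exact bot_not_mem_map x hmem
  rw [sre, hset, Set.ncard_union_eq (Set.disjoint_singleton_right.mpr hnotmem)
      ((setLen_finite k).image _) (Set.finite_singleton _),
    Set.ncard_image_of_injective _ hinj, setLen_ncard, Set.ncard_singleton]

lemma rot_windows (kk c : ℕ) (C : List (Fin 2)) (hlen : C.length = 2^kk)
    (hC2 : ∀ x : List (Fin 2), x.length = kk → ∃! i, i < C.length ∧ x = (C.rotate i).take kk) :
    ∀ x : List (Fin 2), x.length = kk → ∃! i, i < 2^kk ∧ x = ((C.rotate c).rotate i).take kk := by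
  intro x hx
  set L := 2^kk with hL'
  have hL : 0 < L := by positivity
  obtain ⟨j, ⟨hj, hxj⟩, hju⟩ := hC2 x hx
  rw [hlen] at hj
  have hr : c % L < L := Nat.mod_lt _ hL
  have hrc : c % L ≤ c := Nat.mod_le _ _
  set i₀ := (j + (L - c % L)) % L with hi₀
  have hkey : (c + i₀) % L = j := by
    rw [hi₀, Nat.add_mod_mod]
    have e1 : c + (j + (L - c % L)) = L * (c / L) + (j + L) := by
      have := Nat.div_add_mod c L
      omega
    rw [e1, Nat.mul_add_mod, Nat.add_mod_right, Nat.mod_eq_of_lt hj]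
  have hrot : ∀ m, (C.rotate c).rotate m = C.rotate ((c + m) % L) := by
    intro m
    rw [List.rotate_rotate, ← hlen, List.rotate_mod]
  have hcond : ∀ i', i' < L → x = ((C.rotate c).rotate i').take kk → (c + i') % L = j := by
    intro i' _ hx'
    apply hju
    refine ⟨by rw [hlen]; exact Nat.mod_lt _ hL, ?_⟩
    rw [← hrot]; exact hx'
  refine ⟨i₀, ⟨Nat.mod_lt _ hL, ?_⟩, ?_⟩
  · rw [hrot, hkey]; exact hxj
  · rintro i ⟨hi, hxi⟩
    have e₁ := hcond i hi hxi
    have e₂ : (c + i₀) % L = j := hkey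
    have hmod : i % L = i₀ % L := Nat.ModEq.add_left_cancel' c (e₁.trans e₂.symm)
    rwa [Nat.mod_eq_of_lt hi, Nat.mod_eq_of_lt (Nat.mod_lt _ hL)] at hmod

end DBH

/-- for the linearization `w_lin` of (a rotation of) any binary
de Bruijn sequence of order k ≥ 2, the size χ of a smallest suffixient set
of the terminated string `w_lin $` is `2^k + 1`. -/
theorem binary_deBruijn_chi (k : ℕ) (hk : 2 ≤ k)
    (C : List (Fin 2)) (hC : IsDeBruijn k C) (c : ℕ) :
    chi (linz k (C.rotate c)) = 2 ^ k + 1 := by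
  obtain ⟨hC1, hC2⟩ := hC
  rw [Fintype.card_fin] at hC1
  have hU1 : (C.rotate c).length = 2^k := by rw [List.length_rotate, hC1]
  have hU2 := DBH.rot_windows k c C hC1 hC2
  exact DBH.sre_val hk hU1 hU2
end

section
/- Let w_lin be the linearization of (a rotation of) a binary de Bruijn sequence of order k ≥ 2, and let s be the suffix of w_lin of length k − 1. Then the set of super-maximal extensions of w_lin $ equals the set of super-maximal extensions of w_lin together with the single additional string s$; in particular sre(w_lin $) = sre(w_lin) + 1. -/
/- ---------------------------------------------------------------------- -/
/- Auxiliary material                                                      -/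
/- ---------------------------------------------------------------------- -/

namespace DBAux

open List

/-- Generic list lemma: a suffix equals the appropriate `drop`. -/
lemma term_eq {α : Type*} (w : List α) :
    term w = w.map (fun a : α => (a : WithBot α)) ++ [⊥] := by
  simp only [term]
  congr 1
  induction w with
  | nil => rfl
  | cons a t ih => simpa using ih

lemma suffix_eq_drop {α : Type*} {l₁ l₂ : List α} (h : l₁ <:+ l₂) :
    l₁ = l₂.drop (l₂.length - l₁.length) := by
  obtain ⟨t, rfl⟩ := h
  simp

/-- Nonempty suffixes determine the last element. -/
lemma suffix_getLast? {α : Type*} {l₁ l₂ : List α} (h : l₁ <:+ l₂) (h1 : l₁ ≠ []) :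
    l₂.getLast? = l₁.getLast? := by
  obtain ⟨t, rfl⟩ := h
  rw [List.getLast?_append]
  obtain ⟨a, ha⟩ := Option.isSome_iff_exists.mp (List.getLast?_isSome.mpr h1)
  rw [ha]; rfl

/-- Infix of a map. -/
lemma infix_map_iff {α β : Type*} {f : α → β} {u : List β} {l : List α} :
    u <:+: l.map f ↔ ∃ x, x <:+: l ∧ u = x.map f := by
  constructor
  · rintro ⟨s, t, h⟩
    rw [List.append_assoc] at h
    obtain ⟨l₁, l₂, rfl, hs, h2⟩ := List.map_eq_append_iff.mp h.symm
    obtain ⟨l₃, l₄, rfl, hu, ht⟩ := List.map_eq_append_iff.mp h2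
    exact ⟨l₃, ⟨l₁, l₄, by simp⟩, hu.symm⟩
  · rintro ⟨x, hx, rfl⟩
    exact hx.map f

/-- Suffix of a map. -/
lemma suffix_map_iff {α β : Type*} {f : α → β} {u : List β} {l : List α} :
    u <:+ l.map f ↔ ∃ x, x <:+ l ∧ u = x.map f := by
  constructor
  · rintro ⟨s, h⟩
    obtain ⟨l₁, l₂, rfl, hs, hu⟩ := List.map_eq_append_iff.mp h.symm
    exact ⟨l₂, ⟨l₁, rfl⟩, hu.symm⟩
  · rintro ⟨x, ⟨s, rfl⟩, rfl⟩
    exact ⟨s.map f, by simp⟩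

/-- Infixes of `l ++ [c]`. -/
lemma infix_concat_iff {α : Type*} {u l : List α} {c : α} :
    u <:+: l ++ [c] ↔ u <:+: l ∨ ∃ u', u = u' ++ [c] ∧ u' <:+ l := by
  constructor
  · rintro ⟨s, t, h⟩
    rcases List.eq_nil_or_concat t with rfl | ⟨t₀, c₀, rfl⟩
    · rcases List.eq_nil_or_concat u with rfl | ⟨u₀, c₁, rfl⟩
      · exact Or.inl List.nil_infix
      · simp only [List.concat_eq_append, List.append_nil, List.append_assoc] at h
        rw [← List.append_assoc] at h
        obtain ⟨h1, h2⟩ := List.append_inj' h (by simp)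
        simp only [List.cons.injEq, and_true] at h2
        subst h2
        exact Or.inr ⟨u₀, by simp, ⟨s, h1⟩⟩
    · simp only [List.concat_eq_append] at h
      rw [← List.append_assoc] at h
      obtain ⟨h1, _⟩ := List.append_inj' h (by simp)
      exact Or.inl ⟨s, t₀, h1⟩
  · rintro (h | ⟨u', rfl, ⟨s, hs⟩⟩)
    · exact h.trans ⟨[], [c], by simp⟩
    · exact ⟨s, [], by rw [List.append_nil, ← List.append_assoc, hs]⟩

/-- A `take` of a `drop` is an infix. -/
lemma take_drop_infix {α : Type*} (l : List α) (i m : ℕ) :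
    (l.drop i).take m <:+: l :=
  List.infix_iff_prefix_suffix.mpr ⟨l.drop i, List.take_prefix _ _, List.drop_suffix _ _⟩

/-- Arithmetic helper for rotations. -/
lemma mod_helper {n c j : ℕ} (hn : 0 < n) (hj : j < n) :
    (c + (j + (n - c % n)) % n) % n = j := by
  have h1 : (c + (j + (n - c % n)) % n) % n = (c + (j + (n - c % n))) % n :=
    (Nat.mod_modEq (j + (n - c % n)) n).add_left c
  have hd := Nat.div_add_mod c n
  have hr : c % n < n := Nat.mod_lt _ hn
  have h2 : c + (j + (n - c % n)) = j + n * (c / n + 1) := by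
    have h3 : n * (c / n + 1) = n * (c / n) + n := by ring
    omega
  rw [h1, h2, Nat.add_mul_mod_self_left, Nat.mod_eq_of_lt hj]

lemma rot_cancel {n c i₁ i₂ : ℕ} (h1 : i₁ < n) (h2 : i₂ < n)
    (h : (c + i₁) % n = (c + i₂) % n) : i₁ = i₂ := by
  have h3 : i₁ % n = i₂ % n := Nat.ModEq.add_left_cancel' c h
  rwa [Nat.mod_eq_of_lt h1, Nat.mod_eq_of_lt h2] at h3

/-- The de Bruijn window property transfers to any rotation. -/
lemma deBruijn_rotate {k : ℕ} {C : List (Fin 2)} (hC : IsDeBruijn k C) (c : ℕ)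
    (hn : 0 < C.length) :
    ∀ x : List (Fin 2), x.length = k →
      ∃! i, i < (C.rotate c).length ∧ x = ((C.rotate c).rotate i).take k := by
  intro x hx
  obtain ⟨j, ⟨hj, hxj⟩, hjun⟩ := hC.2 x hx
  set n := C.length with hn'
  have key : ∀ i, (C.rotate c).rotate i = C.rotate ((c + i) % n) := by
    intro i
    rw [List.rotate_rotate, ← List.rotate_mod]
  refine ⟨(j + (n - c % n)) % n, ⟨?_, ?_⟩, ?_⟩
  · rw [List.length_rotate]
    exact Nat.mod_lt _ hn
  · rw [key, mod_helper hn hj]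
    exact hxj
  · rintro i ⟨hi, hxi⟩
    rw [List.length_rotate] at hi
    rw [key] at hxi
    have hji : (c + i) % n = j := hjun _ ⟨Nat.mod_lt _ hn, hxi⟩
    have hj2 : (c + (j + (n - c % n)) % n) % n = j := mod_helper hn hj
    exact rot_cancel hi (Nat.mod_lt _ hn) (hji.trans hj2.symm)

section Main

variable {k : ℕ} {v : List (Fin 2)}

-- H1: every binary word of length ≤ k is an infix of v.
-- H2: length-k windows occur at unique positions.
variable (hk : 2 ≤ k) (hkv : k ≤ v.length)
  (H1 : ∀ x : List (Fin 2), x.length ≤ k → x <:+: v)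
  (H2 : ∀ i j, i + k ≤ v.length → j + k ≤ v.length →
      (v.drop i).take k = (v.drop j).take k → i = j)

include hkv H2 in
/-- No word of length ≥ k is right-maximal in `v`. -/
lemma not_rightmax_long {x : List (Fin 2)} {a b : Fin 2} (hx : k ≤ x.length)
    (ha : x ++ [a] <:+: v) (hb : x ++ [b] <:+: v) : a = b := by
  obtain ⟨s₁, t₁, h₁⟩ := ha
  obtain ⟨s₂, t₂, h₂⟩ := hb
  have len1 : s₁.length + k ≤ v.length := by
    have := congrArg List.length h₁
    simp at this
    omega
  have len2 : s₂.length + k ≤ v.length := by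
    have := congrArg List.length h₂
    simp at this
    omega
  have win : ∀ (s t : List (Fin 2)) (c : Fin 2), s ++ (x ++ [c]) ++ t = v →
      (v.drop s.length).take k = x.take k := by
    intro s t c h
    rw [← h, List.append_assoc, List.drop_left, List.append_assoc,
      List.take_append]
    have : k - x.length = 0 := by omega
    rw [this]
    simp
  have hpos : s₁.length = s₂.length :=
    H2 _ _ len1 len2 (by rw [win s₁ t₁ a h₁, win s₂ t₂ b h₂])
  have hs : s₁ = s₂ := by
    have e1 : v.take s₁.length = s₁ := by rw [← h₁, List.append_assoc, List.take_left]
    have e2 : v.take s₂.length = s₂ := by rw [← h₂, List.append_assoc, List.take_left]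
    rw [← e1, ← e2, hpos]
  subst hs
  have he : s₁ ++ (x ++ [b]) ++ t₂ = s₁ ++ (x ++ [a]) ++ t₁ := h₂.trans h₁.symm
  simp only [List.append_assoc] at he
  have h3 := List.append_cancel_left he
  have h4 := List.append_cancel_left h3
  simp only [List.singleton_append, List.cons.injEq] at h4
  exact h4.1.symm

include hkv H2 in
/-- A suffix of `v` of length ≥ k is never followed by anything. -/
lemma suffix_no_ext {x : List (Fin 2)} {a : Fin 2} (hs : x <:+ v) (hx : k ≤ x.length)
    (ha : x ++ [a] <:+: v) : False := by
  obtain ⟨s₀, h₀⟩ := hs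
  obtain ⟨s₁, t₁, h₁⟩ := ha
  have len0 : s₀.length + k ≤ v.length := by
    have := congrArg List.length h₀
    simp at this
    omega
  have len1 : s₁.length + k ≤ v.length := by
    have := congrArg List.length h₁
    simp at this
    omega
  have w0 : (v.drop s₀.length).take k = x.take k := by
    rw [← h₀, List.drop_left]
  have w1 : (v.drop s₁.length).take k = x.take k := by
    rw [← h₁, List.append_assoc, List.drop_left, List.append_assoc,
      List.take_append]
    have : k - x.length = 0 := by omega
    rw [this]
    simp
  have hpos : s₀.length = s₁.length := H2 _ _ len0 len1 (by rw [w0, w1])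
  have hs01 : s₀ = s₁ := by
    have e1 : v.take s₀.length = s₀ := by rw [← h₀, List.take_left]
    have e2 : v.take s₁.length = s₁ := by rw [← h₁, List.append_assoc, List.take_left]
    rw [← e1, ← e2, hpos]
  subst hs01
  have he : s₀ ++ (x ++ [a]) ++ t₁ = s₀ ++ x := h₁.trans h₀.symm
  have := congrArg List.length he
  simp at this

include hk H1 in
/-- Characterization of right extensions of `v`. -/
lemma rightExt_iff {y : List (Fin 2)} (hkv : k ≤ v.length)
    (H2 : ∀ i j, i + k ≤ v.length → j + k ≤ v.length →
      (v.drop i).take k = (v.drop j).take k → i = j) :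
    RightExt v y ↔ 1 ≤ y.length ∧ y.length ≤ k := by
  constructor
  · rintro ⟨x, a, b, rfl, hab, ha, hb⟩
    have : ¬ k ≤ x.length := fun h => hab (not_rightmax_long hkv H2 h ha hb)
    simp
    omega
  · rintro ⟨h1, h2⟩
    have hy : y ≠ [] := by
      intro h; rw [h] at h1; simp at h1
    set a := y.getLast hy with hadef
    refine ⟨y.dropLast, a, a + 1, (List.dropLast_append_getLast hy).symm, ?_, ?_, ?_⟩
    · have : ∀ c : Fin 2, c ≠ c + 1 := by decide
      exact this a
    · rw [List.dropLast_append_getLast hy]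
      exact H1 y h2
    · apply H1
      have := List.length_dropLast (xs := y)
      simp
      omega

include hk hkv H1 H2 in
/-- Characterization of super-maximal extensions of `v`. -/
lemma superMax_iff {y : List (Fin 2)} :
    SuperMax v y ↔ y.length = k := by
  constructor
  · rintro ⟨hre, hmax⟩
    obtain ⟨h1, h2⟩ := (rightExt_iff hk H1 hkv H2).mp hre
    by_contra hne
    have hlt : y.length < k := by omega
    have hz : RightExt v (0 :: y) := by
      rw [rightExt_iff hk H1 hkv H2]
      simp
      omega
    have := hmax _ hz (List.suffix_cons 0 y)
    have := congrArg List.length this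
    simp at this
  · intro hy
    refine ⟨(rightExt_iff hk H1 hkv H2).mpr ⟨by omega, by omega⟩, ?_⟩
    intro z hz hsuf
    obtain ⟨_, hz2⟩ := (rightExt_iff hk H1 hkv H2).mp hz
    exact (hsuf.eq_of_length_le (by omega)).symm

/- ------------------- the terminated word ------------------- -/

/-- The coercion into `WithBot (Fin 2)`. -/
local notation "f" => (fun a : Fin 2 => (a : WithBot (Fin 2)))

lemma f_inj : Function.Injective (fun a : Fin 2 => (a : WithBot (Fin 2))) :=
  fun _ _ h => WithBot.coe_injective h

lemma bot_not_mem_map (x : List (Fin 2)) : (⊥ : WithBot (Fin 2)) ∉ x.map f := by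
  simp only [List.mem_map]
  rintro ⟨a, _, ha⟩
  exact WithBot.coe_ne_bot ha

lemma map_ne_concat_bot {x : List (Fin 2)} {z : List (WithBot (Fin 2))}
    (h : x.map f = z ++ [⊥]) : False := by
  apply bot_not_mem_map x
  rw [h]
  simp

lemma map_concat_eq {x x₂ : List (Fin 2)} {b₀ : Fin 2}
    (he : x.map f ++ [((b₀ : Fin 2) : WithBot (Fin 2))] = x₂.map f) :
    x₂ = x ++ [b₀] := by
  have h2 : (x ++ [b₀]).map f = x₂.map f := by simpa using he
  exact (List.map_injective_iff.mpr f_inj h2).symm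

lemma concat_coe_ne_concat_bot {x₂ : List (Fin 2)} {z : List (WithBot (Fin 2))} {b₀ : Fin 2}
    (he : z ++ [((b₀ : Fin 2) : WithBot (Fin 2))] = x₂.map f ++ [⊥]) : False := by
  have h2 := (List.append_inj' he (by simp)).2
  simp at h2

lemma not_map_suffix_concat_bot {x : List (Fin 2)} {z : List (WithBot (Fin 2))}
    (hx : x ≠ []) (h : x.map f <:+ z ++ [⊥]) : False := by
  have hxne : x.map f ≠ [] := by simpa using hx
  have h2 := suffix_getLast? h hxne
  rw [List.getLast?_append, List.getLast?_map] at h2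
  obtain ⟨a, ha⟩ := Option.isSome_iff_exists.mp (List.getLast?_isSome.mpr hx)
  rw [ha] at h2
  simp at h2

lemma not_concat_bot_suffix_map {x₂ : List (Fin 2)} {z : List (WithBot (Fin 2))}
    (h : z ++ [⊥] <:+ x₂.map f) : False := by
  have hne : z ++ [⊥] ≠ [] := by simp
  have h2 := suffix_getLast? h hne
  rw [List.getLast?_append, List.getLast?_map] at h2
  rcases hx : x₂.getLast? with _ | a
  · rw [hx] at h2
    simp at h2
  · rw [hx] at h2
    simp at h2

/-- Infixes of `term v`. -/
lemma infix_term_iff {y : List (WithBot (Fin 2))} :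
    y <:+: term v ↔
      (∃ x : List (Fin 2), x <:+: v ∧ y = x.map f) ∨
      (∃ x : List (Fin 2), x <:+ v ∧ y = x.map f ++ [⊥]) := by
  rw [term_eq, infix_concat_iff]
  constructor
  · rintro (h | ⟨u', rfl, hu⟩)
    · obtain ⟨x, hx, rfl⟩ := infix_map_iff.mp h
      exact Or.inl ⟨x, hx, rfl⟩
    · obtain ⟨x, hx, rfl⟩ := suffix_map_iff.mp hu
      exact Or.inr ⟨x, hx, rfl⟩
  · rintro (⟨x, hx, rfl⟩ | ⟨x, hx, rfl⟩)
    · exact Or.inl (hx.map f)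
    · exact Or.inr ⟨x.map f, rfl, hx.map f⟩

include hk hkv H1 H2 in
/-- Characterization of right extensions of `term v`. -/
lemma rightExt_term_iff {y : List (WithBot (Fin 2))} :
    RightExt (term v) y ↔
      (∃ x : List (Fin 2), y = x.map f ∧ 1 ≤ x.length ∧ x.length ≤ k) ∨
      (∃ x : List (Fin 2), y = x.map f ++ [⊥] ∧ x <:+ v ∧ x.length ≤ k - 1) := by
  constructor
  · rintro ⟨x', a, b, rfl, hab, ha, hb⟩
    induction a using WithBot.recBotCoe with
    | bot =>
      -- a = ⊥ : so x' ++ [⊥] is an infix, hence x' = map x with x a suffix of v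
      rcases infix_term_iff.mp ha with ⟨x, _, hx2⟩ | ⟨x, hx1, hx2⟩
      · exact absurd hx2.symm map_ne_concat_bot
      · have hx' : x' = x.map f := by
          have := List.append_inj' hx2 (by simp)
          exact this.1
        subst hx'
        -- b ≠ ⊥, so b = ↑b₀
        induction b using WithBot.recBotCoe with
        | bot => exact absurd rfl hab
        | coe b₀ =>
          have hb' : (x ++ [b₀]) <:+: v := by
            rcases infix_term_iff.mp hb with ⟨x₂, hx₂, he⟩ | ⟨x₂, _, he⟩
            · rwa [← map_concat_eq he]
            · exact absurd he concat_coe_ne_concat_bot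
          have hlen : x.length ≤ k - 1 := by
            by_contra h
            exact suffix_no_ext hkv H2 hx1 (by omega) hb'
          exact Or.inr ⟨x, rfl, hx1, hlen⟩
    | coe a₀ =>
      rcases infix_term_iff.mp ha with ⟨x, hx1, hx2⟩ | ⟨x, _, hx2⟩
      · -- hx2 : x' ++ [↑a₀] = x.map f ; so x = x₀ ++ [a₀]
        rcases List.eq_nil_or_concat x with rfl | ⟨x₀, c₀, rfl⟩
        · simp at hx2
        · rw [List.concat_eq_append] at hx1
          simp only [List.concat_eq_append, List.map_append, List.map_cons,
            List.map_nil] at hx2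
          obtain ⟨hx'1, hx'2⟩ := List.append_inj' hx2 (by simp)
          simp only [List.cons.injEq, and_true] at hx'2
          have hc : c₀ = a₀ := by exact_mod_cast hx'2.symm
          subst hc
          subst hx'1
          -- now establish x₀.length ≤ k - 1
          have hlen : x₀.length + 1 ≤ k := by
            induction b using WithBot.recBotCoe with
            | bot =>
              -- x₀ suffix of v via map x₀ ++ [⊥] infix
              rcases infix_term_iff.mp hb with ⟨x₂, _, he⟩ | ⟨x₂, hx₂, he⟩
              · exact absurd he.symm map_ne_concat_bot
              · have : x₂ = x₀ := by
                  have := List.append_inj' he (by simp)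
                  exact (List.map_injective_iff.mpr f_inj this.1).symm
                subst this
                by_contra h
                exact suffix_no_ext hkv H2 hx₂ (by omega) hx1
            | coe b₀ =>
              have hb' : (x₀ ++ [b₀]) <:+: v := by
                rcases infix_term_iff.mp hb with ⟨x₂, hx₂, he⟩ | ⟨x₂, _, he⟩
                · rwa [← map_concat_eq he]
                · exact absurd he concat_coe_ne_concat_bot
              have hab' : c₀ ≠ b₀ := by
                intro h; exact hab (by rw [h])
              by_contra h
              exact hab' (not_rightmax_long hkv H2 (by omega) hx1 hb')
          exact Or.inl ⟨x₀ ++ [c₀], by simp, by simp, by simpa using hlen⟩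
      · exact absurd hx2 concat_coe_ne_concat_bot
  · rintro (⟨x, rfl, h1, h2⟩ | ⟨x, rfl, h1, h2⟩)
    · obtain ⟨x₀, a, b, he, hab, ha, hb⟩ :=
        (rightExt_iff hk H1 hkv H2 (y := x)).mpr ⟨h1, h2⟩
      refine ⟨x₀.map f, ↑a, ↑b, by rw [he]; simp, by simpa using hab, ?_, ?_⟩
      · have hme : (x₀ ++ [a]).map f = x₀.map f ++ [((a : Fin 2) : WithBot (Fin 2))] := by
          simp
        rw [← hme]
        exact infix_term_iff.mpr (Or.inl ⟨x₀ ++ [a], ha, rfl⟩)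
      · have hme : (x₀ ++ [b]).map f = x₀.map f ++ [((b : Fin 2) : WithBot (Fin 2))] := by
          simp
        rw [← hme]
        exact infix_term_iff.mpr (Or.inl ⟨x₀ ++ [b], hb, rfl⟩)
    · refine ⟨x.map f, ⊥, ↑(0 : Fin 2), rfl, by simp, ?_, ?_⟩
      · exact infix_term_iff.mpr (Or.inr ⟨x, h1, rfl⟩)
      · have hme : (x ++ [0]).map f = x.map f ++ [((0 : Fin 2) : WithBot (Fin 2))] := by
          simp
        rw [← hme]
        refine infix_term_iff.mpr (Or.inl ⟨x ++ [0], H1 _ ?_, rfl⟩)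
        simp
        omega

include hk hkv H1 H2 in
/-- Characterization of super-maximal extensions of `term v`. -/
lemma superMax_term_iff {y : List (WithBot (Fin 2))} :
    SuperMax (term v) y ↔
      (∃ x : List (Fin 2), y = x.map f ∧ x.length = k) ∨
      y = (v.drop (v.length - (k - 1))).map f ++ [⊥] := by
  set s : List (Fin 2) := v.drop (v.length - (k - 1)) with hs
  have hs_suf : s <:+ v := List.drop_suffix _ _
  have hs_len : s.length = k - 1 := by
    rw [hs, List.length_drop]
    omega
  have hsuf_uniq : ∀ x : List (Fin 2), x <:+ v → x.length = k - 1 → x = s := by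
    intro x hx hxl
    rw [suffix_eq_drop hx, hxl, hs]
  constructor
  · rintro ⟨hre, hmax⟩
    rcases (rightExt_term_iff hk hkv H1 H2).mp hre with ⟨x, rfl, h1, h2⟩ | ⟨x, rfl, h1, h2⟩
    · -- binary case: must have length k
      left
      refine ⟨x, rfl, ?_⟩
      by_contra hne
      have hlt : x.length < k := by omega
      have hz : RightExt (term v) ((0 :: x).map f) := by
        rw [rightExt_term_iff hk hkv H1 H2]
        left
        exact ⟨0 :: x, rfl, by simp, by simp; omega⟩
      have hsuf : x.map f <:+ (0 :: x).map f := by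
        simp only [List.map_cons]
        exact List.suffix_cons _ _
      have := hmax _ hz hsuf
      have := congrArg List.length this
      simp at this
    · -- sentinel case: must have length k - 1, hence x = s
      right
      have hxl : x.length = k - 1 := by
        by_contra hne
        have hlt : x.length < k - 1 := by omega
        -- extend the suffix by one character
        set x' : List (Fin 2) := v.drop (v.length - x.length - 1) with hx'
        have hx'_suf : x' <:+ v := List.drop_suffix _ _
        have hx'_len : x'.length = x.length + 1 := by
          rw [hx', List.length_drop]
          omega
        have hxx' : x <:+ x' := by
          have h1' : x = x'.drop 1 := by
            rw [suffix_eq_drop h1, hx', List.drop_drop]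
            congr 1
            omega
          rw [h1']
          exact List.drop_suffix _ _
        have hz : RightExt (term v) (x'.map f ++ [⊥]) := by
          rw [rightExt_term_iff hk hkv H1 H2]
          right
          exact ⟨x', rfl, hx'_suf, by omega⟩
        have hsuf : x.map f ++ [⊥] <:+ x'.map f ++ [⊥] := by
          obtain ⟨t, ht⟩ := hxx'.map f
          exact ⟨t, by rw [← List.append_assoc, ht]⟩
        have := hmax _ hz hsuf
        have := congrArg List.length this
        simp [hx'_len] at this
      rw [hsuf_uniq x h1 hxl]
  · rintro (⟨x, rfl, hxl⟩ | rfl)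
    · -- map x with |x| = k is super-maximal
      constructor
      · rw [rightExt_term_iff hk hkv H1 H2]
        exact Or.inl ⟨x, rfl, by omega, by omega⟩
      · intro z hz hsuf
        rcases (rightExt_term_iff hk hkv H1 H2).mp hz with ⟨x₂, rfl, h1, h2⟩ | ⟨x₂, rfl, h1, h2⟩
        · refine (hsuf.eq_of_length_le ?_).symm
          simp only [List.length_map]
          omega
        · exact absurd hsuf
            (fun h => not_map_suffix_concat_bot (by
              intro hnil
              rw [hnil] at hxl
              simp at hxl
              omega) h)
    · -- s$ is super-maximal
      constructor
      · rw [rightExt_term_iff hk hkv H1 H2]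
        exact Or.inr ⟨s, rfl, hs_suf, by omega⟩
      · intro z hz hsuf
        rcases (rightExt_term_iff hk hkv H1 H2).mp hz with ⟨x₂, rfl, h1, h2⟩ | ⟨x₂, rfl, h1, h2⟩
        · exact absurd hsuf not_concat_bot_suffix_map
        · -- z = map x₂ ++ [⊥], s$ suffix ⇒ x₂ = s
          obtain ⟨t, ht⟩ := hsuf
          rw [← List.append_assoc] at ht
          have h3 := (List.append_inj' ht (by simp)).1
          have hms : s.map f <:+ x₂.map f := ⟨t, h3⟩
          obtain ⟨x₃, hx₃1, hx₃2⟩ := suffix_map_iff.mp hms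
          have : x₃ = s := (List.map_injective_iff.mpr f_inj hx₃2).symm
          subst this
          have hlen : x₂.length = k - 1 := by
            have := hx₃1.length_le
            omega
        
          rw [hsuf_uniq x₂ h1 hlen]

end Main

end DBAux

/-- for the linearization `w_lin` of (a rotation of) a binary
de Bruijn sequence of order k ≥ 2, with `s` the suffix of `w_lin` of length
k − 1, the super-maximal extensions of `w_lin $` are exactly the
super-maximal extensions of `w_lin` together with the single additional
string `s$`; in particular `sre(w_lin $) = sre(w_lin) + 1`. -/
theorem binary_deBruijn_supermax_term (k : ℕ) (hk : 2 ≤ k)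
    (C : List (Fin 2)) (hC : IsDeBruijn k C) (c : ℕ)
    (wlin : List (Fin 2)) (hw : wlin = linz k (C.rotate c)) :
    {y | SuperMax (term wlin) y} =
      (fun l : List (Fin 2) => l.map (fun a => (a : WithBot (Fin 2)))) ''
        {y | SuperMax wlin y} ∪
      {(wlin.drop (wlin.length - (k - 1))).map
          (fun a => (a : WithBot (Fin 2))) ++ [⊥]} ∧
    sre (term wlin) = sre wlin + 1 := by
  classical
  have hfe : ∀ l : List (Fin 2), l.map (fun a => (a : WithBot (Fin 2))) =
      l.map (fun a : Fin 2 => (a : WithBot (Fin 2))) := by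
    intro l
    induction l with
    | nil => rfl
    | cons a t ih => simpa using ih
  simp only [hfe]
  -- basic length facts
  have hCpos : 0 < C.length := by
    rw [hC.1]
    positivity
  set w : List (Fin 2) := C.rotate c with hwdef
  have hwn : w.length = C.length := List.length_rotate _ _
  have hkn : k ≤ w.length := by
    rw [hwn, hC.1]
    have := Nat.lt_two_pow_self (n := k)
    simpa [Fintype.card_fin] using this.le
  have huniq := DBAux.deBruijn_rotate hC c hCpos
  have hcrl : (C.rotate c).length = w.length := rfl
  -- wlin facts
  have hwlin : wlin = w ++ w.take (k - 1) := hw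
  have hwlen : wlin.length = w.length + (k - 1) := by
    rw [hwlin]
    simp
    omega
  have hkv : k ≤ wlin.length := by omega
  -- window identification
  have window : ∀ i, i + k ≤ wlin.length →
      (wlin.drop i).take k = (w.rotate i).take k := by
    intro i hi
    have hin : i ≤ w.length := by omega
    have hd0 : i - w.length = 0 := by omega
    rw [hwlin, List.drop_append, hd0, List.drop_zero,
      List.rotate_eq_drop_append_take hin,
      List.take_append, List.take_append]
    congr 1
    rw [List.take_take, List.take_take, List.length_drop]
    congr 1
    omega
  have H2 : ∀ i j, i + k ≤ wlin.length → j + k ≤ wlin.length →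
      (wlin.drop i).take k = (wlin.drop j).take k → i = j := by
    intro i j hi hj he
    rw [window i hi, window j hj] at he
    have hx : ((w.rotate i).take k).length = k := by
      rw [List.length_take, List.length_rotate]
      omega
    obtain ⟨m, hm, hmun⟩ := huniq _ hx
    have h1 : i = m := by
      refine (hmun i ⟨by omega, rfl⟩)
    have h2 : j = m := by
      refine (hmun j ⟨by omega, he⟩)
    omega
  have H1 : ∀ x : List (Fin 2), x.length ≤ k → x <:+: wlin := by
    intro x hx
    -- extend x to length k
    set x' : List (Fin 2) := x ++ List.replicate (k - x.length) 0 with hx'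
    have hx'len : x'.length = k := by
      rw [hx']
      simp
      omega
    obtain ⟨i, ⟨hi, hxi⟩, _⟩ := huniq x' hx'len
    rw [List.length_rotate] at hi
    have hik : i + k ≤ wlin.length := by omega
    have : x' = (wlin.drop i).take k := by
      rw [window i hik, hxi]
    have hinf : x' <:+: wlin := by
      rw [this]
      exact DBAux.take_drop_infix _ _ _
    exact (List.IsPrefix.isInfix ⟨_, rfl⟩ : x <:+: x').trans hinf
  -- main characterizations
  have hS1 : {y : List (Fin 2) | SuperMax wlin y} = {y | y.length = k} := by
    ext y
    exact DBAux.superMax_iff hk hkv H1 H2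
  have hS2 : {y : List (WithBot (Fin 2)) | SuperMax (term wlin) y} =
      ((fun l : List (Fin 2) => l.map (fun a : Fin 2 => (a : WithBot (Fin 2)))) ''
        {y | y.length = k}) ∪
      {(wlin.drop (wlin.length - (k - 1))).map
          (fun a : Fin 2 => (a : WithBot (Fin 2))) ++ [⊥]} := by
    ext y
    rw [Set.mem_setOf_eq, DBAux.superMax_term_iff hk hkv H1 H2]
    constructor
    · rintro (⟨x, rfl, hx⟩ | rfl)
      · exact Or.inl ⟨x, hx, rfl⟩
      · exact Or.inr rfl
    · rintro (⟨x, hx, rfl⟩ | h)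
      · exact Or.inl ⟨x, rfl, hx⟩
      · exact Or.inr h
  have hset : {y | SuperMax (term wlin) y} =
      (fun l : List (Fin 2) => l.map (fun a : Fin 2 => (a : WithBot (Fin 2)))) ''
        {y | SuperMax wlin y} ∪
      {(wlin.drop (wlin.length - (k - 1))).map
          (fun a : Fin 2 => (a : WithBot (Fin 2))) ++ [⊥]} := by
    rw [hS2, hS1]
  refine ⟨hset, ?_⟩
  -- cardinality
  have hinj : Function.Injective
      (fun l : List (Fin 2) => l.map (fun a : Fin 2 => (a : WithBot (Fin 2)))) :=
    List.map_injective_iff.mpr DBAux.f_inj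
  have hfin : {y : List (Fin 2) | SuperMax wlin y}.Finite := by
    rw [hS1]
    exact List.finite_length_eq _ _
  have hnotmem : (wlin.drop (wlin.length - (k - 1))).map
      (fun a : Fin 2 => (a : WithBot (Fin 2))) ++ [⊥] ∉
      (fun l : List (Fin 2) => l.map (fun a : Fin 2 => (a : WithBot (Fin 2)))) ''
        {y | SuperMax wlin y} := by
    rintro ⟨x, _, hx⟩
    exact DBAux.map_ne_concat_bot hx
  rw [sre, sre, hset]
  rw [Set.union_singleton, Set.ncard_insert_of_notMem hnotmem (hfin.image _),
    Set.ncard_image_of_injective _ hinj]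
end

section
/- Let Σ be an ordered alphabet of size σ ≥ 2, let k ≥ 1, and let w_lin be the linearization of (a rotation of) a σ-ary de Bruijn sequence of order k, so |w_lin| = σ^k + k − 1. Then the number of super-maximal extensions of w_lin is sre(w_lin) = σ^k. -/
/-- An infix is a prefix of some drop. -/
lemma infix_iff_drop {α : Type*} (s w : List α) : s <:+: w ↔ ∃ p, s <+: w.drop p := by
  constructor
  · rintro ⟨l, r, rfl⟩
    exact ⟨l.length, by simp⟩
  · rintro ⟨p, hp⟩
    exact hp.isInfix.trans (List.drop_suffix p w).isInfix

/-- A rotation of a de Bruijn sequence is a de Bruijn sequence. -/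
lemma isDeBruijn_rotate {α : Type*} [Fintype α] {k : ℕ} {C : List α}
    (hC : IsDeBruijn k C) (hpos : 0 < C.length) (c : ℕ) : IsDeBruijn k (C.rotate c) := by
  obtain ⟨hlen, huniq⟩ := hC
  set N := C.length with hN
  have hrot : ∀ j, (C.rotate c).rotate j = C.rotate ((c + j) % N) := by
    intro j
    rw [List.rotate_rotate, ← List.rotate_mod]
  constructor
  · simpa using hlen
  · intro x hx
    obtain ⟨i, ⟨hi, hxi⟩, hiu⟩ := huniq x hx
    have key : ∀ j, (c + (N - c % N + j) % N) % N = j % N := by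
      intro j
      rw [Nat.add_mod_mod]
      have h1 : c % N ≤ c := Nat.mod_le c N
      have h2 : c % N < N := Nat.mod_lt c hpos
      have h3 : c - c % N = N * (c / N) := by
        have := Nat.div_add_mod c N; omega
      have h4 : c + (N - c % N + j) = N + j + N * (c / N) := by omega
      rw [h4, Nat.add_mul_mod_self_left, Nat.add_mod_left]
    refine ⟨(N - c % N + i) % N, ⟨?_, ?_⟩, ?_⟩
    · simpa using Nat.mod_lt _ hpos
    · rw [hrot, key, Nat.mod_eq_of_lt hi]
      exact hxi
    · rintro j ⟨hj, hxj⟩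
      rw [List.length_rotate, ← hN] at hj
      rw [hrot] at hxj
      have h5 : (c + j) % N = i := by
        refine hiu _ ⟨Nat.mod_lt _ hpos, hxj⟩
      have h6 : (c + (N - c % N + i) % N) % N = i := by
        rw [key, Nat.mod_eq_of_lt hi]
      have := (Nat.ModEq.add_left_cancel' c (h5.trans h6.symm : _ ≡ _ [MOD N]))
      have h7 : j % N = (N - c % N + i) % N % N := this
      rwa [Nat.mod_eq_of_lt hj, Nat.mod_mod_of_dvd _ dvd_rfl] at h7

theorem deBruijn_sre' {α : Type*} [Fintype α] [LinearOrder α]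
    (σ : ℕ) (hσ : 2 ≤ σ) (hcard : Fintype.card α = σ)
    (k : ℕ) (hk : 1 ≤ k)
    (C : List α) (hC : IsDeBruijn k C) (c : ℕ) :
    sre (linz k (C.rotate c)) = σ ^ k := by
  have hkn : k < σ ^ k := lt_of_lt_of_le (Nat.lt_two_pow_self (n := k)) (Nat.pow_le_pow_left hσ k)
  have hClen : C.length = σ ^ k := by rw [hC.1, hcard]
  have hpos : 0 < C.length := by rw [hClen]; positivity
  set U := C.rotate c with hUdef
  have hU : IsDeBruijn k U := isDeBruijn_rotate hC hpos c
  have hUlen : U.length = σ ^ k := by rw [hU.1, hcard]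
  set n := σ ^ k with hndef
  set w := linz k U with hwdef
  have hwsplit : w = U ++ U.take (k - 1) := rfl
  have hwlen : w.length = n + (k - 1) := by
    rw [hwsplit]; simp [hUlen]; omega
  -- nonempty alphabet
  have hone : 1 < Fintype.card α := by omega
  have hNE : Nonempty α := Fintype.card_pos_iff.mp (by omega)
  obtain ⟨a0⟩ := hNE
  -- Lemma A : drop/take of w agrees with rotation take
  have hA : ∀ p < n, (w.drop p).take k = (U.rotate p).take k := by
    intro p hp
    rw [hwsplit, List.rotate_eq_drop_append_take (by omega : p ≤ U.length),
      List.drop_append]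
    have h0 : p - U.length = 0 := by omega
    rw [h0, List.drop_zero, List.take_append, List.take_append,
      List.take_take, List.take_take]
    congr 2
    have : (U.drop p).length = n - p := by simp [hUlen]
    rw [this]
    have h1 : (k - (n - p)) ⊓ (k - 1) = (k - (n - p)) ⊓ p := by omega
    rw [h1]
  -- every length-k word occurs in w (as prefix of a drop), at a unique position
  have hEx : ∀ x : List α, x.length = k → ∃ p, x <+: w.drop p := by
    intro x hx
    obtain ⟨j, ⟨hj, hxj⟩, _⟩ := hU.2 x hx
    rw [hUlen] at hj
    refine ⟨j, ?_⟩
    rw [List.prefix_iff_eq_take, hx, hA j hj]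
    exact hxj
  have hposlt : ∀ (x : List α) p, x.length = k → x <+: w.drop p → p < n := by
    intro x p hx hp
    have := hp.length_le
    rw [hx, List.length_drop, hwlen] at this
    omega
  have hUniq : ∀ (x : List α) p p', x.length = k → x <+: w.drop p → x <+: w.drop p' → p = p' := by
    intro x p p' hx hp hp'
    have hpn := hposlt x p hx hp
    have hpn' := hposlt x p' hx hp'
    obtain ⟨j, hj, hjun⟩ := hU.2 x hx
    rw [List.prefix_iff_eq_take, hx, hA p hpn] at hp
    rw [List.prefix_iff_eq_take, hx, hA p' hpn'] at hp'
    have e1 : p = j := hjun p ⟨by rw [hUlen]; exact hpn, hp⟩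
    have e2 : p' = j := hjun p' ⟨by rw [hUlen]; exact hpn', hp'⟩
    omega
  -- every word of length ≤ k occurs in w
  have hShort : ∀ x : List α, x.length ≤ k → x <:+: w := by
    intro x hx
    obtain ⟨p, hp⟩ := hEx (x ++ List.replicate (k - x.length) a0) (by simp; omega)
    rw [infix_iff_drop]
    exact ⟨p, (List.prefix_append x _).trans hp⟩
  -- RightExt length bound
  have hRElen : ∀ y, RightExt w y → 1 ≤ y.length ∧ y.length ≤ k := by
    rintro y ⟨x, a, b, rfl, hab, ha, hb⟩
    refine ⟨by simp, ?_⟩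
    by_contra hlong
    have hxk : k ≤ x.length := by simp at hlong ⊢; omega
    obtain ⟨p, hp⟩ := (infix_iff_drop _ _).mp ha
    obtain ⟨p', hp'⟩ := (infix_iff_drop _ _).mp hb
    have hq : x.take k <+: x ++ [a] := (List.take_prefix k x).trans (List.prefix_append x _)
    have hq' : x.take k <+: x ++ [b] := (List.take_prefix k x).trans (List.prefix_append x _)
    have hqlen : (x.take k).length = k := by simp; omega
    have hpp : p = p' := hUniq _ p p' hqlen (hq.trans hp) (hq'.trans hp')
    subst hpp
    have h1 : x ++ [a] = (w.drop p).take (x.length + 1) := by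
      have := List.prefix_iff_eq_take.mp hp; simpa using this
    have h2 : x ++ [b] = (w.drop p).take (x.length + 1) := by
      have := List.prefix_iff_eq_take.mp hp'; simpa using this
    have : x ++ [a] = x ++ [b] := h1.trans h2.symm
    simp at this
    exact hab this
  -- RightExt characterization
  have hRE : ∀ y : List α, RightExt w y ↔ 1 ≤ y.length ∧ y.length ≤ k := by
    intro y
    refine ⟨hRElen y, ?_⟩
    rintro ⟨h1, h2⟩
    have hy : y ≠ [] := by intro h; subst h; simp at h1
    obtain ⟨b, hb⟩ := Fintype.exists_ne_of_one_lt_card hone (y.getLast hy)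
    refine ⟨y.dropLast, y.getLast hy, b, (List.dropLast_append_getLast hy).symm, hb.symm, ?_, ?_⟩
    · rw [List.dropLast_append_getLast hy]; exact hShort y h2
    · refine hShort _ ?_
      simp
      omega
  -- SuperMax characterization
  have hSM : ∀ y : List α, SuperMax w y ↔ y.length = k := by
    intro y
    constructor
    · rintro ⟨hre, hmax⟩
      obtain ⟨h1, h2⟩ := hRElen y hre
      by_contra hne
      have hlt : y.length < k := by omega
      have hz : RightExt w (a0 :: y) := by
        rw [hRE]; simp; omega
      have := hmax _ hz (List.suffix_cons a0 y)
      have : (a0 :: y).length = y.length := by rw [this]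
      simp at this
    · intro hy
      refine ⟨(hRE y).mpr ⟨by omega, le_of_eq hy⟩, ?_⟩
      intro z hz hsuf
      obtain ⟨hz1, hz2⟩ := hRElen z hz
      have hle := hsuf.length_le
      exact (hsuf.eq_of_length (by omega)).symm
  -- counting
  rw [sre]
  have hset : {y : List α | SuperMax w y} = {y : List α | y.length = k} := by
    ext y; exact hSM y
  rw [hset, ← Nat.card_coe_set_eq]
  have : Nat.card {y : List α | y.length = k} = Nat.card (List.Vector α k) := rfl
  rw [this, Nat.card_eq_fintype_card, card_vector, hcard]

/-- for the linearization `w_lin` of (a rotation of) a σ-ary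
de Bruijn sequence of order k ≥ 1 (σ ≥ 2), the number of super-maximal
extensions of `w_lin` is `sre(w_lin) = σ^k`. -/
theorem deBruijn_sre {α : Type*} [Fintype α] [LinearOrder α]
    (σ : ℕ) (hσ : 2 ≤ σ) (hcard : Fintype.card α = σ)
    (k : ℕ) (hk : 1 ≤ k)
    (C : List α) (hC : IsDeBruijn k C) (c : ℕ) :
    sre (linz k (C.rotate c)) = σ ^ k :=
  deBruijn_sre' σ hσ hcard k hk C hC c
end

section
/- Let Σ be an ordered alphabet of size σ ≥ 2, let k ≥ 2, and let w_lin be the linearization of (a rotation of) a σ-ary de Bruijn sequence of order k. Then the size χ of a smallest suffixient set of the terminated string w_lin $ equals σ^k + 1. -/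
section ListAux
variable {β : Type*}

lemma aux_infix_concat {z l : List β} {b : β} (h : z <:+: l ++ [b]) :
    z <:+: l ∨ (∃ z', z = z' ++ [b] ∧ z' <:+ l) := by
  obtain ⟨s, t, hst⟩ := h
  rcases List.eq_nil_or_concat t with rfl | ⟨t', b', rfl⟩
  · rcases List.eq_nil_or_concat z with rfl | ⟨z', c', rfl⟩
    · exact Or.inl List.nil_infix
    · right
      simp only [List.concat_eq_append, List.append_nil] at hst
      have h2 : (s ++ z') ++ [c'] = l ++ [b] := by simpa [List.append_assoc] using hst
      obtain ⟨h3, h4⟩ := List.append_inj' h2 rfl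
      obtain rfl : c' = b := by simpa using h4
      exact ⟨z', by simp, ⟨s, h3⟩⟩
  · left
    simp only [List.concat_eq_append] at hst
    have h2 : (s ++ z ++ t') ++ [b'] = l ++ [b] := by simpa [List.append_assoc] using hst
    obtain ⟨h3, _⟩ := List.append_inj' h2 rfl
    exact ⟨s, t', h3⟩

lemma aux_suffix_concat {l₁ l₂ : List β} (h : l₁ <:+ l₂) (b : β) :
    l₁ ++ [b] <:+ l₂ ++ [b] := by
  obtain ⟨s, rfl⟩ := h
  exact ⟨s, by simp [List.append_assoc]⟩

end ListAux

section UnmapAux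
variable {α : Type*}

lemma term_norm (w : List α) : term w = w.map WithBot.some ++ [⊥] := by
  unfold term
  congr 1
  induction w with
  | nil => rfl
  | cons a w ih => simpa using ih

lemma aux_unmap : ∀ {z : List (WithBot α)}, (∀ u ∈ z, u ≠ ⊥) →
    ∃ z₀ : List α, z = z₀.map WithBot.some := by
  intro z
  induction z with
  | nil => exact fun _ => ⟨[], rfl⟩
  | cons u z ih =>
    intro h
    obtain ⟨z₀, rfl⟩ := ih (fun u hu => h u (List.mem_cons_of_mem _ hu))
    obtain ⟨a, rfl⟩ := WithBot.ne_bot_iff_exists.mp (h u List.mem_cons_self)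
    exact ⟨a :: z₀, rfl⟩

lemma aux_map_inj : Function.Injective (List.map (WithBot.some : α → WithBot α)) :=
  List.map_injective_iff.mpr (fun a b h => by exact_mod_cast h)

lemma aux_bot_not_mem (w : List α) :
    (⊥ : WithBot α) ∉ w.map WithBot.some := by
  simp only [List.mem_map, not_exists]
  rintro x ⟨hx, h⟩
  exact WithBot.coe_ne_bot (a := x) h

/-- Occurrences in `term w` of ⊥-free nonempty blocks happen inside `w`. -/
lemma occ_term {w : List α} {p s t : List (WithBot α)}
    (hbp : ∀ u ∈ p, u ≠ (⊥ : WithBot α)) (hp : p ≠ [])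
    (h : s ++ (p ++ t) = term w) :
    ∃ s₀ p₀ t₀ : List α, p = p₀.map WithBot.some ∧
      s₀.length = s.length ∧ s₀ ++ (p₀ ++ t₀) = w := by
  rw [term_norm] at h
  rcases List.eq_nil_or_concat t with rfl | ⟨t', b, rfl⟩
  · exfalso
    rcases List.eq_nil_or_concat p with rfl | ⟨p', u, rfl⟩
    · exact hp rfl
    · simp only [List.concat_eq_append, List.append_nil] at h
      have h2 : (s ++ p') ++ [u] = w.map WithBot.some ++ [⊥] := by
        rw [← h]; simp [List.append_assoc]
      obtain ⟨-, h4⟩ := List.append_inj' h2 rfl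
      obtain rfl : u = ⊥ := by simpa using h4
      exact hbp ⊥ (by simp) rfl
  · simp only [List.concat_eq_append] at h
    have h2 : (s ++ p ++ t') ++ [b] = w.map WithBot.some ++ [⊥] := by
      rw [← h]; simp [List.append_assoc]
    obtain ⟨h3, -⟩ := List.append_inj' h2 rfl
    have hsub : ∀ u ∈ s ++ p ++ t', u ≠ (⊥ : WithBot α) := by
      intro u hu hbot
      subst hbot
      exact aux_bot_not_mem w (h3 ▸ hu)
    obtain ⟨s₀, hs₀⟩ := aux_unmap (z := s) (fun u hu => hsub u (by simp [hu]))
    obtain ⟨p₀, hp₀⟩ := aux_unmap (z := p) (fun u hu => hsub u (by simp [hu]))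
    obtain ⟨t₀, ht₀⟩ := aux_unmap (z := t') (fun u hu => hsub u (by simp [hu]))
    refine ⟨s₀, p₀, t₀, hp₀, by simp [hs₀], ?_⟩
    refine aux_map_inj ?_
    rw [← h3, hs₀, hp₀, ht₀]
    simp [List.append_assoc]

end UnmapAux

section Core
variable {α : Type*}

lemma occ_le_term {w : List α} {k : ℕ} (hocc : ∀ x : List α, x.length = k → x <:+: w)
    (d : α) :
    ∀ x : List α, x.length ≤ k → x.map WithBot.some <:+: term w := by
  intro x hx
  have h1 : x ++ List.replicate (k - x.length) d <:+: w :=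
    hocc _ (by simp; omega)
  have h2 : x <:+: w := (List.prefix_append x _).isInfix.trans h1
  rw [term_norm]
  exact (h2.map WithBot.some).trans (List.prefix_append _ _).isInfix

lemma rm_bound {w : List α} {k : ℕ} (hk : 2 ≤ k)
    (huniq : ∀ (x s₁ t₁ s₂ t₂ : List α), x.length = k →
      s₁ ++ (x ++ t₁) = w → s₂ ++ (x ++ t₂) = w → s₁.length = s₂.length)
    {x : List (WithBot α)} {a b : WithBot α} (hab : a ≠ b)
    (ha : x ++ [a] <:+: term w) (hb : x ++ [b] <:+: term w) :
    ∃ x₀ : List α, x = x₀.map WithBot.some ∧ x₀.length + 1 ≤ k := by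
  have hbot : ∀ u ∈ x, u ≠ (⊥ : WithBot α) := by
    intro u hu hbotu
    subst hbotu
    rw [term_norm] at ha
    rcases aux_infix_concat ha with h | ⟨z', hz, hzl⟩
    · exact aux_bot_not_mem w (h.subset (List.mem_append_left _ hu))
    · obtain ⟨rfl, -⟩ := List.append_inj' hz rfl
      exact aux_bot_not_mem w (hzl.subset hu)
  obtain ⟨x₀, rfl⟩ := aux_unmap hbot
  refine ⟨x₀, rfl, ?_⟩
  by_contra hlen
  have hkx : k ≤ x₀.length := by omega
  set p₀ := x₀.take k with hp₀def
  have hp₀k : p₀.length = k := by simp [hp₀def]; omega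
  have hsplit : x₀.map (WithBot.some : α → WithBot α) =
      p₀.map WithBot.some ++ (x₀.drop k).map WithBot.some := by
    rw [← List.map_append, List.take_append_drop]
  obtain ⟨s₁, t₁, h₁⟩ := ha
  obtain ⟨s₂, t₂, h₂⟩ := hb
  have hbp : ∀ u ∈ p₀.map (WithBot.some : α → WithBot α), u ≠ (⊥ : WithBot α) := by
    intro u hu hbotu
    subst hbotu
    exact aux_bot_not_mem p₀ hu
  have hpne : p₀.map (WithBot.some : α → WithBot α) ≠ [] := by
    intro hcon
    apply_fun List.length at hcon
    simp [hp₀k] at hcon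
    omega
  have e₁ : s₁ ++ (p₀.map WithBot.some ++ ((x₀.drop k).map WithBot.some ++ ([a] ++ t₁)))
      = term w := by
    rw [← h₁, hsplit]; simp [List.append_assoc]
  have e₂ : s₂ ++ (p₀.map WithBot.some ++ ((x₀.drop k).map WithBot.some ++ ([b] ++ t₂)))
      = term w := by
    rw [← h₂, hsplit]; simp [List.append_assoc]
  obtain ⟨s₁₀, p₁, t₁₀, hpeq₁, hlen₁, hocc₁⟩ := occ_term hbp hpne e₁
  obtain ⟨s₂₀, p₂, t₂₀, hpeq₂, hlen₂, hocc₂⟩ := occ_term hbp hpne e₂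
  obtain rfl : p₀ = p₁ := aux_map_inj hpeq₁
  obtain rfl : p₀ = p₂ := aux_map_inj hpeq₂
  have hne : s₁.length ≠ s₂.length := by
    intro he
    have h₁' : s₁ ++ ((x₀.map WithBot.some ++ [a]) ++ t₁) = term w := by
      rw [← h₁]; simp [List.append_assoc]
    have h₂' : s₂ ++ ((x₀.map WithBot.some ++ [b]) ++ t₂) = term w := by
      rw [← h₂]; simp [List.append_assoc]
    obtain ⟨-, h5⟩ := List.append_inj (h₁'.trans h₂'.symm) he
    simp only [List.append_assoc, List.append_cancel_left_eq, List.singleton_append,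
      List.cons.injEq] at h5
    exact hab h5.1
  have := huniq p₀ s₁₀ t₁₀ s₂₀ t₂₀ hp₀k hocc₁ hocc₂
  omega

end Core

section Main
variable {α : Type*} [Fintype α]

lemma superMax_eq {w : List α} {n k : ℕ} (hk : 2 ≤ k) (hcard2 : 2 ≤ Fintype.card α)
    (hw : w.length = n + (k - 1)) (hkn : k ≤ n)
    (hocc : ∀ x : List α, x.length = k → x <:+: w)
    (huniq : ∀ (x s₁ t₁ s₂ t₂ : List α), x.length = k →
      s₁ ++ (x ++ t₁) = w → s₂ ++ (x ++ t₂) = w → s₁.length = s₂.length) :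
    {y | SuperMax (term w) y} =
      insert ((w.drop n).map WithBot.some ++ [⊥])
        ((fun x : List α => x.map WithBot.some) '' {x | x.length = k}) := by
  have hne : Nonempty α := Fintype.card_pos_iff.mp (by omega)
  obtain ⟨d⟩ := hne
  have hoccv := occ_le_term hocc d
  have hzlen : ∀ z, RightExt (term w) z → z.length ≤ k := by
    rintro z ⟨xz, az, bz, rfl, hab, ha, hb⟩
    obtain ⟨xz₀, hxz, hl⟩ := rm_bound hk huniq hab ha hb
    rw [hxz]
    simp
    omega
  have hmax : ∀ y : List (WithBot α), y.length = k →
      ∀ z, RightExt (term w) z → y <:+ z → z = y := by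
    intro y hy z hz hyz
    have h1 := hzlen z hz
    have h2 := hyz.length_le
    exact (hyz.eq_of_length (by omega)).symm
  ext y
  simp only [Set.mem_setOf_eq, Set.mem_insert_iff, Set.mem_image, Set.mem_setOf_eq]
  constructor
  · rintro ⟨⟨x, a, b, rfl, hab, ha, hb⟩, hsup⟩
    obtain ⟨x₀, rfl, hxl⟩ := rm_bound hk huniq hab ha hb
    rcases eq_or_ne a ⊥ with rfl | hab'
    · -- a = ⊥ : y is the bot-terminated suffix
      left
      rw [term_norm] at ha
      have hxsuf : x₀.map WithBot.some <:+ w.map WithBot.some := by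
        rcases aux_infix_concat ha with h | ⟨z', hz, hzl⟩
        · exact absurd (h.subset (by simp)) (aux_bot_not_mem w)
        · obtain ⟨rfl, -⟩ := List.append_inj' hz rfl
          exact hzl
      have hx1 : x₀.length = k - 1 := by
        by_contra hshort
        have hxs : x₀.length < k - 1 := by omega
        obtain ⟨s, hs⟩ := hxsuf
        have hsne : s ≠ [] := by
          intro hcon
          subst hcon
          apply_fun List.length at hs
          simp [hw] at hs
          omega
        obtain ⟨s', u, rfl⟩ := (List.eq_nil_or_concat s).resolve_left hsne
        have humem : u ∈ w.map WithBot.some := by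
          rw [← hs]; simp
        obtain ⟨e, -, rfl⟩ := List.mem_map.mp humem
        have hsuf2 : (e :: x₀).map WithBot.some <:+ w.map WithBot.some := by
          refine ⟨s', ?_⟩
          rw [← hs]
          simp [List.concat_eq_append, List.append_assoc]
        have hzre : RightExt (term w) ((e :: x₀).map WithBot.some ++ [⊥]) := by
          refine ⟨(e :: x₀).map WithBot.some, ⊥, WithBot.some d, rfl, (by simp), ?_, ?_⟩
          · rw [term_norm]
            exact (aux_suffix_concat hsuf2 ⊥).isInfix
          · have h3 := hoccv ((e :: x₀) ++ [d]) (by simp; omega)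
            simpa using h3
        have h4 := hsup _ hzre (by
          refine aux_suffix_concat ?_ ⊥
          simp only [List.map_cons]
          exact List.suffix_cons _ _)
        apply_fun List.length at h4
        simp at h4
      obtain ⟨s, hs⟩ := hxsuf
      have hslen : s.length = n := by
        apply_fun List.length at hs
        simp [hw, hx1] at hs
        omega
      have hxeq : x₀.map (WithBot.some : α → WithBot α) = (w.map WithBot.some).drop n := by
        rw [← hs, ← hslen, List.drop_left]
      rw [hxeq, ← List.map_drop]
    · -- a = some a₀
      right
      obtain ⟨a₀, rfl⟩ := WithBot.ne_bot_iff_exists.mp hab'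
      have hx1 : x₀.length + 1 = k := by
        by_contra hshort
        have hxs : x₀.length + 1 < k := by omega
        obtain ⟨e, he⟩ := Fintype.exists_ne_of_one_lt_card (by omega) a₀
        have hzre : RightExt (term w) ((d :: (x₀ ++ [a₀])).map WithBot.some) := by
          refine ⟨(d :: x₀).map WithBot.some, WithBot.some a₀, WithBot.some e,
            (by simp), (by simpa using he.symm), ?_, ?_⟩
          · have h3 := hoccv ((d :: x₀) ++ [a₀]) (by simp; omega)
            simpa using h3
          · have h3 := hoccv ((d :: x₀) ++ [e]) (by simp; omega)
            simpa using h3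
        have h4 := hsup _ hzre (by
          have h5 : (x₀ ++ [a₀]).map WithBot.some <:+ (d :: (x₀ ++ [a₀])).map WithBot.some :=
            (List.suffix_cons _ _).map _
          simpa using h5)
        apply_fun List.length at h4
        simp at h4
      refine ⟨x₀ ++ [a₀], by simp; omega, by simp⟩
  · rintro (rfl | ⟨x₀, hx₀, rfl⟩)
    · constructor
      · refine ⟨(w.drop n).map WithBot.some, ⊥, WithBot.some d, rfl, (by simp), ?_, ?_⟩
        · rw [term_norm]
          refine List.IsSuffix.isInfix ?_
          exact aux_suffix_concat ((List.drop_suffix _ _).map _) ⊥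
        · have h3 := hoccv (w.drop n ++ [d]) (by simp [hw]; omega)
          simpa using h3
      · intro z hz hyz
        refine hmax _ ?_ z hz hyz
        simp [hw]
        omega
    · have hx₀' : x₀.length = k := hx₀
      constructor
      · have hne0 : x₀ ≠ [] := by
          intro hcon
          rw [hcon] at hx₀'
          simp at hx₀'
          omega
        obtain ⟨e, he⟩ := Fintype.exists_ne_of_one_lt_card (by omega) (x₀.getLast hne0)
        refine ⟨x₀.dropLast.map WithBot.some, WithBot.some (x₀.getLast hne0),
          WithBot.some e, ?_, (by simpa using he.symm), ?_, ?_⟩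
        · conv_lhs => rw [← List.dropLast_append_getLast hne0]
          simp
        · have h3 := hoccv (x₀.dropLast ++ [x₀.getLast hne0]) (by
            rw [List.dropLast_append_getLast hne0]; exact le_of_eq hx₀')
          simpa using h3
        · have h3 := hoccv (x₀.dropLast ++ [e]) (by simp [hx₀']; omega)
          simpa using h3
      · intro z hz hyz
        exact hmax _ (by simp [hx₀']) z hz hyz

end Main

section Count
variable {α : Type*} [Fintype α]

lemma length_set_eq_range (k : ℕ) :
    {x : List α | x.length = k} =
      Set.range (List.Vector.toList : List.Vector α k → List α) := by
  ext l
  simp only [Set.mem_setOf_eq, Set.mem_range]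
  constructor
  · intro hl; exact ⟨⟨l, hl⟩, rfl⟩
  · rintro ⟨v, rfl⟩; exact v.toList_length

lemma length_set_ncard (k : ℕ) :
    {x : List α | x.length = k}.ncard = Fintype.card α ^ k := by
  rw [length_set_eq_range, ← Nat.card_coe_set_eq,
    Nat.card_range_of_injective List.Vector.toList_injective,
    Nat.card_eq_fintype_card, card_vector]

end Count

lemma window {α : Type*} {U : List α} {n k j : ℕ} (hU : U.length = n) (hkn : k ≤ n)
    (hj : j < n) :
    (U.rotate j).take k = ((U ++ U.take (k - 1)).drop j).take k := by
  rw [List.rotate_eq_drop_append_take (by rw [hU]; omega : j ≤ U.length)]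
  rw [List.drop_append_of_le_length (by rw [hU]; omega)]
  rw [List.take_append, List.take_append]
  congr 1
  rw [List.take_take, List.take_take]
  congr 1
  simp only [List.length_drop, hU]
  omega

/-- for the linearization `w_lin` of (a rotation of) a σ-ary
de Bruijn sequence of order k ≥ 2 (σ ≥ 2), the size χ of a smallest
suffixient set of the terminated string `w_lin $` equals `σ^k + 1`. -/
theorem deBruijn_chi {α : Type*} [Fintype α] [LinearOrder α]
    (σ : ℕ) (hσ : 2 ≤ σ) (hcard : Fintype.card α = σ)
    (k : ℕ) (hk : 2 ≤ k)
    (C : List α) (hC : IsDeBruijn k C) (c : ℕ) :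
    chi (linz k (C.rotate c)) = σ ^ k + 1 := by
  obtain ⟨hClen, hCuniq⟩ := hC
  have hn : C.length = σ ^ k := by rw [hClen, hcard]
  have hkn : k ≤ σ ^ k :=
    le_of_lt (lt_of_lt_of_le (Nat.lt_two_pow_self (n := k)) (Nat.pow_le_pow_left hσ k))
  have hnpos : 0 < σ ^ k := by positivity
  set U := C.rotate c with hUdef
  have hUlen : U.length = σ ^ k := by rw [hUdef, List.length_rotate, hn]
  set w := linz k U with hwdef
  have hw : w.length = σ ^ k + (k - 1) := by
    simp only [hwdef, linz, List.length_append, List.length_take, hUlen]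
    omega
  have hrot : ∀ j, U.rotate j = C.rotate ((c + j) % σ ^ k) := by
    intro j
    rw [hUdef, List.rotate_rotate, ← hn, List.rotate_mod]
  have hwin : ∀ j < σ ^ k, (U.rotate j).take k = (w.drop j).take k := fun j hj =>
    window hUlen hkn hj
  have hocc : ∀ x : List α, x.length = k → x <:+: w := by
    intro x hx
    obtain ⟨i, ⟨hi, hxi⟩, -⟩ := hCuniq x hx
    rw [hn] at hi
    set j := (i + (σ ^ k - c % σ ^ k)) % σ ^ k with hj
    have hjlt : j < σ ^ k := Nat.mod_lt _ hnpos
    have hckey : (c + j) % σ ^ k = i := by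
      have hcn : c % σ ^ k < σ ^ k := Nat.mod_lt _ hnpos
      have hdm := Nat.div_add_mod c (σ ^ k)
      conv_lhs => rw [hj, Nat.add_mod]
      rw [Nat.mod_mod_of_dvd _ dvd_rfl, ← Nat.add_mod]
      have h2 : c + (i + (σ ^ k - c % σ ^ k)) = σ ^ k * (c / σ ^ k) + (σ ^ k + i) := by
        omega
      rw [h2, Nat.mul_add_mod, Nat.add_mod_left]
      exact Nat.mod_eq_of_lt hi
    have hxw : x = (w.drop j).take k := by
      rw [← hwin j hjlt, hrot j, hckey]
      exact hxi
    rw [hxw]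
    exact (List.take_prefix _ _).isInfix.trans (List.drop_suffix _ _).isInfix
  have huniq : ∀ (x s₁ t₁ s₂ t₂ : List α), x.length = k →
      s₁ ++ (x ++ t₁) = w → s₂ ++ (x ++ t₂) = w → s₁.length = s₂.length := by
    intro x s₁ t₁ s₂ t₂ hx h₁ h₂
    have key : ∀ (s t : List α), s ++ (x ++ t) = w →
        s.length < σ ^ k ∧ x = (C.rotate ((c + s.length) % σ ^ k)).take k := by
      intro s t h
      have hlen : s.length + (x.length + t.length) = w.length := by
        rw [← h]; simp
      rw [hw, hx] at hlen
      have hslt : s.length < σ ^ k := by omega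
      refine ⟨hslt, ?_⟩
      have hdrop : w.drop s.length = x ++ t := by rw [← h, List.drop_left]
      rw [← hrot, hwin _ hslt, hdrop, List.take_left' hx]
    obtain ⟨h1l, h1x⟩ := key s₁ t₁ h₁
    obtain ⟨h2l, h2x⟩ := key s₂ t₂ h₂
    obtain ⟨i, -, hiu⟩ := hCuniq x hx
    have hu1 : (c + s₁.length) % σ ^ k = i :=
      hiu _ ⟨by rw [hn]; exact Nat.mod_lt _ hnpos, h1x⟩
    have hu2 : (c + s₂.length) % σ ^ k = i :=
      hiu _ ⟨by rw [hn]; exact Nat.mod_lt _ hnpos, h2x⟩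
    have hmod : (c + s₁.length) ≡ (c + s₂.length) [MOD σ ^ k] := by
      unfold Nat.ModEq
      rw [hu1, hu2]
    have h3 : s₁.length % σ ^ k = s₂.length % σ ^ k :=
      Nat.ModEq.add_left_cancel' c hmod
    rw [Nat.mod_eq_of_lt h1l, Nat.mod_eq_of_lt h2l] at h3
    exact h3
  have hcard2 : 2 ≤ Fintype.card α := by rw [hcard]; exact hσ
  have hset := superMax_eq (n := σ ^ k) hk hcard2 hw hkn hocc huniq
  have htnotmem : (w.drop (σ ^ k)).map WithBot.some ++ [⊥] ∉
      (fun x : List α => x.map WithBot.some) '' {x | x.length = k} := by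
    rintro ⟨x, -, hx⟩
    have hmem : (⊥ : WithBot α) ∈ x.map WithBot.some := by
      show _ ∈ (fun x : List α => x.map WithBot.some) x
      rw [hx]; simp
    exact aux_bot_not_mem x hmem
  have hfin : ((fun x : List α => x.map WithBot.some) '' {x : List α | x.length = k}).Finite := by
    rw [length_set_eq_range]
    exact (Set.finite_range _).image _
  show chi w = σ ^ k + 1
  rw [chi, sre, hset, Set.ncard_insert_of_notMem htnotmem hfin,
    Set.ncard_image_of_injective _ aux_map_inj, length_set_ncard, hcard]
end

section
/- Let Σ be an ordered alphabet of size σ ≥ 2, let k ≥ 2, and let w_lin be the linearization of (a rotation of) a σ-ary de Bruijn sequence of order k. Then the number r of runs in BWT(w_lin $) satisfies r ≥ σ^{k-1}(σ − 1) + 1. -/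
open List


namespace DBaux

/-- filterMap getLast? = map when all nonempty -/
lemma filterMap_getLast {β : Type*} (b0 : β) :
    ∀ (L : List (List β)), (∀ r ∈ L, r ≠ []) →
      L.filterMap List.getLast? = L.map (fun r => r.getLast?.getD b0) := by
  intro L
  induction L with
  | nil => intro _; rfl
  | cons r L ih =>
    intro h
    have hr : r ≠ [] := h r (by simp)
    have : r.getLast? = some (r.getLast hr) := List.getLast?_eq_getLast hr
    simp [List.filterMap_cons, this, ih (fun x hx => h x (by simp [hx]))]

/-- count of adjacent equal pairs -/
def eqp {β : Type*} [DecidableEq β] : List β → ℕ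
  | [] => 0
  | [_] => 0
  | a :: b :: t => (if a = b then 1 else 0) + eqp (b :: t)

lemma length_le_runs_add_eqp {β : Type*} [DecidableEq β] :
    ∀ (l : List β), l.length ≤ runsCount l + eqp l := by
  intro l
  induction l with
  | nil => simp [runsCount, eqp]
  | cons a l ih =>
    cases l with
    | nil => simp [runsCount, eqp, List.destutter]
    | cons b t =>
      by_cases hab : a = b
      · subst hab
        have h1 : runsCount (a :: a :: t) = runsCount (a :: t) := by
          simp [runsCount, List.destutter_cons', List.destutter']
        have h2 : eqp (a :: a :: t) = 1 + eqp (a :: t) := by simp [eqp]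
        simp only [List.length_cons] at *
        omega
      · have h1 : runsCount (a :: b :: t) = 1 + runsCount (b :: t) := by
          simp [runsCount, List.destutter_cons', List.destutter', hab]; omega
        have h2 : eqp (a :: b :: t) = eqp (b :: t) := by simp [eqp, hab]
        simp only [List.length_cons] at *
        omega

end DBaux


namespace DBaux2
open DBaux (eqp)

lemma filter_range_succ (n : ℕ) (p : ℕ → Prop) [DecidablePred p] :
    ((List.range (n+1)).filter (fun j => p j)).length
      = (if p 0 then 1 else 0) + ((List.range n).filter (fun j => p (j+1))).length := by
  rw [List.range_succ_eq_map, List.filter_cons]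
  by_cases h0 : p 0
  · simp only [h0, decide_true, if_true, List.length_cons, List.filter_map,
      List.length_map]
    have : (fun j => decide (p j)) ∘ Nat.succ = fun j => decide (p (j+1)) := rfl
    rw [this]
    omega
  · simp only [h0, decide_false, if_false, List.filter_map, List.length_map]
    have : (fun j => decide (p j)) ∘ Nat.succ = fun j => decide (p (j+1)) := rfl
    rw [this]
    simp

lemma eqp_eq_filter {β : Type*} [DecidableEq β] :
    ∀ (l : List β), eqp l
      = ((List.range (l.length - 1)).filter (fun j => l[j]? = l[(j+1)]?)).length := by
  intro l
  induction l with
  | nil => simp [eqp]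
  | cons a l ih =>
    cases l with
    | nil => simp [eqp]
    | cons b t =>
      have hlen : (a :: b :: t).length - 1 = t.length + 1 := by simp
      rw [hlen, eqp]
      rw [filter_range_succ (t.length) (fun j => (a::b::t)[j]? = (a::b::t)[(j+1)]?)]
      have hsh : ∀ j : ℕ, ((a::b::t)[(j+1)]? = (a::b::t)[(j+2)]?)
          ↔ ((b::t)[j]? = (b::t)[(j+1)]?) := by
        intro j; simp [List.getElem?_cons_succ]
      have h2 : ((List.range t.length).filter
            (fun j => (a::b::t)[(j+1)]? = (a::b::t)[(j+1+1)]?)).length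
          = ((List.range ((b::t).length - 1)).filter
            (fun j => (b::t)[j]? = (b::t)[(j+1)]?)).length := by
        simp only [List.length_cons, Nat.add_sub_cancel]
        have := List.filter_congr (l := List.range t.length)
          (p := fun j => decide ((a::b::t)[(j+1)]? = (a::b::t)[(j+1+1)]?))
          (q := fun j => decide ((b::t)[j]? = (b::t)[(j+1)]?))
          (fun j _ => decide_eq_decide.mpr (hsh j))
        rw [this]
      rw [h2, ← ih]
      simp

lemma eqp_eq_card {β : Type*} [DecidableEq β] (l : List β) :
    eqp l = ((Finset.range (l.length - 1)).filter (fun j => l[j]? = l[(j+1)]?)).card := by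
  rw [eqp_eq_filter]; rfl

end DBaux2


namespace DBaux3

lemma take_le_take_of_lex {α : Type*} [LinearOrder α] {u v : List α}
    (h : List.Lex (· < ·) u v) : ∀ m : ℕ, u.take m ≤ v.take m := by
  induction h with
  | nil =>
    intro m
    cases m with
    | zero => simp
    | succ s =>
      simp only [List.take_nil, List.take_succ_cons]
      exact le_of_lt List.Lex.nil
  | @cons a l₁ l₂ h ih =>
    intro m
    cases m with
    | zero => simp
    | succ s =>
      simp only [List.take_succ_cons]
      exact List.cons_le_cons a (ih s)
  | @rel a₁ l₁ a₂ l₂ h =>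
    intro m
    cases m with
    | zero => simp
    | succ s =>
      simp only [List.take_succ_cons]
      exact le_of_lt (List.Lex.rel h)

lemma take_le_take {α : Type*} [LinearOrder α] {u v : List α}
    (h : u ≤ v) (m : ℕ) : u.take m ≤ v.take m := by
  rcases lt_or_eq_of_le h with h | h
  · exact take_le_take_of_lex h m
  · rw [h]

lemma lift_of_no_bot {α : Type*} :
    ∀ (p : List (WithBot α)), (⊥ : WithBot α) ∉ p →
      ∃ l : List α, p = l.map (fun a : α => (a : WithBot α)) := by
  intro p
  induction p with
  | nil => intro _; exact ⟨[], rfl⟩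
  | cons x p ih =>
    intro h
    obtain ⟨l, hl⟩ := ih (fun hx => h (List.mem_cons_of_mem _ hx))
    have hx : x ≠ ⊥ := fun hx => h (by simp [hx])
    obtain ⟨a, ha⟩ := WithBot.ne_bot_iff_exists.mp hx
    exact ⟨a :: l, by simp [← ha, hl]⟩

lemma rotate_take_cons {γ : Type*} (l : List γ) (k j : ℕ)
    (hj : j < l.length) (hk1 : 1 ≤ k) (hk : k ≤ l.length) :
    ∃ b, l[j]? = some b ∧
      (l.rotate j).take k = b :: (l.rotate (j+1)).take (k-1) := by
  have hne : l ≠ [] := by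
    intro h; rw [h] at hj; simp at hj
  have hrlen : (l.rotate j).length = l.length := by simp
  have hrne : l.rotate j ≠ [] := by
    intro h
    rw [← List.length_eq_zero_iff] at h
    omega
  obtain ⟨b, t, hbt⟩ := List.exists_cons_of_ne_nil hrne
  have hb : l[j]? = some b := by
    have h0 : (l.rotate j)[0]? = l[((0 + j) % l.length)]? :=
      List.getElem?_rotate (by omega)
    rw [hbt] at h0
    simp only [List.getElem?_cons_zero] at h0
    rw [Nat.zero_add, Nat.mod_eq_of_lt hj] at h0
    exact h0.symm
  refine ⟨b, hb, ?_⟩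
  have hrot1 : l.rotate (j+1) = t ++ [b] := by
    rw [← List.rotate_rotate, hbt, List.rotate_cons_succ, List.rotate_zero]
  have htlen : t.length = l.length - 1 := by
    rw [hbt] at hrlen; simp at hrlen; omega
  rw [hbt, hrot1]
  have h1 : (b :: t).take k = b :: t.take (k-1) := by
    obtain ⟨k', rfl⟩ : ∃ k', k = k' + 1 := ⟨k - 1, by omega⟩
    simp
  rw [h1]
  congr 1
  rw [List.take_append]
  have : k - 1 - t.length = 0 := by omega
  rw [this]
  simp

lemma getLast?_rotate {γ : Type*} (l : List γ) (j : ℕ) (hne : l ≠ []) :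
    (l.rotate j).getLast? = l[((l.length - 1 + j) % l.length)]? := by
  have hlen : (l.rotate j).length = l.length := by simp
  have hpos : 0 < l.length := List.length_pos_iff.mpr hne
  have hrne : l.rotate j ≠ [] := by
    intro h; rw [← List.length_eq_zero_iff] at h; omega
  rw [List.getLast?_eq_getLast hrne, List.getLast_eq_getElem]
  rw [← List.getElem?_eq_getElem, hlen]
  exact List.getElem?_rotate (by omega)

lemma sentinel_get {γ : Type*} (V : List γ) (s : γ) (hs : s ∉ V) (t : ℕ) :
    (V ++ [s])[t]? = some s ↔ t = V.length := by
  constructor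
  · intro h
    by_contra hne
    rcases lt_or_gt_of_ne hne with hlt | hgt
    · rw [List.getElem?_append_left hlt] at h
      exact hs (List.mem_of_getElem? h)
    · have : (V ++ [s]).length ≤ t := by simp; omega
      rw [List.getElem?_eq_none this] at h
      simp at h
  · intro h
    subst h
    exact List.getElem?_concat_length

end DBaux3

namespace DBaux3b
lemma coe_map_fix {α : Type*} (l : List α) :
    (List.map (fun a => a) (do let a ← l; pure ((a : WithBot α))))
      = l.map (fun a : α => (a : WithBot α)) := by
  simp
  induction l with
  | nil => rfl
  | cons a l ih => simp_all [List.flatMap]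
end DBaux3b


section MainProof

variable {α : Type*} [Fintype α] [LinearOrder α]

theorem deBruijn_runs_lower_bound'
    (σ : ℕ) (hσ : 2 ≤ σ) (hcard : Fintype.card α = σ)
    (k : ℕ) (hk : 2 ≤ k)
    (C : List α) (hC : IsDeBruijn k C) (c : ℕ) :
    σ ^ (k - 1) * (σ - 1) + 1 ≤ runsCount (bwtL (term (linz k (C.rotate c)))) := by
  set U := C.rotate c with hU
  set V : List (WithBot α) := (linz k U).map (fun a : α => (a : WithBot α)) with hV
  set w : List (WithBot α) := term (linz k U) with hw
  set N := σ ^ k + k with hNdef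
  have hL0 : C.length = σ ^ k := hcard ▸ hC.1
  have hUlen : U.length = σ ^ k := by rw [hU, List.length_rotate, hL0]
  have hkpow : k ≤ σ ^ k :=
    le_trans (le_of_lt (Nat.lt_two_pow_self)) (Nat.pow_le_pow_left hσ k)
  have hk1 : (1 : ℕ) ≤ k := by omega
  have hVdef : w = V ++ [⊥] := by
    rw [hw, hV]; simp only [term]; congr 1; exact DBaux3b.coe_map_fix (linz k U)
  have hVlen : V.length = σ ^ k + (k - 1) := by
    rw [hV, List.length_map, linz, List.length_append, List.length_take, hUlen]
    omega
  have hwlen : w.length = N := by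
    rw [hVdef, List.length_append, hVlen]
    simp [hNdef]; omega
  have hNpos : 0 < N := by omega
  have hbotV : (⊥ : WithBot α) ∉ V := by
    rw [hV]
    intro hmem
    obtain ⟨a, _, ha⟩ := List.mem_map.mp hmem
    exact WithBot.coe_ne_bot ha
  have hsent : ∀ t, w[t]? = some ⊥ ↔ t = N - 1 := by
    intro t
    rw [hVdef, DBaux3.sentinel_get V ⊥ hbotV t]
    constructor <;> (intro h; omega)
  have hget : ∀ i t, t < N → (w.rotate i)[t]? = w[((t + i) % N)]? := by
    intro i t ht
    have := List.getElem?_rotate (l := w) (n := i) (m := t) (by omega)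
    rwa [hwlen] at this
  have hbotrot : ∀ i t, i < N → t < N →
      ((w.rotate i)[t]? = some ⊥ ↔ t + i = N - 1) := by
    intro i t hi ht
    rw [hget i t ht, hsent]
    rcases lt_or_ge (t + i) N with h | h
    · rw [Nat.mod_eq_of_lt h]
    · have h2 : (t + i) % N = t + i - N := by
        rw [Nat.mod_eq_sub_mod h, Nat.mod_eq_of_lt (by omega)]
      omega
  have hbotmem : ∀ i m, i < N → m ≤ N →
      ((⊥ : WithBot α) ∈ (w.rotate i).take m ↔ ∃ t, t < m ∧ t + i = N - 1) := by
    intro i m hi hm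
    constructor
    · intro h
      rw [List.mem_iff_getElem?] at h
      obtain ⟨t, ht⟩ := h
      have hlt : t < ((w.rotate i).take m).length := by
        obtain ⟨h1, _⟩ := List.getElem?_eq_some_iff.mp ht
        exact h1
      rw [List.length_take, List.length_rotate, hwlen] at hlt
      have htm : t < m := by omega
      rw [List.getElem?_take_of_lt htm] at ht
      exact ⟨t, htm, (hbotrot i t hi (by omega)).mp ht⟩
    · rintro ⟨t, htm, hti⟩
      rw [List.mem_iff_getElem?]
      exact ⟨t, by rw [List.getElem?_take_of_lt htm]; exact (hbotrot i t hi (by omega)).mpr hti⟩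
  have hrotinj : ∀ i i', i < N → i' < N → w.rotate i = w.rotate i' → i = i' := by
    intro i i' hi hi' he
    have h1 : (w.rotate i)[(N - 1 - i)]? = some ⊥ :=
      (hbotrot i _ hi (by omega)).mpr (by omega)
    rw [he] at h1
    have h2 := (hbotrot i' _ hi' (by omega)).mp h1
    omega

  -- window of linearization = cyclic window of U
  have hlinz : ∀ i, i < σ ^ k → ((linz k U).drop i).take k = (U.rotate i).take k := by
    intro i hi
    rw [linz]
    rw [List.drop_append_of_le_length (by rw [hUlen]; omega)]
    rw [List.rotate_eq_drop_append_take (by rw [hUlen]; omega)]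
    rw [List.take_append, List.take_append]
    congr 1
    rw [List.take_take, List.take_take]
    congr 1
    have hdl : (U.drop i).length = σ ^ k - i := by simp [hUlen]
    rw [hdl]
    omega
  have hwinV : ∀ i, i < σ ^ k →
      (w.rotate i).take k
        = ((U.rotate i).take k).map (fun a : α => (a : WithBot α)) := by
    intro i hi
    rw [List.rotate_eq_drop_append_take (by rw [hwlen]; omega)]
    rw [List.take_append]
    have hdl : (w.drop i).length = N - i := by simp [hwlen]
    have h0 : k - (w.drop i).length = 0 := by rw [hdl]; omega
    rw [h0]
    simp only [List.take_zero, List.append_nil]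
    rw [hVdef]
    rw [List.drop_append_of_le_length (by rw [hVlen]; omega)]
    rw [List.take_append]
    have h1 : k - (V.drop i).length = 0 := by
      rw [List.length_drop, hVlen]; omega
    rw [h1]
    simp only [List.take_zero, List.append_nil]
    rw [hV, ← List.map_drop, ← List.map_take, hlinz i hi]
  have hUwin_inj : ∀ i i', i < σ ^ k → i' < σ ^ k →
      (U.rotate i).take k = (U.rotate i').take k → i = i' := by
    intro i i' hi hi' he
    have hxlen : ((U.rotate i).take k).length = k := by
      rw [List.length_take, List.length_rotate, hUlen]; omega
    obtain ⟨j, _, hjuniq⟩ := hC.2 ((U.rotate i).take k) hxlen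
    have hL0' : 0 < C.length := by rw [hL0]; positivity
    have hrw : ∀ m : ℕ, U.rotate m = C.rotate ((c + m) % C.length) := by
      intro m; rw [hU, List.rotate_rotate, List.rotate_mod]
    have h1 := hjuniq ((c + i) % C.length)
      ⟨Nat.mod_lt _ hL0', by rw [← hrw]⟩
    have h2 := hjuniq ((c + i') % C.length)
      ⟨Nat.mod_lt _ hL0', by rw [← hrw, ← he]⟩
    have hmm : (c + i) % C.length = (c + i') % C.length := by rw [h1, h2]
    have hcan : i ≡ i' [MOD C.length] :=
      Nat.ModEq.add_left_cancel (Nat.ModEq.refl c) hmm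
    have : i % C.length = i' % C.length := hcan
    rwa [Nat.mod_eq_of_lt (by omega), Nat.mod_eq_of_lt (by omega)] at this
  have hwin_inj : ∀ i i', i < N → i' < N →
      (⊥ : WithBot α) ∉ (w.rotate i).take k →
      (w.rotate i).take k = (w.rotate i').take k → i = i' := by
    intro i i' hi hi' hb he
    have hik : i < σ ^ k := by
      by_contra h
      exact hb ((hbotmem i k hi (by omega)).mpr ⟨N - 1 - i, by omega, by omega⟩)
    have hik' : i' < σ ^ k := by
      by_contra h
      rw [he] at hb
      exact hb ((hbotmem i' k hi' (by omega)).mpr ⟨N - 1 - i', by omega, by omega⟩)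
    have h1 := hwinV i hik
    have h2 := hwinV i' hik'
    rw [he, h2] at h1
    exact hUwin_inj i i' hik hik'
      (List.map_injective_iff.mpr WithBot.coe_injective h1.symm)

  have hwne : w ≠ [] := by
    intro h; rw [← List.length_eq_zero_iff, hwlen] at h; omega
  have hglast : ∀ i, (w.rotate i).getLast? = w[((N - 1 + i) % N)]? := by
    intro i
    have := DBaux3.getLast?_rotate w i hwne
    rwa [hwlen] at this
  have hlastinj : ∀ i i', i < N → i' < N → i ≠ i' →
      (w.rotate i).take (k - 1) = (w.rotate i').take (k - 1) →
      (⊥ : WithBot α) ∉ (w.rotate i).take (k - 1) →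
      (w.rotate i).getLast? ≠ (w.rotate i').getLast? := by
    intro i i' hi hi' hne hpre hb heq
    set j := (N - 1 + i) % N with hj
    set j' := (N - 1 + i') % N with hj'
    have hjN : j < N := Nat.mod_lt _ (by omega)
    have hj'N : j' < N := Nat.mod_lt _ (by omega)
    have hji : (j + 1) % N = i := by
      rw [hj, Nat.mod_add_mod]
      have he1 : N - 1 + i + 1 = N + i := by omega
      rw [he1, Nat.add_mod_left, Nat.mod_eq_of_lt hi]
    have hj'i' : (j' + 1) % N = i' := by
      rw [hj', Nat.mod_add_mod]
      have he1 : N - 1 + i' + 1 = N + i' := by omega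
      rw [he1, Nat.add_mod_left, Nat.mod_eq_of_lt hi']
    have hlast_eq : w[j]? = w[j']? := by
      rw [← hglast i, ← hglast i', heq]
    have hrotj : w.rotate (j + 1) = w.rotate i := by
      conv_lhs => rw [← List.rotate_mod, hwlen, hji]
    have hrotj' : w.rotate (j' + 1) = w.rotate i' := by
      conv_lhs => rw [← List.rotate_mod, hwlen, hj'i']
    obtain ⟨b, hbj, hwnd⟩ := DBaux3.rotate_take_cons w k j
      (by rw [hwlen]; omega) hk1 (by rw [hwlen]; omega)
    obtain ⟨b', hbj', hwnd'⟩ := DBaux3.rotate_take_cons w k j'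
      (by rw [hwlen]; omega) hk1 (by rw [hwlen]; omega)
    have hbb : b = b' := by
      rw [hbj, hbj'] at hlast_eq
      injection hlast_eq
    by_cases hbbot : b = ⊥
    · have h1 : j = N - 1 := (hsent j).mp (by rw [hbj, hbbot])
      have h2 : j' = N - 1 := (hsent j').mp (by rw [hbj', ← hbb, hbbot])
      apply hne
      rw [← hji, ← hj'i', h1, h2]
    · have hwnd2 : (w.rotate j).take k = (w.rotate j').take k := by
        rw [hwnd, hwnd', hbb, hrotj, hrotj', hpre]
      have hnob : (⊥ : WithBot α) ∉ (w.rotate j).take k := by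
        rw [hwnd, hrotj]
        intro hmem
        rcases List.mem_cons.mp hmem with h | h
        · exact hbbot h.symm
        · exact hb h
      have hjj' := hwin_inj j j' hjN hj'N hnob hwnd2
      apply hne
      rw [← hji, ← hj'i', hjj']

  -- the sorted list of rotations
  set R : List (List (WithBot α)) :=
    (List.range w.length).map (fun i => w.rotate i) with hR
  set Ls : List (List (WithBot α)) := List.insertionSort (· ≤ ·) R with hLs
  have hperm : Ls ~ R := List.perm_insertionSort _ _
  have hsort : Ls.Pairwise (· ≤ ·) := List.pairwise_insertionSort _ _
  have hLslen : Ls.length = N := by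
    rw [hperm.length_eq, hR, List.length_map, List.length_range, hwlen]
  have hRnd : R.Nodup := by
    rw [hR]
    apply List.Nodup.map_on _ List.nodup_range
    intro x hx y hy hxy
    rw [List.mem_range, hwlen] at hx hy
    exact hrotinj x y hx hy hxy
  have hLnd : Ls.Nodup := hperm.nodup_iff.mpr hRnd
  have hgetrot : ∀ jj, jj < N → ∃ i, i < N ∧ Ls[jj]? = some (w.rotate i) := by
    intro jj hjj
    have hjl : jj < Ls.length := by omega
    have hx : Ls[jj]? = some (Ls.get ⟨jj, hjl⟩) := List.getElem?_eq_getElem hjl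
    have hmem : Ls.get ⟨jj, hjl⟩ ∈ R := hperm.mem_iff.mp (List.get_mem _ _)
    rw [hR] at hmem
    obtain ⟨i, hi, hieq⟩ := List.mem_map.mp hmem
    rw [List.mem_range, hwlen] at hi
    exact ⟨i, hi, by rw [hx, hieq]⟩
  have hmono : ∀ a b (x y : List (WithBot α)), a ≤ b → b < N →
      Ls[a]? = some x → Ls[b]? = some y → x ≤ y := by
    intro a b x y hab hbN hxa hyb
    rcases eq_or_lt_of_le hab with rfl | hlt
    · rw [hxa] at hyb
      injection hyb with h
      exact le_of_eq h
    · have haL : a < Ls.length := by omega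
      have hbL : b < Ls.length := by omega
      have hrel := List.Pairwise.rel_get_of_lt hsort
        (a := ⟨a, haL⟩) (b := ⟨b, hbL⟩) hlt
      rw [List.getElem?_eq_getElem haL] at hxa
      rw [List.getElem?_eq_getElem hbL] at hyb
      injection hxa with h1
      injection hyb with h2
      rw [← h1, ← h2]
      exact hrel
  have hget?inj : ∀ a b, a < N → Ls[a]? = Ls[b]? → a = b := by
    intro a b ha hab
    exact (List.getElem?_inj (by omega) hLnd).mp hab
  -- the BWT as a map
  set glast : List (WithBot α) → WithBot α := fun r => r.getLast?.getD ⊥ with hgl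
  set B : List (WithBot α) := Ls.map glast with hB
  have hrotne : ∀ i : ℕ, w.rotate i ≠ [] := by
    intro i h
    rw [← List.length_eq_zero_iff, List.length_rotate, hwlen] at h
    omega
  have hgls : ∀ r : List (WithBot α), r ≠ [] → r.getLast? = some (glast r) := by
    intro r hr
    rw [hgl]
    simp only
    rw [List.getLast?_eq_getLast hr]
    rfl
  have hbwt : bwtL (term (linz k U)) = B := by
    rw [bwtL, hB, ← hw, hLs, hR]
    apply DBaux.filterMap_getLast
    intro r hr
    have hrLs : r ∈ Ls := hr
    have : r ∈ R := hperm.mem_iff.mp hrLs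
    rw [hR] at this
    obtain ⟨i, _, hieq⟩ := List.mem_map.mp this
    rw [← hieq]
    exact hrotne i
  have hBlen : B.length = N := by rw [hB, List.length_map, hLslen]
  have hBget : ∀ jj : ℕ, B[jj]? = (Ls[jj]?).map glast := by
    intro jj
    rw [hB]
    exact List.getElem?_map

  -- the equal-pairs set and the injection
  set E : Finset ℕ := (Finset.range (B.length - 1)).filter
    (fun j => B[j]? = B[(j+1)]?) with hE
  set φ : ℕ → List (WithBot α) :=
    fun j => ((Ls[(j+1)]?).getD []).take (k-1) with hphi
  have hEfact : ∀ j ∈ E, j + 1 < N ∧ B[j]? = B[(j+1)]? := by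
    intro j hj
    rw [hE, Finset.mem_filter, Finset.mem_range] at hj
    have := hBlen
    exact ⟨by omega, hj.2⟩
  have hphirot : ∀ j i, Ls[(j+1)]? = some (w.rotate i) →
      φ j = (w.rotate i).take (k-1) := by
    intro j i h
    simp only [hphi]
    rw [h]
    rfl
  have hcore : ∀ j j', j ∈ E → j' ∈ E → j < j' → φ j ≠ φ j' := by
    intro j j' hj hj' hjj heq
    obtain ⟨hjN, hjB⟩ := hEfact j hj
    obtain ⟨hj'N, hj'B⟩ := hEfact j' hj'
    obtain ⟨i1, hi1N, hgi1⟩ := hgetrot (j+1) hjN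
    obtain ⟨i2, hi2N, hgi2⟩ := hgetrot (j'+1) hj'N
    obtain ⟨i3, hi3N, hgi3⟩ := hgetrot j' (by omega)
    have hp1 := hphirot j i1 hgi1
    have hp2 := hphirot j' i2 hgi2
    have hpeq : (w.rotate i1).take (k-1) = (w.rotate i2).take (k-1) := by
      rw [← hp1, ← hp2, heq]
    by_cases hbp : (⊥ : WithBot α) ∈ (w.rotate i1).take (k-1)
    · obtain ⟨t, htk, hti⟩ := (hbotmem i1 (k-1) hi1N (by omega)).mp hbp
      have hg1 : ((w.rotate i1).take (k-1))[t]? = some ⊥ := by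
        rw [List.getElem?_take_of_lt htk]
        exact (hbotrot i1 t hi1N (by omega)).mpr hti
      have hg2 : ((w.rotate i2).take (k-1))[t]? = some ⊥ := by
        rw [← hpeq]; exact hg1
      rw [List.getElem?_take_of_lt htk] at hg2
      have hti2 := (hbotrot i2 t hi2N (by omega)).mp hg2
      have h12 : i1 = i2 := by omega
      rw [h12] at hgi1
      have := hget?inj (j+1) (j'+1) (by omega) (by rw [hgi1, hgi2])
      omega
    · have hx13 : (w.rotate i1) ≤ (w.rotate i3) :=
        hmono (j+1) j' _ _ (by omega) (by omega) hgi1 hgi3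
      have hx32 : (w.rotate i3) ≤ (w.rotate i2) :=
        hmono j' (j'+1) _ _ (by omega) (by omega) hgi3 hgi2
      have ht13 := DBaux3.take_le_take hx13 (k-1)
      have ht32 := DBaux3.take_le_take hx32 (k-1)
      have hp3 : (w.rotate i3).take (k-1) = (w.rotate i1).take (k-1) :=
        le_antisymm (by rw [hpeq]; exact ht32) ht13
      have hne32 : i3 ≠ i2 := by
        intro h
        rw [h] at hgi3
        have := hget?inj j' (j'+1) (by omega) (by rw [hgi3, hgi2])
        omega
      have hBj' := hj'B
      rw [hBget j', hBget (j'+1), hgi3, hgi2] at hBj'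
      simp only [Option.map_some] at hBj'
      injection hBj' with hgeq
      have hle : (w.rotate i3).getLast? = (w.rotate i2).getLast? := by
        rw [hgls _ (hrotne i3), hgls _ (hrotne i2), hgeq]
      exact hlastinj i3 i2 hi3N hi2N hne32 (by rw [hp3, hpeq])
        (by rw [hp3]; exact hbp) hle
  set T1 : Finset (List (WithBot α)) :=
    (Finset.range (k-1)).image (fun t => (w.rotate (N-1-t)).take (k-1)) with hT1
  set T2 : Finset (List (WithBot α)) :=
    (Finset.univ : Finset (Fin (k-1) → α)).image
      (fun f => (List.ofFn f).map (fun a : α => (a : WithBot α))) with hT2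
  have hmapsto : ∀ j ∈ E, φ j ∈ T1 ∪ T2 := by
    intro j hj
    obtain ⟨hjN, _⟩ := hEfact j hj
    obtain ⟨i, hiN, hgi⟩ := hgetrot (j+1) hjN
    rw [hphirot j i hgi]
    by_cases hbp : (⊥ : WithBot α) ∈ (w.rotate i).take (k-1)
    · obtain ⟨t, htk, hti⟩ := (hbotmem i (k-1) hiN (by omega)).mp hbp
      apply Finset.mem_union_left
      rw [hT1]
      apply Finset.mem_image.mpr
      refine ⟨N-1-i, Finset.mem_range.mpr (by omega), ?_⟩
      congr 2
      omega
    · apply Finset.mem_union_right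
      rw [hT2]
      obtain ⟨l, hl⟩ := DBaux3.lift_of_no_bot _ hbp
      have hplen : ((w.rotate i).take (k-1)).length = k-1 := by
        rw [List.length_take, List.length_rotate, hwlen]
        omega
      have hllen : l.length = k-1 := by
        rw [hl, List.length_map] at hplen
        exact hplen
      refine Finset.mem_image.mpr
        ⟨fun t => l.get ⟨t.1, by rw [hllen]; exact t.2⟩, Finset.mem_univ _, ?_⟩
      have hofn : List.ofFn
          (fun t : Fin (k-1) => l.get ⟨t.1, by rw [hllen]; exact t.2⟩) = l := by
        apply List.ext_get
        · rw [List.length_ofFn, hllen]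
        · intro n h1 h2
          rw [List.get_ofFn]
          exact congrArg l.get (Fin.ext rfl)
      rw [hofn, ← hl]
  have hEcard : E.card ≤ (k-1) + σ^(k-1) := by
    have hinj : Set.InjOn φ ↑E := by
      intro a ha b hb hab
      rcases lt_trichotomy a b with h | h | h
      · exact absurd hab (hcore a b (Finset.mem_coe.mp ha) (Finset.mem_coe.mp hb) h)
      · exact h
      · exact absurd hab.symm (hcore b a (Finset.mem_coe.mp hb) (Finset.mem_coe.mp ha) h)
    have hcle := Finset.card_le_card_of_injOn φ hmapsto hinj
    have h1 : T1.card ≤ k-1 := by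
      rw [hT1]
      exact le_trans Finset.card_image_le (le_of_eq (Finset.card_range _))
    have h2 : T2.card ≤ σ^(k-1) := by
      rw [hT2]
      refine le_trans Finset.card_image_le ?_
      rw [Finset.card_univ, Fintype.card_fun, Fintype.card_fin, hcard]
    have h3 := Finset.card_union_le T1 T2
    omega
  -- final counting
  have hrle := DBaux.length_le_runs_add_eqp B
  have heqc := DBaux2.eqp_eq_card B
  rw [← hE] at heqc
  rw [hbwt]
  obtain ⟨s, hs⟩ : ∃ s, σ = s + 1 := ⟨σ - 1, by omega⟩
  have hpow : σ^k = σ^(k-1) * σ := by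
    rw [← pow_succ]
    congr 1
    omega
  have haux1 : σ^(k-1) * (σ - 1) = σ^(k-1) * s := by
    rw [hs]
    simp
  have haux2 : σ^k = σ^(k-1) * s + σ^(k-1) := by
    rw [hpow, hs, Nat.mul_succ]
  have hBN := hBlen
  omega

end MainProof

/-- for the linearization `w_lin` of (a rotation of) a σ-ary
de Bruijn sequence of order k ≥ 2 (σ ≥ 2), the number r of runs in
`BWT(w_lin $)` satisfies `r ≥ σ^{k-1}(σ − 1) + 1`. -/
theorem deBruijn_runs_lower_bound {α : Type*} [Fintype α] [LinearOrder α]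
    (σ : ℕ) (hσ : 2 ≤ σ) (hcard : Fintype.card α = σ)
    (k : ℕ) (hk : 2 ≤ k)
    (C : List α) (hC : IsDeBruijn k C) (c : ℕ) :
    σ ^ (k - 1) * (σ - 1) + 1 ≤ runsCount (bwtL (term (linz k (C.rotate c)))) := by
  exact deBruijn_runs_lower_bound' σ hσ hcard k hk C hC c
end
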